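/- arXiv:0804.3049 — 9 statements merged into one kernel-verified Lean document; each statement's English description precedes it below -/
import Mathlib

section
/- Let p be a prime and d a positive integer. For a formal power series S(z) in d variables z = (z_1,...,z_d) with coefficients in Q_p and constant term 1, S(z) has all its coefficients in Z_p if and only if S(z_1^p,...,z_d^p)/S(z)^p ≡ 1 modulo p·(z_1,...,z_d)·Z_p[[z]] (i.e., S(z^p)/S(z)^p lies in 1 + p·∑_i z_i·Z_p[[z]]). -/
open MvPowerSeries

/-- The substitution `z i ↦ z i ^ p` on multivariate power series. -/
noncomputable def dilate {d : ℕ} (p : ℕ) [Fact p.Prime] (S : MvPowerSeries (Fin d) ℚ_[p]) :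
    MvPowerSeries (Fin d) ℚ_[p] :=
  fun n => if ∀ i, p ∣ n i then
    MvPowerSeries.coeff (Finsupp.mapRange (· / p) (Nat.zero_div p) n) S else 0

namespace DDAux

open Finset

variable {d : ℕ} {R S : Type*}

/-- total degree of an exponent -/
def deg (n : Fin d →₀ ℕ) : ℕ := ∑ i, n i

lemma deg_add (a b : Fin d →₀ ℕ) : deg (a + b) = deg a + deg b := by
  simp [deg, Finset.sum_add_distrib]

lemma deg_zero : deg (0 : Fin d →₀ ℕ) = 0 := by simp [deg]

lemma deg_eq_zero {n : Fin d →₀ ℕ} (h : deg n = 0) : n = 0 := by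
  ext i
  have := (Finset.sum_eq_zero_iff.mp h) i (Finset.mem_univ i)
  simpa using this

lemma deg_mono {a b : Fin d →₀ ℕ} (h : a ≤ b) : deg a ≤ deg b :=
  Finset.sum_le_sum fun i _ => Finsupp.le_def.mp h i

lemma deg_lt_of_lt {a b : Fin d →₀ ℕ} (hle : a ≤ b) (hne : a ≠ b) : deg a < deg b := by
  obtain ⟨c, rfl⟩ := le_iff_exists_add.mp hle
  have hc : c ≠ 0 := by rintro rfl; simp at hne
  have : deg c ≠ 0 := fun h => hc (deg_eq_zero h)
  rw [deg_add]
  omega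

section congr
variable [CommSemiring R]

lemma coeff_mul_congr {f f' g g' : MvPowerSeries (Fin d) R} {n : Fin d →₀ ℕ}
    (hf : ∀ m ≤ n, coeff m f = coeff m f')
    (hg : ∀ m ≤ n, coeff m g = coeff m g') :
    ∀ m ≤ n, coeff m (f * g) = coeff m (f' * g') := by
  intro m hm
  rw [coeff_mul, coeff_mul]
  refine Finset.sum_congr rfl fun x hx => ?_
  rw [HasAntidiagonal.mem_antidiagonal] at hx
  have hx1 : x.1 ≤ n := le_trans (hx ▸ le_self_add) hm
  have hx2 : x.2 ≤ n := le_trans (hx ▸ le_add_self) hm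
  rw [hf _ hx1, hg _ hx2]

lemma coeff_pow_congr {f f' : MvPowerSeries (Fin d) R} {n : Fin d →₀ ℕ}
    (hf : ∀ m ≤ n, coeff m f = coeff m f') (k : ℕ) :
    ∀ m ≤ n, coeff m (f ^ k) = coeff m (f' ^ k) := by
  induction k with
  | zero => simp
  | succ k IH =>
    intro m hm
    rw [pow_succ, pow_succ]
    exact coeff_mul_congr IH hf m hm

end congr

section pdil
variable [CommSemiring R] [CommSemiring S]

/-- generic dilation -/
noncomputable def pdil (p : ℕ) (f : MvPowerSeries (Fin d) R) : MvPowerSeries (Fin d) R :=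
  fun n => if ∀ i, p ∣ n i then
    coeff (Finsupp.mapRange (· / p) (Nat.zero_div p) n) f else 0

lemma coeff_pdil (p : ℕ) (f : MvPowerSeries (Fin d) R) (n : Fin d →₀ ℕ) :
    coeff n (pdil p f) = if ∀ i, p ∣ n i then
      coeff (Finsupp.mapRange (· / p) (Nat.zero_div p) n) f else 0 := rfl

lemma mapRange_div_smul {p : ℕ} (hp : p ≠ 0) (m : Fin d →₀ ℕ) :
    Finsupp.mapRange (· / p) (Nat.zero_div p) (p • m) = m := by
  ext i
  simp [Finsupp.mapRange_apply, Nat.mul_div_cancel_left _ (Nat.pos_of_ne_zero hp)]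

lemma smul_mapRange_div {p : ℕ} {n : Fin d →₀ ℕ} (h : ∀ i, p ∣ n i) :
    p • Finsupp.mapRange (· / p) (Nat.zero_div p) n = n := by
  ext i
  simp [Finsupp.mapRange_apply, Nat.mul_div_cancel' (h i)]

lemma pdil_monomial (p : ℕ) (hp : p ≠ 0) (m : Fin d →₀ ℕ) (a : R) :
    pdil p (monomial m a) = monomial (p • m) a := by
  ext n
  rw [coeff_pdil]
  by_cases h : ∀ i, p ∣ n i
  · rw [if_pos h, coeff_monomial, coeff_monomial]
    by_cases h2 : Finsupp.mapRange (· / p) (Nat.zero_div p) n = m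
    · rw [if_pos h2, if_pos]
      rw [← h2, smul_mapRange_div h]
    · rw [if_neg h2, if_neg]
      intro he
      exact h2 (by rw [he, mapRange_div_smul hp])
  · rw [if_neg h, coeff_monomial, if_neg]
    intro he
    exact h fun i => by rw [he]; simp [Finsupp.smul_apply]

lemma pdil_add (p : ℕ) (f g : MvPowerSeries (Fin d) R) :
    pdil p (f + g) = pdil p f + pdil p g := by
  ext n
  rw [map_add, coeff_pdil, coeff_pdil, coeff_pdil]
  split_ifs with h
  · rw [map_add]
  · rw [add_zero]

lemma pdil_zero (p : ℕ) : pdil p (0 : MvPowerSeries (Fin d) R) = 0 := by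
  ext n
  rw [coeff_pdil]
  split_ifs <;> simp

lemma pdil_sum (p : ℕ) {ι : Type*} (s : Finset ι) (F : ι → MvPowerSeries (Fin d) R) :
    pdil p (∑ x ∈ s, F x) = ∑ x ∈ s, pdil p (F x) := by
  classical
  induction s using Finset.induction_on with
  | empty => simp [pdil_zero]
  | insert _ _ hx IH => rw [Finset.sum_insert hx, Finset.sum_insert hx, pdil_add, IH]

lemma pdil_map (p : ℕ) (φ : R →+* S) (f : MvPowerSeries (Fin d) R) :
    MvPowerSeries.map φ (pdil p f) = pdil p (MvPowerSeries.map φ f) := by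
  ext n
  rw [coeff_map, coeff_pdil, coeff_pdil]
  split_ifs with h
  · rw [coeff_map]
  · rw [map_zero]

lemma expand_monomial' (p : ℕ) (hp : p ≠ 0) (m : Fin d →₀ ℕ) (a : R) :
    MvPolynomial.expand p (MvPolynomial.monomial m a) = MvPolynomial.monomial (p • m) a := by
  rw [MvPolynomial.expand_monomial]

lemma pdil_coe (p : ℕ) (hp : p ≠ 0) (P : MvPolynomial (Fin d) R) :
    pdil p (P : MvPowerSeries (Fin d) R) = ((MvPolynomial.expand p P : MvPolynomial (Fin d) R) :
      MvPowerSeries (Fin d) R) := by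
  simp only [← MvPolynomial.coeToMvPowerSeries.ringHom_apply]
  conv_lhs => rw [P.as_sum]
  conv_rhs => rw [P.as_sum]
  rw [map_sum, map_sum, map_sum, pdil_sum]
  refine Finset.sum_congr rfl fun v _ => ?_
  simp only [MvPolynomial.coeToMvPowerSeries.ringHom_apply]
  rw [MvPolynomial.coe_monomial, pdil_monomial p hp, expand_monomial' p hp,
    MvPolynomial.coe_monomial]

end pdil

lemma poly_pow_char (p : ℕ) [Fact p.Prime] (P : MvPolynomial (Fin d) (ZMod p)) :
    P ^ p = MvPolynomial.expand p P := by
  induction P using MvPolynomial.induction_on with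
  | C a => rw [MvPolynomial.expand_C, ← MvPolynomial.C_pow, ZMod.pow_card]
  | add f g hf hg => rw [add_pow_char, hf, hg, map_add]
  | mul_X f i hf => rw [mul_pow, hf, map_mul, MvPolynomial.expand_X]

lemma pow_char_eq_pdil (p : ℕ) [Fact p.Prime] (f : MvPowerSeries (Fin d) (ZMod p)) :
    f ^ p = pdil p f := by
  have hp : p ≠ 0 := (Fact.out : p.Prime).ne_zero
  ext n
  classical
  set P : MvPolynomial (Fin d) (ZMod p) :=
    ∑ m ∈ Finset.Iic n, MvPolynomial.monomial m (coeff m f) with hP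
  have hPc : ∀ m ≤ n, coeff m (P : MvPowerSeries (Fin d) (ZMod p)) =
      coeff m f := by
    intro m hm
    rw [MvPolynomial.coeff_coe, hP, MvPolynomial.coeff_sum]
    simp only [MvPolynomial.coeff_monomial]
    rw [Finset.sum_ite_eq', if_pos (Finset.mem_Iic.mpr hm)]
  have h1 : coeff n (f ^ p) =
      coeff n ((P : MvPowerSeries (Fin d) (ZMod p)) ^ p) :=
    (coeff_pow_congr hPc p n le_rfl).symm
  rw [h1, ← MvPolynomial.coe_pow, poly_pow_char, ← pdil_coe p hp, coeff_pdil, coeff_pdil]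
  split_ifs with h
  · exact hPc _ (Finsupp.le_def.mpr fun i => by
      simpa [Finsupp.mapRange_apply] using Nat.div_le_self (n i) p)
  · rfl

section padic
variable {p : ℕ} [Fact p.Prime]

lemma padic_norm_le_inv_iff (x : ℤ_[p]) :
    ‖x‖ ≤ (p : ℝ)⁻¹ ↔ PadicInt.toZMod x = 0 := by
  have h2 : ‖x‖ ≤ (p : ℝ)⁻¹ ↔ ‖x‖ < 1 := by
    have := PadicInt.norm_lt_pow_iff_norm_le_pow_sub_one x 0
    simpa using this.symm
  rw [h2, PadicInt.norm_lt_one_iff_dvd, ← Ideal.mem_span_singleton,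
    ← PadicInt.maximalIdeal_eq_span_p, ← PadicInt.ker_toZMod, RingHom.mem_ker]

lemma norm_coeff_mul_le (f g : MvPowerSeries (Fin d) ℚ_[p])
    (hf : ∀ m, ‖coeff m f‖ ≤ 1) (hg : ∀ m, ‖coeff m g‖ ≤ 1) (m : Fin d →₀ ℕ) :
    ‖coeff m (f * g)‖ ≤ 1 := by
  rw [coeff_mul]
  refine IsUltrametricDist.norm_sum_le_of_forall_le_of_nonneg zero_le_one fun x _ => ?_
  rw [norm_mul]
  exact mul_le_one₀ (hf _) (norm_nonneg _) (hg _)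

lemma norm_coeff_pow_le (f : MvPowerSeries (Fin d) ℚ_[p])
    (hf : ∀ m, ‖coeff m f‖ ≤ 1) (k : ℕ) (m : Fin d →₀ ℕ) :
    ‖coeff m (f ^ k)‖ ≤ 1 := by
  induction k generalizing m with
  | zero =>
    rw [pow_zero, coeff_one]
    split_ifs <;> simp
  | succ k IH =>
    rw [pow_succ]
    exact norm_coeff_mul_le _ _ IH hf m

/-- Frobenius congruence -/
lemma frob (T : MvPowerSeries (Fin d) ℚ_[p]) (hT : ∀ m, ‖coeff m T‖ ≤ 1)
    (n : Fin d →₀ ℕ) :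
    ‖coeff n (pdil p T) - coeff n (T ^ p)‖ ≤ (p : ℝ)⁻¹ := by
  set g : MvPowerSeries (Fin d) ℤ_[p] := fun m => ⟨T m, hT m⟩ with hg
  have hmap : MvPowerSeries.map (PadicInt.Coe.ringHom) g = T := by
    ext m
    rw [coeff_map]
    rfl
  have e1 : coeff n (T ^ p) = ((coeff n (g ^ p) : ℤ_[p]) : ℚ_[p]) := by
    rw [← hmap, ← map_pow, coeff_map]
    rfl
  have e2 : coeff n (pdil p T) = ((coeff n (pdil p g) : ℤ_[p]) : ℚ_[p]) := by
    rw [← hmap, ← pdil_map, coeff_map]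
    rfl
  rw [e1, e2]
  have : ((coeff n (pdil p g) : ℤ_[p]) : ℚ_[p]) - ((coeff n (g ^ p) : ℤ_[p]) : ℚ_[p])
      = ((coeff n (pdil p g) - coeff n (g ^ p) : ℤ_[p]) : ℚ_[p]) := by
    push_cast
    ring
  rw [this, ← PadicInt.norm_def, padic_norm_le_inv_iff]
  set h := MvPowerSeries.map (PadicInt.toZMod (p := p)) g with hh
  rw [map_sub]
  have t1 : PadicInt.toZMod (coeff n (pdil p g)) = coeff n (pdil p h) := by
    rw [hh, ← pdil_map, coeff_map]
  have t2 : PadicInt.toZMod (coeff n (g ^ p)) = coeff n (h ^ p) := by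
    rw [hh, ← map_pow, coeff_map]
  rw [t1, t2, pow_char_eq_pdil, sub_self]

end padic

/-- vanishing below degree N -/
def Vanish {R : Type*} [CommSemiring R] (N : ℕ) (f : MvPowerSeries (Fin d) R) : Prop :=
  ∀ m, deg m < N → coeff m f = 0

lemma vanish_mul {R : Type*} [CommSemiring R] {N M : ℕ} {f g : MvPowerSeries (Fin d) R}
    (hf : Vanish N f) (hg : Vanish M g) : Vanish (N + M) (f * g) := by
  intro m hm
  rw [coeff_mul]
  refine Finset.sum_eq_zero fun x hx => ?_
  rw [HasAntidiagonal.mem_antidiagonal] at hx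
  have hdeg : deg x.1 + deg x.2 = deg m := by rw [← deg_add, hx]
  by_cases h : deg x.1 < N
  · rw [hf _ h, zero_mul]
  · rw [hg _ (by omega), mul_zero]

lemma vanish_mul_right {R : Type*} [CommSemiring R] {M : ℕ} {f g : MvPowerSeries (Fin d) R}
    (hg : Vanish M g) : Vanish M (g * f) := by
  have := vanish_mul hg (show Vanish 0 f from fun m hm => absurd hm (by omega))
  simpa using this

lemma vanish_pow {R : Type*} [CommSemiring R] {N : ℕ} {f : MvPowerSeries (Fin d) R}
    (hf : Vanish N f) (j : ℕ) : Vanish (j * N) (f ^ j) := by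
  induction j with
  | zero => intro m hm; omega
  | succ j IH =>
    rw [pow_succ]
    have := vanish_mul IH hf
    rw [show j * N + N = (j + 1) * N by ring] at this
    exact this

section main
variable {p : ℕ} [Fact p.Prime]

lemma backward (S R : MvPowerSeries (Fin d) ℚ_[p])
    (hS0 : constantCoeff S = 1)
    (hE : pdil p S = S ^ p * R)
    (hR0 : constantCoeff R = 1)
    (hRn : ∀ n, n ≠ 0 → ‖coeff n R‖ ≤ (p : ℝ)⁻¹) :
    ∀ n, ‖coeff n S‖ ≤ 1 := by
  have hp2 : 2 ≤ p := (Fact.out : p.Prime).two_le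
  suffices H : ∀ N n, deg n = N → ‖coeff n S‖ ≤ 1 from fun n => H _ n rfl
  intro N
  induction N using Nat.strong_induction_on with
  | _ N IH =>
  intro n hn
  rcases Nat.eq_zero_or_pos N with hN0 | hNpos
  · subst hN0
    have : n = 0 := deg_eq_zero hn
    subst this
    rw [coeff_zero_eq_constantCoeff_apply, hS0, norm_one]
  have hIH : ∀ m, deg m < N → ‖coeff m S‖ ≤ 1 := fun m hm => IH _ hm m rfl
  set T : MvPowerSeries (Fin d) ℚ_[p] :=
    fun m => if deg m < N then coeff m S else 0 with hTdef
  have hTc : ∀ m, coeff m T = if deg m < N then coeff m S else 0 := fun m => rfl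
  have hT1 : ∀ m, ‖coeff m T‖ ≤ 1 := by
    intro m
    rw [hTc]
    split_ifs with h
    · exact hIH m h
    · simp
  have hTS : ∀ m, deg m < N → coeff m T = coeff m S := fun m h => by
    rw [hTc, if_pos h]
  set U : MvPowerSeries (Fin d) ℚ_[p] := S - T with hU
  have hTU : T + U = S := by rw [hU]; ring
  have hUv : Vanish N U := by
    intro m hm
    rw [hU, map_sub, hTS m hm, sub_self]
  have hUn : coeff n U = coeff n S := by
    rw [hU, map_sub, hTc, if_neg (by omega), sub_zero]
  have hT0pow : ∀ k : ℕ, coeff 0 (T ^ k) = 1 := by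
    intro k
    rw [coeff_zero_eq_constantCoeff_apply, map_pow,
      ← coeff_zero_eq_constantCoeff_apply, hTS 0 (by rw [deg_zero]; omega),
      coeff_zero_eq_constantCoeff_apply, hS0, one_pow]
  -- step (3)
  have hchoose : p.choose (p - 1) = p := by
    have hpq : p = (p - 1) + 1 := by omega
    rw [hpq, Nat.add_sub_cancel, Nat.choose_succ_self_right]
  have h3 : coeff n (S ^ p) = coeff n (T ^ p) + (p : ℚ_[p]) * coeff n S := by
    conv_lhs => rw [← hTU]
    rw [add_pow, map_sum]
    have hsub : ({p - 1, p} : Finset ℕ) ⊆ Finset.range (p + 1) := by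
      intro k hk
      simp only [Finset.mem_insert, Finset.mem_singleton] at hk
      rcases hk with rfl | rfl <;> simp only [Finset.mem_range] <;> omega
    rw [← Finset.sum_subset hsub (fun k hk hknot => ?_)]
    swap
    · simp only [Finset.mem_range] at hk
      simp only [Finset.mem_insert, Finset.mem_singleton, not_or] at hknot
      have h2k : 2 ≤ p - k := by omega
      have hv : Vanish ((p - k) * N)
          (U ^ (p - k) * (T ^ k * ((p.choose k : ℕ) : MvPowerSeries (Fin d) ℚ_[p]))) :=
        vanish_mul_right (vanish_pow hUv (p - k))
      rw [show T ^ k * U ^ (p - k) * ((p.choose k : ℕ) : MvPowerSeries (Fin d) ℚ_[p])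
          = U ^ (p - k) * (T ^ k * ((p.choose k : ℕ) : MvPowerSeries (Fin d) ℚ_[p])) by ring]
      refine hv n ?_
      calc deg n = N := hn
      _ < 2 * N := by omega
      _ ≤ (p - k) * N := Nat.mul_le_mul_right N h2k
    rw [Finset.sum_pair (by omega : p - 1 ≠ p)]
    have hp_term : coeff n (T ^ p * U ^ (p - p) *
        ((p.choose p : ℕ) : MvPowerSeries (Fin d) ℚ_[p])) = coeff n (T ^ p) := by
      rw [Nat.sub_self, pow_zero, Nat.choose_self, Nat.cast_one, mul_one, mul_one]
    have hq_term : coeff n (T ^ (p - 1) * U ^ (p - (p - 1)) *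
        ((p.choose (p - 1) : ℕ) : MvPowerSeries (Fin d) ℚ_[p]))
        = (p : ℚ_[p]) * coeff n S := by
      rw [show p - (p - 1) = 1 by omega, pow_one, hchoose]
      rw [show T ^ (p - 1) * U * ((p : ℕ) : MvPowerSeries (Fin d) ℚ_[p])
          = (p : ℕ) • (T ^ (p - 1) * U) by rw [nsmul_eq_mul]; ring]
      rw [map_nsmul, nsmul_eq_mul]
      congr 1
      rw [coeff_mul]
      rw [Finset.sum_eq_single_of_mem ((0 : Fin d →₀ ℕ), n)
        (by rw [HasAntidiagonal.mem_antidiagonal]; rw [zero_add])]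
      · rw [hT0pow, one_mul, hUn]
      · rintro ⟨a, b⟩ hab hne
        rw [HasAntidiagonal.mem_antidiagonal] at hab
        have hbn : b ≠ n := by
          rintro rfl
          have ha0 : a = 0 := add_right_cancel (hab.trans (zero_add b).symm)
          exact hne (by rw [ha0])
        have hbdeg : deg b < N := by
          have hble : b ≤ n := hab ▸ le_add_self
          have := deg_lt_of_lt hble hbn
          omega
        rw [hUv b hbdeg, mul_zero]
    rw [hq_term, hp_term]
    ring
  -- step (4)
  have hcR0 : coeff (0 : Fin d →₀ ℕ) R = 1 := by
    rw [coeff_zero_eq_constantCoeff_apply, hR0]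
  have hmem : ((n, (0 : Fin d →₀ ℕ))) ∈ antidiagonal n := by
    rw [HasAntidiagonal.mem_antidiagonal, add_zero]
  have h4 : coeff n (pdil p S) = coeff n (S ^ p) +
      ∑ x ∈ (antidiagonal n).erase (n, 0),
        coeff x.1 (S ^ p) * coeff x.2 R := by
    rw [hE, coeff_mul, ← Finset.add_sum_erase _ _ hmem, hcR0, mul_one]
  -- bound on the sum
  have hppos : (0 : ℝ) < (p : ℝ)⁻¹ := by
    have : (0 : ℝ) < (p : ℝ) := by exact_mod_cast (Fact.out : p.Prime).pos
    exact inv_pos.mpr this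
  have hEbound : ‖∑ x ∈ (antidiagonal n).erase (n, 0),
      coeff x.1 (S ^ p) * coeff x.2 R‖ ≤ (p : ℝ)⁻¹ := by
    refine IsUltrametricDist.norm_sum_le_of_forall_le_of_nonneg hppos.le ?_
    rintro ⟨a, b⟩ hx
    obtain ⟨hne, hab⟩ := Finset.mem_erase.mp hx
    rw [HasAntidiagonal.mem_antidiagonal] at hab
    have hb0 : b ≠ 0 := by
      rintro rfl
      exact hne (by rw [← hab, add_zero])
    have han : a ≠ n := by
      rintro rfl
      have : b = 0 := add_left_cancel (hab.trans (add_zero a).symm)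
      exact hb0 this
    have hadeg : deg a < N := by
      have := deg_lt_of_lt (hab ▸ le_self_add) han
      omega
    have hcongr : coeff a (S ^ p) = coeff a (T ^ p) :=
      coeff_pow_congr (fun m hm => (hTS m (lt_of_le_of_lt (deg_mono hm) hadeg)).symm) p a le_rfl
    rw [norm_mul, hcongr]
    calc ‖coeff a (T ^ p)‖ * ‖coeff b R‖ ≤ 1 * (p : ℝ)⁻¹ :=
      mul_le_mul (norm_coeff_pow_le T hT1 p a) (hRn b hb0) (norm_nonneg _) zero_le_one
    _ = (p : ℝ)⁻¹ := one_mul _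
  -- step (1)
  have h1' : coeff n (pdil p S) = coeff n (pdil p T) := by
    rw [coeff_pdil, coeff_pdil]
    split_ifs with h
    · refine (hTS _ ?_).symm
      have hn0 : n ≠ 0 := fun h0 => by rw [h0, deg_zero] at hn; omega
      obtain ⟨i0, hi0⟩ : ∃ i, n i ≠ 0 := by
        by_contra hc
        push_neg at hc
        exact hn0 (Finsupp.ext fun i => hc i)
      have hle : Finsupp.mapRange (· / p) (Nat.zero_div p) n ≤ n :=
        Finsupp.le_def.mpr fun i => by
          simpa [Finsupp.mapRange_apply] using Nat.div_le_self (n i) p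
      have hne : Finsupp.mapRange (· / p) (Nat.zero_div p) n ≠ n := by
        intro hEq
        have h1 : n i0 / p = n i0 := by
          have := congrArg (fun f => f i0) hEq
          simpa [Finsupp.mapRange_apply] using this
        have h2 : n i0 / p < n i0 := Nat.div_lt_self (Nat.pos_of_ne_zero hi0) (by omega)
        omega
      have := deg_lt_of_lt hle hne
      omega
    · rfl
  have h2f : ‖coeff n (pdil p T) - coeff n (T ^ p)‖ ≤ (p : ℝ)⁻¹ := frob T hT1 n
  have key : (p : ℚ_[p]) * coeff n S =
      (coeff n (pdil p T) - coeff n (T ^ p)) +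
      -(∑ x ∈ (antidiagonal n).erase (n, 0),
        coeff x.1 (S ^ p) * coeff x.2 R) := by
    have h5 := h4
    rw [h1', h3] at h5
    linear_combination -h5
  have hnorm : ‖(p : ℚ_[p]) * coeff n S‖ ≤ (p : ℝ)⁻¹ := by
    rw [key]
    refine le_trans (IsUltrametricDist.norm_add_le_max _ _) ?_
    rw [max_le_iff]
    exact ⟨h2f, by rwa [norm_neg]⟩
  rw [norm_mul, Padic.norm_p] at hnorm
  nlinarith [hnorm, hppos]

lemma forward (S : MvPowerSeries (Fin d) ℚ_[p])
    (hS0 : constantCoeff S = 1)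
    (hI : ∀ m, ‖coeff m S‖ ≤ 1) :
    ∃ R : MvPowerSeries (Fin d) ℚ_[p], pdil p S = S ^ p * R ∧
      constantCoeff R = 1 ∧
      ∀ n, n ≠ 0 → ‖coeff n R‖ ≤ (p : ℝ)⁻¹ := by
  have hcc : constantCoeff (S ^ p) ≠ 0 := by
    rw [map_pow, hS0, one_pow]
    exact one_ne_zero
  set R : MvPowerSeries (Fin d) ℚ_[p] := (S ^ p)⁻¹ * pdil p S with hRdef
  have hE : pdil p S = S ^ p * R := by
    rw [hRdef, ← mul_assoc, MvPowerSeries.mul_inv_cancel _ hcc, one_mul]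
  have hmr0 : Finsupp.mapRange (· / p) (Nat.zero_div p) (0 : Fin d →₀ ℕ) = 0 := by
    ext i
    simp [Finsupp.mapRange_apply]
  have hpdil0 : coeff (0 : Fin d →₀ ℕ) (pdil p S) = 1 := by
    rw [coeff_pdil, if_pos (fun i => by simp), hmr0,
      coeff_zero_eq_constantCoeff_apply, hS0]
  have hR0 : constantCoeff R = 1 := by
    have h := congrArg (constantCoeff) hE
    rw [map_mul, map_pow, hS0, one_pow, one_mul] at h
    rw [← h, ← coeff_zero_eq_constantCoeff_apply, hpdil0]
  refine ⟨R, hE, hR0, ?_⟩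
  have hcR0 : coeff (0 : Fin d →₀ ℕ) R = 1 := by
    rw [coeff_zero_eq_constantCoeff_apply, hR0]
  have hSp1 : ∀ m, ‖coeff m (S ^ p)‖ ≤ 1 := norm_coeff_pow_le S hI p
  have hcSp0 : coeff (0 : Fin d →₀ ℕ) (S ^ p) = 1 := by
    rw [coeff_zero_eq_constantCoeff_apply, map_pow, hS0, one_pow]
  have hppos : (0 : ℝ) < (p : ℝ)⁻¹ := by
    have : (0 : ℝ) < (p : ℝ) := by exact_mod_cast (Fact.out : p.Prime).pos
    exact inv_pos.mpr this
  suffices H : ∀ N n, deg n = N → n ≠ 0 → ‖coeff n R‖ ≤ (p : ℝ)⁻¹ from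
    fun n hn => H _ n rfl hn
  intro N
  induction N using Nat.strong_induction_on with
  | _ N IH =>
  intro n hn hn0
  have hmem1 : ((n, (0 : Fin d →₀ ℕ))) ∈ antidiagonal n := by
    rw [HasAntidiagonal.mem_antidiagonal, add_zero]
  have hmem2 : (((0 : Fin d →₀ ℕ), n)) ∈ (antidiagonal n).erase (n, 0) := by
    rw [Finset.mem_erase]
    refine ⟨?_, by rw [HasAntidiagonal.mem_antidiagonal, zero_add]⟩
    intro hEq
    apply hn0
    exact ((Prod.mk.injEq _ _ _ _).mp hEq).1.symm
  have heq : coeff n (pdil p S) = coeff n (S ^ p) +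
      (coeff n R + ∑ x ∈ ((antidiagonal n).erase (n, 0)).erase (0, n),
        coeff x.1 (S ^ p) * coeff x.2 R) := by
    rw [hE, coeff_mul, ← Finset.add_sum_erase _ _ hmem1, ← Finset.add_sum_erase _ _ hmem2,
      hcR0, mul_one, hcSp0, one_mul]
  have hEb : ‖∑ x ∈ ((antidiagonal n).erase (n, 0)).erase (0, n),
      coeff x.1 (S ^ p) * coeff x.2 R‖ ≤ (p : ℝ)⁻¹ := by
    refine IsUltrametricDist.norm_sum_le_of_forall_le_of_nonneg hppos.le ?_
    rintro ⟨a, b⟩ hx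
    obtain ⟨hne2, hx'⟩ := Finset.mem_erase.mp hx
    obtain ⟨hne1, hab⟩ := Finset.mem_erase.mp hx'
    rw [HasAntidiagonal.mem_antidiagonal] at hab
    have hb0 : b ≠ 0 := by
      rintro rfl
      have han : a = n := by simpa using hab
      exact hne1 (by rw [han])
    have hbn : b ≠ n := by
      rintro rfl
      have ha0 : a = 0 := add_right_cancel (hab.trans (zero_add b).symm)
      exact hne2 (by rw [ha0])
    have hbdeg : deg b < N := by
      have := deg_lt_of_lt (hab ▸ le_add_self) hbn
      omega
    have hR_b : ‖coeff b R‖ ≤ (p : ℝ)⁻¹ := IH _ hbdeg b rfl hb0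
    rw [norm_mul]
    calc ‖coeff a (S ^ p)‖ * ‖coeff b R‖ ≤ 1 * (p : ℝ)⁻¹ :=
      mul_le_mul (hSp1 a) hR_b (norm_nonneg _) zero_le_one
    _ = (p : ℝ)⁻¹ := one_mul _
  have hfrob : ‖coeff n (pdil p S) - coeff n (S ^ p)‖ ≤ (p : ℝ)⁻¹ := frob S hI n
  have key : coeff n R =
      (coeff n (pdil p S) - coeff n (S ^ p)) +
      -(∑ x ∈ ((antidiagonal n).erase (n, 0)).erase (0, n),
        coeff x.1 (S ^ p) * coeff x.2 R) := by
    linear_combination -heq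
  rw [key]
  refine le_trans (IsUltrametricDist.norm_add_le_max _ _) ?_
  rw [max_le_iff]
  exact ⟨hfrob, by rwa [norm_neg]⟩

end main
end DDAux

/-- Multivariate Dieudonné–Dwork lemma: for `S` with constant term `1` and coefficients in
`ℚ_p`, `S` has all coefficients in `ℤ_p` iff `S(z^p)/S(z)^p ∈ 1 + p·∑ᵢ zᵢ·ℤ_p[[z]]`. -/
theorem stmt0 (p : ℕ) [Fact p.Prime] (d : ℕ) (hd : 0 < d)
    (S : MvPowerSeries (Fin d) ℚ_[p])
    (hS0 : MvPowerSeries.constantCoeff S = 1) :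
    (∀ n, ‖MvPowerSeries.coeff n S‖ ≤ 1) ↔
      (∃ R : MvPowerSeries (Fin d) ℚ_[p],
        dilate p S = S ^ p * R ∧
        MvPowerSeries.constantCoeff R = 1 ∧
        ∀ n, n ≠ 0 → ‖MvPowerSeries.coeff n R‖ ≤ (p : ℝ)⁻¹) := by
  have hdil : dilate p S = DDAux.pdil p S := rfl
  constructor
  · intro hI
    obtain ⟨R, hE, hR0, hRn⟩ := DDAux.forward S hS0 hI
    exact ⟨R, by rw [hdil, hE], hR0, hRn⟩
  · rintro ⟨R, hE, hR0, hRn⟩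
    exact DDAux.backward S R hS0 (by rw [← hdil, hE]) hR0 hRn
end

section
/- Let p be a prime and J a positive integer. Then p·H_{J} ≡ H_{⌊J/p⌋} modulo p·Z_p, where H_m = ∑_{j=1}^m 1/j is the m-th harmonic number (H_0 = 0). -/
/-- The `m`-th harmonic number `H_m = ∑_{j=1}^m 1/j`, with `H_0 = 0`. -/
def harmonic' (m : ℕ) : ℚ := ∑ j ∈ Finset.range m, (1 : ℚ) / (j + 1)

lemma key (p : ℕ) (hp : 0 < p) (J : ℕ) :
    (p : ℚ) * harmonic' J - harmonic' (J / p)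
      = ∑ j ∈ (Finset.range J).filter (fun j => ¬ p ∣ (j + 1)), (p : ℚ) / (j + 1) := by
  have hsplit := Finset.sum_filter_add_sum_filter_not (Finset.range J)
    (fun j => p ∣ (j + 1)) (fun j => (p : ℚ) / (j + 1))
  have hmult : ∑ j ∈ (Finset.range J).filter (fun j => p ∣ (j + 1)), (p : ℚ) / (j + 1)
      = harmonic' (J / p) := by
    rw [harmonic']
    refine Finset.sum_nbij' (fun j => (j + 1) / p - 1) (fun k => p * (k + 1) - 1) ?_ ?_ ?_ ?_ ?_
    · intro j hj
      simp only [Finset.mem_filter, Finset.mem_range] at hj ⊢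
      obtain ⟨hjJ, c, hc⟩ := hj
      have hc1 : 1 ≤ c := Nat.one_le_iff_ne_zero.mpr (by rintro rfl; simp at hc)
      rw [hc, Nat.mul_div_cancel_left _ hp]
      have hcle : c ≤ J / p := Nat.le_div_iff_mul_le hp |>.mpr (by rw [Nat.mul_comm]; omega)
      omega
    · intro k hk
      simp only [Finset.mem_range] at hk
      simp only [Finset.mem_filter, Finset.mem_range]
      have hpk : p * (k + 1) ≤ J :=
        le_trans (Nat.mul_le_mul_left p hk) (by rw [Nat.mul_comm]; exact Nat.div_mul_le_self J p)
      have hpos : 1 ≤ p * (k + 1) := Nat.one_le_iff_ne_zero.mpr (by positivity)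
      exact ⟨by omega, ⟨k + 1, by omega⟩⟩
    · intro j hj
      simp only [Finset.mem_filter, Finset.mem_range] at hj
      obtain ⟨hjJ, c, hc⟩ := hj
      have hc1 : 1 ≤ c := Nat.one_le_iff_ne_zero.mpr (by rintro rfl; simp at hc)
      have h1 : (j + 1) / p = c := by rw [hc, Nat.mul_div_cancel_left _ hp]
      simp only [h1]
      have h2 : c - 1 + 1 = c := by omega
      rw [h2]
      omega
    · intro k hk
      have hpos : 1 ≤ p * (k + 1) := Nat.one_le_iff_ne_zero.mpr (by positivity)
      have h : p * (k + 1) - 1 + 1 = p * (k + 1) := by omega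
      simp only [h, Nat.mul_div_cancel_left _ hp]
      omega
    · intro j hj
      simp only [Finset.mem_filter, Finset.mem_range] at hj
      obtain ⟨hjJ, c, hc⟩ := hj
      have hc1 : 1 ≤ c := Nat.one_le_iff_ne_zero.mpr (by rintro rfl; simp at hc)
      have h1 : (j + 1) / p = c := by rw [hc, Nat.mul_div_cancel_left _ hp]
      have h2 : (j + 1) / p - 1 + 1 = c := by omega
      have h3 : (j + 1) / p - 1 = c - 1 := by omega
      rw [h3, Nat.cast_sub hc1, Nat.cast_one]
      have hp' : (p : ℚ) ≠ 0 := Nat.cast_ne_zero.mpr (by omega)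
      have hc' : (c : ℚ) ≠ 0 := Nat.cast_ne_zero.mpr (by omega)
      field_simp
      have hcq := congrArg (Nat.cast : ℕ → ℚ) hc
      push_cast at hcq
      rw [sub_add_cancel, hcq, mul_div_cancel_right₀ _ hc']
  have hall : (p : ℚ) * harmonic' J = ∑ j ∈ Finset.range J, (p : ℚ) / (j + 1) := by
    rw [harmonic', Finset.mul_sum]
    congr 1 with j
    ring
  rw [hall, ← hsplit, hmult]
  ring

/-- For a prime `p` and `J ≥ 1`, `p·H_J ≡ H_{⌊J/p⌋} (mod p ℤ_p)`. -/
theorem stmt3 (p : ℕ) [Fact p.Prime] (J : ℕ) (hJ : 1 ≤ J) :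
    ‖(p : ℚ_[p]) * ((harmonic' J : ℚ) : ℚ_[p]) - ((harmonic' (J / p) : ℚ) : ℚ_[p])‖
      ≤ (p : ℝ)⁻¹ := by
  have hp := (Fact.out : p.Prime)
  have hkey := key p hp.pos J
  have hcast : (p : ℚ_[p]) * ((harmonic' J : ℚ) : ℚ_[p]) - ((harmonic' (J / p) : ℚ) : ℚ_[p])
      = ∑ j ∈ (Finset.range J).filter (fun j => ¬ p ∣ (j + 1)),
          (p : ℚ_[p]) / ((j : ℚ_[p]) + 1) := by
    have := congrArg (fun q : ℚ => (q : ℚ_[p])) hkey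
    push_cast at this
    convert this using 2
  rw [hcast]
  apply IsUltrametricDist.norm_sum_le_of_forall_le_of_nonneg
  · positivity
  · intro j hj
    simp only [Finset.mem_filter, Finset.mem_range] at hj
    have hnd : ¬ p ∣ (j + 1) := hj.2
    have h1 : ‖((j : ℚ_[p]) + 1)‖ = 1 := by
      have : ((j : ℚ_[p]) + 1) = ((j + 1 : ℤ) : ℚ_[p]) := by push_cast; ring
      rw [this]
      have hle := Padic.norm_int_le_one (p := p) (j + 1 : ℤ)
      have hlt : ¬ ‖((j + 1 : ℤ) : ℚ_[p])‖ < 1 := by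
        rw [Padic.norm_intCast_lt_one_iff]
        exact_mod_cast hnd
      linarith [lt_or_eq_of_le hle]
    rw [norm_div, h1, div_one, Padic.norm_p]
end

section
/- Let p be a prime, d ≥ 1, and N = (N_1,...,N_d), L = (L_1,...,L_d), a = (a_1,...,a_d), k = (k_1,...,k_d) integer vectors with 0 ≤ L_i ≤ N_i, 0 ≤ a_i < p, and k_i ≥ 0 for all i. Define B(N, m) = (∑_i N_i m_i)! / ∏_i (m_i!)^{N_i}. Then B(N, a + p·k) · ( H_{⌊(L·a)/p⌋ + L·k} − H_{L·k} ) lies in p·Z_p, where L·a = ∑_i L_i a_i, L·k = ∑_i L_i k_i, and H_m denotes the m-th harmonic number with H_0 = 0. -/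
/-- `B(N, m) = (∑ᵢ Nᵢ mᵢ)! / ∏ᵢ (mᵢ!)^{Nᵢ}`. -/
def Bfun {d : ℕ} (N m : Fin d → ℕ) : ℚ :=
  ((∑ i, N i * m i).factorial : ℚ) / ∏ i, ((m i).factorial : ℚ) ^ (N i)


lemma sum_mul_div_le' {d : ℕ} (c x : Fin d → ℕ) {n : ℕ} (hn : 0 < n) :
    ∑ i, c i * (x i / n) ≤ (∑ i, c i * x i) / n := by
  rw [Nat.le_div_iff_mul_le hn, Finset.sum_mul]
  refine Finset.sum_le_sum fun i _ => ?_
  calc c i * (x i / n) * n = c i * (x i / n * n) := by ring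
  _ ≤ c i * x i := Nat.mul_le_mul_left _ (Nat.div_mul_le_self _ _)

lemma add_div_le_div' {u v n : ℕ} (hn : 0 < n) : u / n + v / n ≤ (u + v) / n := by
  rw [Nat.le_div_iff_mul_le hn, add_mul]
  exact Nat.add_le_add (Nat.div_mul_le_self _ _) (Nat.div_mul_le_self _ _)

lemma key_val (p : ℕ) [hp : Fact p.Prime] {d : ℕ} (N L a k : Fin d → ℕ)
    (hL : ∀ i, L i ≤ N i) (ha : ∀ i, a i < p)
    {j : ℕ} (hj1 : ∑ i, L i * k i < j)
    (hj2 : j ≤ (∑ i, L i * a i) / p + ∑ i, L i * k i) :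
    (∑ i, N i * padicValNat p ((a i + p * k i).factorial))
        + padicValNat p j + 1
      ≤ padicValNat p ((∑ i, N i * (a i + p * k i)).factorial) := by
  have hp0 : 0 < p := hp.out.pos
  have hp1 : 1 < p := hp.out.one_lt
  set m : Fin d → ℕ := fun i => a i + p * k i with hm
  set T : ℕ := ∑ i, N i * m i with hT
  set U : ℕ := ∑ i, L i * m i with hU
  set V : ℕ := ∑ i, (N i - L i) * m i with hV
  set S : ℕ := ∑ i, L i * k i with hS
  set A : ℕ := ∑ i, L i * a i with hA
  set e : ℕ := padicValNat p j with he
  have hj0 : 0 < j := lt_of_le_of_lt (Nat.zero_le _) hj1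
  have hpe : p ^ e ∣ j := pow_padicValNat_dvd
  -- U = A + p * S
  have hUAS : U = A + p * S := by
    rw [hU, hA, hS, Finset.mul_sum, ← Finset.sum_add_distrib]
    refine Finset.sum_congr rfl fun i _ => ?_
    simp [hm]; ring
  have hUp : U / p = A / p + S := by
    rw [hUAS, Nat.add_mul_div_left _ _ hp0]
  have hjU : j ≤ U / p := by rw [hUp]; exact hj2
  -- V + U = T
  have hVUT : V + U = T := by
    rw [hV, hU, hT, ← Finset.sum_add_distrib]
    refine Finset.sum_congr rfl fun i _ => ?_
    rw [← add_mul, Nat.sub_add_cancel (hL i)]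
  -- m i / p = k i
  have hmp : ∀ i, m i / p = k i := fun i => by
    rw [hm, Nat.add_mul_div_left _ _ hp0, Nat.div_eq_of_lt (ha i), zero_add]
  -- termwise key inequality
  have hterm : ∀ r, r ≤ e → (∑ i, N i * (m i / p ^ (r + 1))) + 1 ≤ T / p ^ (r + 1) := by
    intro r hr
    have hpr : 0 < p ^ r := Nat.pow_pos hp0
    have hpr1 : 0 < p ^ (r + 1) := Nat.pow_pos hp0
    have hmk : ∀ i, m i / p ^ (r + 1) = k i / p ^ r := fun i => by
      rw [pow_succ', ← Nat.div_div_eq_div_mul, hmp i]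
    have hsplit : (∑ i, N i * (m i / p ^ (r + 1)))
        = (∑ i, (N i - L i) * (m i / p ^ (r + 1))) + ∑ i, L i * (m i / p ^ (r + 1)) := by
      rw [← Finset.sum_add_distrib]
      refine Finset.sum_congr rfl fun i _ => ?_
      rw [← add_mul, Nat.sub_add_cancel (hL i)]
    have h1 : (∑ i, L i * (m i / p ^ (r + 1))) < j / p ^ r := by
      have : (∑ i, L i * (m i / p ^ (r + 1))) = ∑ i, L i * (k i / p ^ r) := by
        exact Finset.sum_congr rfl fun i _ => by rw [hmk i]
      rw [this]
      calc ∑ i, L i * (k i / p ^ r) ≤ S / p ^ r := sum_mul_div_le' _ _ hpr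
        _ < j / p ^ r := Nat.div_lt_div_of_lt_of_dvd
            (dvd_trans (pow_dvd_pow p hr) hpe) hj1
    have h2 : j / p ^ r ≤ U / p ^ (r + 1) := by
      calc j / p ^ r ≤ (U / p) / p ^ r := Nat.div_le_div_right hjU
        _ = U / p ^ (r + 1) := by rw [Nat.div_div_eq_div_mul, ← pow_succ']
    have h3 : (∑ i, (N i - L i) * (m i / p ^ (r + 1))) ≤ V / p ^ (r + 1) :=
      sum_mul_div_le' _ _ hpr1
    have h4 : V / p ^ (r + 1) + U / p ^ (r + 1) ≤ T / p ^ (r + 1) := by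
      calc V / p ^ (r + 1) + U / p ^ (r + 1) ≤ (V + U) / p ^ (r + 1) := add_div_le_div' hpr1
        _ = T / p ^ (r + 1) := by rw [hVUT]
    omega
  -- Legendre assembly
  set b : ℕ := Nat.log p T + 1 with hb
  have hTb : Nat.log p T < b := Nat.lt_succ_self _
  have hUT : U ≤ T := by omega
  have hjpU : j * p ≤ U := (Nat.le_div_iff_mul_le hp0).mp hjU
  have hT0 : T ≠ 0 := by
    have : 0 < j * p := Nat.mul_pos hj0 hp0
    omega
  have hpe1T : p ^ (e + 1) ≤ T := by
    calc p ^ (e + 1) = p ^ e * p := by rw [pow_succ]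
      _ ≤ j * p := Nat.mul_le_mul_right _ (Nat.le_of_dvd hj0 hpe)
      _ ≤ U := hjpU
      _ ≤ T := hUT
  have hsub : Finset.Icc 1 (e + 1) ⊆ Finset.Ico 1 b := by
    intro ℓ hℓ
    rw [Finset.mem_Icc] at hℓ
    rw [Finset.mem_Ico]
    refine ⟨hℓ.1, ?_⟩
    have : e + 1 ≤ Nat.log p T :=
      (Nat.le_log_iff_pow_le hp1 hT0).mpr hpe1T
    omega
  have hvT : padicValNat p T.factorial = ∑ ℓ ∈ Finset.Ico 1 b, T / p ^ ℓ :=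
    padicValNat_factorial hTb
  have hvm : ∀ i, N i * padicValNat p ((m i).factorial)
      = ∑ ℓ ∈ Finset.Ico 1 b, N i * (m i / p ^ ℓ) := by
    intro i
    rcases Nat.eq_zero_or_pos (N i) with h0 | h0
    · simp [h0]
    · have hmi : m i ≤ T := by
        calc m i = 1 * m i := (one_mul _).symm
          _ ≤ N i * m i := Nat.mul_le_mul_right _ h0
          _ ≤ T := Finset.single_le_sum (f := fun i => N i * m i) (fun i _ => Nat.zero_le _) (Finset.mem_univ i)
      have : Nat.log p (m i) < b := lt_of_le_of_lt (Nat.log_mono_right hmi) hTb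
      rw [padicValNat_factorial this, Finset.mul_sum]
  have hsum : (∑ i, N i * padicValNat p ((m i).factorial))
      = ∑ ℓ ∈ Finset.Ico 1 b, ∑ i, N i * (m i / p ^ ℓ) := by
    rw [Finset.sum_congr rfl fun i _ => hvm i, Finset.sum_comm]
  rw [hvT, hsum]
  have hhg : ∀ ℓ : ℕ, (∑ i, N i * (m i / p ^ ℓ)) ≤ T / p ^ ℓ :=
    fun ℓ => sum_mul_div_le' _ _ (Nat.pow_pos hp0)
  have hgsplit : ∑ ℓ ∈ Finset.Ico 1 b, T / p ^ ℓ
      = (∑ ℓ ∈ Finset.Ico 1 b, ∑ i, N i * (m i / p ^ ℓ))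
        + ∑ ℓ ∈ Finset.Ico 1 b, (T / p ^ ℓ - ∑ i, N i * (m i / p ^ ℓ)) := by
    rw [← Finset.sum_add_distrib]
    exact Finset.sum_congr rfl fun ℓ _ => (Nat.add_sub_cancel' (hhg ℓ)).symm
  have hkey : e + 1 ≤ ∑ ℓ ∈ Finset.Ico 1 b, (T / p ^ ℓ - ∑ i, N i * (m i / p ^ ℓ)) := by
    calc e + 1 = ∑ _ℓ ∈ Finset.Icc 1 (e + 1), 1 := by simp
      _ ≤ ∑ ℓ ∈ Finset.Icc 1 (e + 1), (T / p ^ ℓ - ∑ i, N i * (m i / p ^ ℓ)) := by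
          refine Finset.sum_le_sum fun ℓ hℓ => ?_
          rw [Finset.mem_Icc] at hℓ
          obtain ⟨r, rfl⟩ : ∃ r, ℓ = r + 1 := ⟨ℓ - 1, by omega⟩
          have := hterm r (by omega)
          omega
      _ ≤ ∑ ℓ ∈ Finset.Ico 1 b, (T / p ^ ℓ - ∑ i, N i * (m i / p ^ ℓ)) :=
          Finset.sum_le_sum_of_subset hsub
  omega

lemma term_norm (p : ℕ) [hp : Fact p.Prime] {d : ℕ} (N L a k : Fin d → ℕ)
    (hL : ∀ i, L i ≤ N i) (ha : ∀ i, a i < p)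
    {j : ℕ} (hj1 : ∑ i, L i * k i ≤ j)
    (hj2 : j < (∑ i, L i * a i) / p + ∑ i, L i * k i) :
    ‖((Bfun N (fun i => a i + p * k i) * (1 / ((j : ℚ) + 1)) : ℚ) : ℚ_[p])‖
      ≤ (p : ℝ)⁻¹ := by
  have hp1 : (1 : ℚ) ≤ (p : ℚ) := by exact_mod_cast hp.out.one_lt.le
  set m : Fin d → ℕ := fun i => a i + p * k i with hm
  have hmi : ∀ i, m i = a i + p * k i := fun _ => rfl
  set T : ℕ := ∑ i, N i * m i with hT
  set D : ℕ := ∏ i, ((m i).factorial) ^ (N i) with hD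
  have hD0 : D ≠ 0 := by
    refine Finset.prod_ne_zero_iff.mpr fun i _ => ?_
    exact pow_ne_zero _ (Nat.factorial_ne_zero _)
  have hBeq : Bfun N m = (T.factorial : ℚ) / (D : ℚ) := by
    rw [Bfun, hD]
    push_cast
    rfl
  set q : ℚ := (T.factorial : ℚ) / ((D * (j + 1) : ℕ) : ℚ) with hq
  have hqeq : Bfun N m * (1 / ((j : ℚ) + 1)) = q := by
    rw [hBeq, hq]
    push_cast
    field_simp
  have hT0 : (T.factorial : ℚ) ≠ 0 := by exact_mod_cast Nat.factorial_ne_zero T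
  have hDj0 : ((D * (j + 1) : ℕ) : ℚ) ≠ 0 := by
    exact_mod_cast Nat.mul_ne_zero hD0 (Nat.succ_ne_zero j)
  have hq0 : q ≠ 0 := div_ne_zero hT0 hDj0
  -- valuation of D
  have hvD : padicValNat p D = ∑ i, N i * padicValNat p ((m i).factorial) := by
    rw [← Nat.factorization_def D hp.out, hD,
      Nat.factorization_prod (fun i _ => pow_ne_zero _ (Nat.factorial_ne_zero _))]
    rw [Finset.sum_apply']
    refine Finset.sum_congr rfl fun i _ => ?_
    rw [Nat.factorization_pow, Finsupp.smul_apply, smul_eq_mul,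
      Nat.factorization_def _ hp.out]
  -- valuation of q
  have hvq : 1 ≤ padicValRat p q := by
    rw [hq, padicValRat.div hT0 hDj0, padicValRat.of_nat, padicValRat.of_nat,
      padicValNat.mul hD0 (by omega : j + 1 ≠ 0), hvD]
    have := key_val p N L a k hL ha (j := j + 1) (by omega) (by omega)
    simp only [← hmi] at this
    rw [← hT] at this
    have h2 : (padicValNat p (j + 1) : ℤ) + (∑ i, N i * padicValNat p ((m i).factorial) : ℕ) + 1
        ≤ (padicValNat p T.factorial : ℤ) := by exact_mod_cast by omega
    omega
  rw [hqeq, Padic.eq_padicNorm, padicNorm.eq_zpow_of_nonzero hq0]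
  have hle : ((p : ℚ) ^ (-padicValRat p q) : ℚ) ≤ (p : ℚ) ^ (-1 : ℤ) :=
    zpow_le_zpow_right₀ hp1 (by omega)
  calc ((((p : ℚ) ^ (-padicValRat p q) : ℚ)) : ℝ) ≤ (((p : ℚ) ^ (-1 : ℤ) : ℚ) : ℝ) := by
        exact_mod_cast hle
    _ = (p : ℝ)⁻¹ := by push_cast; simp

/-- For `0 ≤ L ≤ N`, `0 ≤ aᵢ < p`, `k ≥ 0`:
`B(N, a + p k)·(H_{⌊L·a/p⌋ + L·k} − H_{L·k}) ∈ p ℤ_p`. -/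
theorem stmt4 (p : ℕ) [Fact p.Prime] (d : ℕ) (hd : 0 < d)
    (N L a k : Fin d → ℕ) (hL : ∀ i, L i ≤ N i) (ha : ∀ i, a i < p) :
    ‖((Bfun N (fun i => a i + p * k i) *
        (harmonic' ((∑ i, L i * a i) / p + ∑ i, L i * k i) -
          harmonic' (∑ i, L i * k i)) : ℚ) : ℚ_[p])‖ ≤ (p : ℝ)⁻¹ := by
  set S : ℕ := ∑ i, L i * k i with hS
  set M : ℕ := (∑ i, L i * a i) / p with hM
  have hdiff : harmonic' (M + S) - harmonic' S
      = ∑ j ∈ Finset.Ico S (M + S), (1 : ℚ) / (j + 1) := by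
    rw [harmonic', harmonic', Finset.sum_Ico_eq_sub _ (Nat.le_add_left S M)]
  rw [hdiff, Finset.mul_sum]
  push_cast
  refine IsUltrametricDist.norm_sum_le_of_forall_le_of_nonneg (by positivity) fun j hj => ?_
  rw [Finset.mem_Ico] at hj
  have := term_norm p N L a k hL ha (j := j) hj.1 (by omega)
  rw [Rat.cast_mul] at this
  convert this using 2
  · rfl
  push_cast
  ring
end

section
/- Let p be a prime, d ≥ 1, and N, L, a, k ∈ Z^d with 0 ≤ L ≤ N componentwise, 0 ≤ a_i < p, k_i ≥ 0. For every integer ε with 1 ≤ ε ≤ ⌊(L·a)/p⌋, the p-adic valuation of B(N, a + p·k) is at least 1 + v_p(L·k + ε), where B(N, m) = (∑_i N_i m_i)!/∏_i (m_i!)^{N_i} and L·k = ∑_i L_i k_i. -/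
open Finset

lemma padicValRat_prod' (p : ℕ) [Fact p.Prime] {ι : Type*} (s : Finset ι) (f : ι → ℚ)
    (hf : ∀ i ∈ s, f i ≠ 0) :
    padicValRat p (∏ i ∈ s, f i) = ∑ i ∈ s, padicValRat p (f i) := by
  classical
  induction s using Finset.induction with
  | empty => simp
  | @insert x s h ih =>
    rw [Finset.prod_insert h, Finset.sum_insert h,
      padicValRat.mul (hf x (mem_insert_self x s))
        (Finset.prod_ne_zero_iff.mpr fun i hi => hf i (mem_insert_of_mem hi)),
      ih fun i hi => hf i (mem_insert_of_mem hi)]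

/-- Nonstrict termwise bound in Legendre's formula. -/
lemma term_nonneg {d : ℕ} (N m : Fin d → ℕ) (q : ℕ) (hq : 0 < q) :
    ∑ i, N i * (m i / q) ≤ (∑ i, N i * m i) / q := by
  rw [Nat.le_div_iff_mul_le hq, Finset.sum_mul]
  refine Finset.sum_le_sum fun i _ => ?_
  calc N i * (m i / q) * (q) = N i * (m i / q * q) := by ring
  _ ≤ N i * m i := Nat.mul_le_mul_left _ (Nat.div_mul_le_self _ _)

/-- Strict termwise bound for `1 ≤ j ≤ v_p(L·k + ε) + 1`. -/
lemma term_strict (p : ℕ) (hp : p.Prime) {d : ℕ} (N L a k : Fin d → ℕ)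
    (hL : ∀ i, L i ≤ N i) (ha : ∀ i, a i < p)
    (ε : ℕ) (hε1 : 1 ≤ ε) (hε2 : ε ≤ (∑ i, L i * a i) / p)
    (j : ℕ) (hj1 : 1 ≤ j) (hj2 : j ≤ padicValNat p ((∑ i, L i * k i) + ε) + 1) :
    1 + ∑ i, N i * ((a i + p * k i) / p ^ j) ≤ (∑ i, N i * (a i + p * k i)) / p ^ j := by
  have hp0 : 0 < p := hp.pos
  set q := p ^ (j - 1) with hqdef
  have hpj : p ^ j = p * q := by
    rw [hqdef, ← pow_succ']
    congr 1; omega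
  have hq0 : 0 < q := pow_pos hp0 _
  have hmdiv : ∀ i, (a i + p * k i) / p ^ j = k i / q := fun i => by
    rw [hpj, ← Nat.div_div_eq_div_mul, Nat.add_mul_div_left _ _ hp0,
      Nat.div_eq_of_lt (ha i), Nat.zero_add]
  have hdvd0 : (p : ℕ) ^ (padicValNat p ((∑ i, L i * k i) + ε)) ∣ (∑ i, L i * k i) + ε :=
    pow_padicValNat_dvd
  have hdvd1 : q ∣ (∑ i, L i * k i) + ε := by
    refine dvd_trans ?_ hdvd0
    exact pow_dvd_pow _ (by omega)
  have hsplit : (∑ i, L i * k i) + ε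
      = ((∑ i, L i * (k i % q)) + ε) + q * ∑ i, L i * (k i / q) := by
    rw [Finset.mul_sum]
    have : ∀ i, L i * k i = L i * (k i % q) + q * (L i * (k i / q)) := fun i => by
      conv_lhs => rw [← Nat.div_add_mod (k i) q]
      ring
    rw [Finset.sum_congr rfl fun i _ => this i, Finset.sum_add_distrib]
    omega
  have hdvd2 : q ∣ (∑ i, L i * (k i % q)) + ε := by
    have h3 : q ∣ q * ∑ i, L i * (k i / q) := Dvd.intro _ rfl
    have heq : (∑ i, L i * (k i % q)) + ε
        = ((∑ i, L i * k i) + ε) - q * ∑ i, L i * (k i / q) := by omega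
    rw [heq]
    exact Nat.dvd_sub hdvd1 h3
  have hqle : q ≤ (∑ i, L i * (k i % q)) + ε := Nat.le_of_dvd (by omega) hdvd2
  have hLa : ε * p ≤ ∑ i, L i * a i := (Nat.le_div_iff_mul_le hp0).mp hε2
  rw [Nat.le_div_iff_mul_le (by positivity), Finset.sum_congr rfl fun i _ => by
    rw [hmdiv i]]
  have hexp : ∀ i, N i * (a i + p * k i)
      = N i * a i + p * (N i * (k i % q)) + p * q * (N i * (k i / q)) := fun i => by
    conv_lhs => rw [← Nat.div_add_mod (k i) q]
    ring
  rw [Finset.sum_congr rfl fun i _ => hexp i, Finset.sum_add_distrib,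
    Finset.sum_add_distrib]
  have h1 : ∑ i, L i * a i ≤ ∑ i, N i * a i :=
    Finset.sum_le_sum fun i _ => Nat.mul_le_mul_right _ (hL i)
  have h2 : ∑ i, L i * (k i % q) ≤ ∑ i, N i * (k i % q) :=
    Finset.sum_le_sum fun i _ => Nat.mul_le_mul_right _ (hL i)
  have h3 : ∑ i, p * (N i * (k i % q)) = p * ∑ i, N i * (k i % q) := by
    rw [Finset.mul_sum]
  have h4 : ∑ i, p * q * (N i * (k i / q)) = p * q * ∑ i, N i * (k i / q) := by
    rw [Finset.mul_sum]
  rw [h3, h4]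
  have key : p * q ≤ ∑ i, N i * a i + p * ∑ i, N i * (k i % q) := by
    calc p * q ≤ p * ((∑ i, L i * (k i % q)) + ε) := Nat.mul_le_mul_left _ hqle
    _ = p * ε + p * ∑ i, L i * (k i % q) := by ring
    _ ≤ ∑ i, L i * a i + p * ∑ i, L i * (k i % q) :=
        Nat.add_le_add_right (le_of_eq_of_le (mul_comm p ε) hLa) _
    _ ≤ _ := add_le_add h1 (Nat.mul_le_mul_left p h2)
  calc (1 + ∑ i, N i * (k i / q)) * p ^ j
      = (p * q) + p * q * ∑ i, N i * (k i / q) := by rw [hpj]; ring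
    _ ≤ (∑ i, N i * a i + p * ∑ i, N i * (k i % q)) + p * q * ∑ i, N i * (k i / q) :=
        Nat.add_le_add_right key _
    _ = ∑ i, N i * a i + p * ∑ i, N i * (k i % q) + p * q * ∑ i, N i * (k i / q) := by ring

/-- Legendre's formula for `B(N, m)`. -/
lemma Bfun_val (p : ℕ) [Fact p.Prime] {d : ℕ} (N m : Fin d → ℕ) (b : ℕ)
    (hbS : Nat.log p (∑ i, N i * m i) < b) (hbm : ∀ i, Nat.log p (m i) < b) :
    padicValRat p (Bfun N m)
      = ∑ j ∈ Finset.Ico 1 b,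
          (((∑ i, N i * m i) / p ^ j : ℕ) - ∑ i, (N i : ℤ) * ((m i / p ^ j : ℕ))) := by
  have hnum : ((∑ i, N i * m i).factorial : ℚ) ≠ 0 := by
    exact_mod_cast (Nat.factorial_pos _).ne'
  have hfac : ∀ i : Fin d, (((m i).factorial : ℚ)) ^ (N i) ≠ 0 := fun i => by
    positivity
  have hden : (∏ i, ((m i).factorial : ℚ) ^ (N i)) ≠ 0 := prod_ne_zero_iff.mpr fun i _ => hfac i
  rw [Bfun, padicValRat.div hnum hden, padicValRat_prod' p _ _ (fun i _ => hfac i)]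
  have h1 : padicValRat p ((∑ i, N i * m i).factorial : ℚ)
      = ((∑ j ∈ Finset.Ico 1 b, (∑ i, N i * m i) / p ^ j : ℕ) : ℤ) := by
    rw [padicValRat.of_nat, padicValNat_factorial hbS]
  have h2 : ∀ i : Fin d, padicValRat p (((m i).factorial : ℚ) ^ (N i))
      = (N i : ℤ) * ((∑ j ∈ Finset.Ico 1 b, (m i) / p ^ j : ℕ) : ℤ) := fun i => by
    rw [show (((m i).factorial : ℚ)) ^ (N i) = (((((m i).factorial) ^ (N i) : ℕ) : ℚ)) by
        push_cast; ring,
      padicValRat.of_nat, padicValNat.pow _ _,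
      padicValNat_factorial (hbm i)]
    push_cast; ring
  rw [h1, Finset.sum_congr rfl fun i _ => h2 i]
  push_cast
  rw [Finset.sum_sub_distrib]
  congr 1
  rw [Finset.sum_comm]
  congr 1
  ext i
  rw [Finset.mul_sum]

/-- Key valuation estimate: for `0 ≤ L ≤ N`, `0 ≤ aᵢ < p`, `k ≥ 0`, and every
`1 ≤ ε ≤ ⌊L·a/p⌋`, we have `v_p(B(N, a + p k)) ≥ 1 + v_p(L·k + ε)`. -/
theorem stmt6 (p : ℕ) [Fact p.Prime] (d : ℕ) (hd : 0 < d)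
    (N L a k : Fin d → ℕ) (hL : ∀ i, L i ≤ N i) (ha : ∀ i, a i < p)
    (ε : ℕ) (hε1 : 1 ≤ ε) (hε2 : ε ≤ (∑ i, L i * a i) / p) :
    (1 + (padicValNat p ((∑ i, L i * k i) + ε) : ℤ)) ≤
      padicValRat p (Bfun N (fun i => a i + p * k i)) := by
  have hp := (Fact.out : p.Prime)
  set m : Fin d → ℕ := fun i => a i + p * k i with hm
  set S : ℕ := ∑ i, N i * m i with hS
  set v : ℕ := padicValNat p ((∑ i, L i * k i) + ε) with hv
  set b : ℕ := max (Nat.log p (S + ∑ i, m i) + 1) (v + 2) with hb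
  have hbS : Nat.log p S < b := by
    have := Nat.log_mono_right (b := p) (Nat.le_add_right S (∑ i, m i))
    omega
  have hbm : ∀ i, Nat.log p (m i) < b := fun i => by
    have h1 : m i ≤ ∑ i, m i :=
      Finset.single_le_sum (fun i _ => Nat.zero_le (m i)) (Finset.mem_univ i)
    have := Nat.log_mono_right (b := p) (le_trans h1 (Nat.le_add_left _ S))
    omega
  rw [Bfun_val p N m b hbS hbm]
  have hsplit : ∑ j ∈ Finset.Ico 1 (v + 2),
        ((S / p ^ j : ℕ) - ∑ i, (N i : ℤ) * ((m i / p ^ j : ℕ)))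
      + ∑ j ∈ Finset.Ico (v + 2) b,
        ((S / p ^ j : ℕ) - ∑ i, (N i : ℤ) * ((m i / p ^ j : ℕ)))
      = ∑ j ∈ Finset.Ico 1 b,
        ((S / p ^ j : ℕ) - ∑ i, (N i : ℤ) * ((m i / p ^ j : ℕ))) :=
    Finset.sum_Ico_consecutive _ (by omega) (by omega)
  rw [← hsplit]
  have hterm : ∀ j : ℕ, (∑ i, (N i : ℤ) * ((m i / p ^ j : ℕ)))
      = ((∑ i, N i * (m i / p ^ j) : ℕ) : ℤ) := fun j => by push_cast; ring
  have hlow : (v + 1 : ℤ) ≤ ∑ j ∈ Finset.Ico 1 (v + 2),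
      ((S / p ^ j : ℕ) - ∑ i, (N i : ℤ) * ((m i / p ^ j : ℕ))) := by
    have hcard : (Finset.Ico 1 (v + 2)).card = v + 1 := by
      rw [Nat.card_Ico]; omega
    calc (v + 1 : ℤ) = (Finset.Ico 1 (v + 2)).card • (1 : ℤ) := by
          rw [hcard]; simp
      _ ≤ _ := by
          refine Finset.card_nsmul_le_sum _ _ _ fun j hj => ?_
          rw [hterm j]
          rw [Finset.mem_Ico] at hj
          have := term_strict p hp N L a k hL ha ε hε1 hε2 j hj.1 (by omega)
          have hcast : (1 : ℤ) + ((∑ i, N i * (m i / p ^ j) : ℕ) : ℤ)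
              ≤ ((S / p ^ j : ℕ) : ℤ) := by exact_mod_cast this
          omega
  have hhigh : (0 : ℤ) ≤ ∑ j ∈ Finset.Ico (v + 2) b,
      ((S / p ^ j : ℕ) - ∑ i, (N i : ℤ) * ((m i / p ^ j : ℕ))) := by
    refine Finset.sum_nonneg fun j hj => ?_
    rw [hterm j]
    have := term_nonneg N m (p ^ j) (pow_pos hp.pos j)
    have hcast : ((∑ i, N i * (m i / p ^ j) : ℕ) : ℤ) ≤ ((S / p ^ j : ℕ) : ℤ) := by
      exact_mod_cast this
    omega
  omega
end

section
/- Let p be a prime, r ≥ 0 an integer, d ≥ 1, R a commutative ring, and Z, W : Z_{≥0}^d → R functions. For s ≥ 0 and m ∈ Z_{≥0}^d define W̄_s(m) = ∑_{p^s m ≤ k ≤ p^s(m+1)−1} W(k), the sum over all k with p^s m_i ≤ k_i ≤ p^s(m_i+1)−1 for each i. Then ∑_{0 ≤ k ≤ (p^r−1)·1} Z(k)W(k) = Z(0)·W̄_r(0) + ∑_{s=0}^{r−1} ∑_{0 ≤ m ≤ (p^{r−s}−1)·1} ( Z(m_1 p^s,...,m_d p^s) − Z(⌊m_1/p⌋p^{s+1},...,⌊m_d/p⌋p^{s+1})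 ) · W̄_s(m). -/
open Finset

theorem dwork_aux1 (q m k : ℕ) (hq : 0 < q) :
    (q * m ≤ k ∧ k ≤ q * (m + 1) - 1) ↔ k / q = m := by
  have h1 : 0 < q * (m+1) := Nat.mul_pos hq m.succ_pos
  rw [Nat.mul_add, Nat.mul_one] at *
  constructor
  · rintro ⟨hlo, hhi⟩
    refine Nat.div_eq_of_lt_le (by rw [Nat.mul_comm]; exact hlo) ?_
    rw [Nat.succ_mul, Nat.mul_comm]; omega
  · rintro rfl
    have a := Nat.div_add_mod k q
    have b := Nat.mod_lt k hq
    omega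

theorem dwork_block_sum {d : ℕ} {R : Type*} [AddCommMonoid R] (q : ℕ) (hq : 0 < q)
    (a b : Fin d → ℕ) (W : (Fin d → ℕ) → R) :
    ∑ m ∈ Icc a b, ∑ k ∈ Icc (fun i => q * m i) (fun i => q * (m i + 1) - 1), W k
      = ∑ k ∈ Icc (fun i => q * a i) (fun i => q * (b i + 1) - 1), W k := by
  rw [Finset.sum_sigma']
  refine Finset.sum_nbij' (i := fun z => z.2) (j := fun k => ⟨fun i => k i / q, k⟩)
    ?_ ?_ ?_ ?_ ?_
  · rintro ⟨m, k⟩ hz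
    simp only [mem_sigma, Finset.mem_Icc, Pi.le_def] at hz ⊢
    obtain ⟨⟨h1, h2⟩, h3, h4⟩ := hz
    refine ⟨fun i => le_trans (Nat.mul_le_mul_left q (h1 i)) (h3 i), fun i => ?_⟩
    have hb : m i + 1 ≤ b i + 1 := by have := h2 i; omega
    exact le_trans (h4 i) (Nat.sub_le_sub_right (Nat.mul_le_mul_left q hb) 1)
  · intro k hk
    simp only [mem_sigma, Finset.mem_Icc, Pi.le_def] at hk ⊢
    obtain ⟨h1, h2⟩ := hk
    refine ⟨⟨fun i => ?_, fun i => ?_⟩, fun i => ?_, fun i => ?_⟩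
    · exact (Nat.le_div_iff_mul_le hq).2 (by rw [Nat.mul_comm]; exact h1 i)
    · have hk2 := h2 i
      have hpos : 0 < q * (b i + 1) := Nat.mul_pos hq (Nat.succ_pos _)
      have : k i / q < b i + 1 := (Nat.div_lt_iff_lt_mul hq).2 (by
        rw [Nat.mul_comm]; omega)
      omega
    · exact ((dwork_aux1 q (k i / q) (k i) hq).2 rfl).1
    · exact ((dwork_aux1 q (k i / q) (k i) hq).2 rfl).2
  · rintro ⟨m, k⟩ hz
    simp only [mem_sigma, Finset.mem_Icc, Pi.le_def] at hz
    obtain ⟨-, h3, h4⟩ := hz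
    have hm : (fun i => k i / q) = m :=
      funext fun i => (dwork_aux1 q (m i) (k i) hq).1 ⟨h3 i, h4 i⟩
    subst hm; rfl
  · intro k _; rfl
  · intro z _; rfl

/-- The block sum `W̄_s(m)`. -/
def dworkBb {d : ℕ} {R : Type*} [CommRing R] (p : ℕ) (W : (Fin d → ℕ) → R) (s : ℕ)
    (m : Fin d → ℕ) : R :=
  ∑ k ∈ Icc (fun i => p ^ s * m i) (fun i => p ^ s * (m i + 1) - 1), W k

/-- The telescoping quantity `F(s) = ∑_m Z(m pˢ) W̄_s(m)`. -/
def dworkFf {d : ℕ} {R : Type*} [CommRing R] (p r : ℕ) (Z W : (Fin d → ℕ) → R) (s : ℕ) : R :=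
  ∑ m ∈ Icc (0 : Fin d → ℕ) (fun _ => p ^ (r - s) - 1),
    Z (fun i => m i * p ^ s) * dworkBb p W s m

theorem dworkFf_zero {d : ℕ} {R : Type*} [CommRing R] (p r : ℕ) (Z W : (Fin d → ℕ) → R) :
    dworkFf p r Z W 0 = ∑ k ∈ Icc (0 : Fin d → ℕ) (fun _ => p ^ r - 1), Z k * W k := by
  unfold dworkFf dworkBb
  simp only [pow_zero, one_mul, mul_one, Nat.add_sub_cancel, Nat.sub_zero]
  apply Finset.sum_congr rfl
  intro m _
  simp [Finset.Icc_self]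

theorem dworkFf_r {d : ℕ} {R : Type*} [CommRing R] (p r : ℕ) (Z W : (Fin d → ℕ) → R) :
    dworkFf p r Z W r = Z 0 * dworkBb p W r 0 := by
  unfold dworkFf
  have : (fun _ : Fin d => p ^ (r - r) - 1) = (0 : Fin d → ℕ) := by
    funext i; simp
  rw [this, Finset.Icc_self, Finset.sum_singleton]
  congr 1
  · congr 1; funext i; simp

theorem dworkFf_key {d : ℕ} {R : Type*} [CommRing R] (p r : ℕ) (hp : 0 < p)
    (Z W : (Fin d → ℕ) → R) (s : ℕ) (hs : s < r) :
    ∑ m ∈ Icc (0 : Fin d → ℕ) (fun _ => p ^ (r - s) - 1),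
      Z (fun i => (m i / p) * p ^ (s + 1)) * dworkBb p W s m = dworkFf p r Z W (s + 1) := by
  have hzero : (0 : Fin d → ℕ) = fun i => p * (0 : Fin d → ℕ) i := by funext i; simp
  have hb : (fun _ : Fin d => p ^ (r - s) - 1)
      = fun i => p * ((fun _ : Fin d => p ^ (r - (s+1)) - 1) i + 1) - 1 := by
    funext i
    have h1 : 1 ≤ p ^ (r - (s+1)) := Nat.one_le_pow _ _ hp
    have h2 : p * p ^ (r - (s+1)) = p ^ (r - s) := by
      rw [← pow_succ']; congr 1; omega
    simp only
    rw [Nat.sub_add_cancel h1, h2]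
  rw [hzero, hb,
    ← dwork_block_sum p hp 0 (fun _ => p ^ (r - (s+1)) - 1)
      (fun m => Z (fun i => (m i / p) * p ^ (s + 1)) * dworkBb p W s m)]
  apply Finset.sum_congr rfl
  intro m' _
  have hdiv : ∀ m ∈ Icc (fun i => p * m' i) (fun i => p * (m' i + 1) - 1),
      Z (fun i => (m i / p) * p ^ (s + 1)) = Z (fun i => m' i * p ^ (s + 1)) := by
    intro m hm
    simp only [Finset.mem_Icc, Pi.le_def] at hm
    congr 1
    funext i
    rw [(dwork_aux1 p (m' i) (m i) hp).1 ⟨hm.1 i, hm.2 i⟩]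
  rw [Finset.sum_congr rfl (fun m hm => by rw [hdiv m hm]), ← Finset.mul_sum]
  congr 1
  have hbs := dwork_block_sum (p ^ s) (pow_pos hp s) (fun i => p * m' i)
    (fun i => p * (m' i + 1) - 1) W
  unfold dworkBb
  rw [hbs]
  congr 1
  congr 1
  · funext i
    rw [← Nat.mul_assoc, ← pow_succ]
  · funext i
    have h1 : 1 ≤ p * (m' i + 1) := Nat.mul_pos hp (Nat.succ_pos _)
    rw [Nat.sub_add_cancel h1, ← Nat.mul_assoc, ← pow_succ]

/-- Multivariate Dwork combinatorial lemma: rearranging `∑ Z(k)W(k)` over the box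
`0 ≤ k ≤ (pʳ−1)·1` into sums over `p`-adic blocks `W̄_s(m) = ∑_{pˢm ≤ k ≤ pˢ(m+1)−1} W(k)`. -/
theorem stmt7 (p : ℕ) [Fact p.Prime] (r d : ℕ) (hd : 0 < d)
    (R : Type*) [CommRing R] (Z W : (Fin d → ℕ) → R) :
    (∑ k ∈ Finset.Icc (0 : Fin d → ℕ) (fun _ => p ^ r - 1), Z k * W k) =
      Z 0 * (∑ k ∈ Finset.Icc (fun i => p ^ r * (0 : Fin d → ℕ) i)
                (fun i => p ^ r * ((0 : Fin d → ℕ) i + 1) - 1), W k) +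
      ∑ s ∈ Finset.range r,
        ∑ m ∈ Finset.Icc (0 : Fin d → ℕ) (fun _ => p ^ (r - s) - 1),
          (Z (fun i => m i * p ^ s) - Z (fun i => (m i / p) * p ^ (s + 1))) *
            (∑ k ∈ Finset.Icc (fun i => p ^ s * m i)
                (fun i => p ^ s * (m i + 1) - 1), W k) := by
  have hp : 0 < p := (Fact.out : p.Prime).pos
  have hstep : ∀ s ∈ Finset.range r,
      (∑ m ∈ Finset.Icc (0 : Fin d → ℕ) (fun _ => p ^ (r - s) - 1),
        (Z (fun i => m i * p ^ s) - Z (fun i => (m i / p) * p ^ (s + 1))) *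
          (∑ k ∈ Finset.Icc (fun i => p ^ s * m i)
              (fun i => p ^ s * (m i + 1) - 1), W k))
        = dworkFf p r Z W s - dworkFf p r Z W (s + 1) := by
    intro s hs
    rw [Finset.mem_range] at hs
    simp_rw [sub_mul]
    rw [Finset.sum_sub_distrib]
    congr 1
    exact dworkFf_key p r hp Z W s hs
  rw [Finset.sum_congr rfl hstep, Finset.sum_range_sub' (dworkFf p r Z W) r,
    ← dworkFf_zero p r Z W]
  have : Z 0 * (∑ k ∈ Finset.Icc (fun i => p ^ r * (0 : Fin d → ℕ) i)
      (fun i => p ^ r * ((0 : Fin d → ℕ) i + 1) - 1), W k)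
      = dworkFf p r Z W r := (dworkFf_r p r Z W).symm
  rw [this]
  ring
end

section
/- Let p be a prime, d ≥ 1, and A, g : Z_{≥0}^d → Z_p \ {0} maps satisfying: (i) v_p(A(0)) = 0; (ii) A(n) ∈ g(n)·Z_p for all n; (iii) for all integers s ≥ 0 and all vectors v, u, n ∈ Z_{≥0}^d with 0 ≤ v_i < p and 0 ≤ u_i < p^s for all i, one has A(v + p·u + p^{s+1}·n)/A(v + p·u) − A(u + p^s·n)/A(u) ∈ p^{s+1}·(g(n)/g(v + p·u))·Z_p. Extend A to Z^d by A(n) = 0 if some n_i < 0. Then for all s ≥ 0 and all m, K, a ∈ Z^d with m ≥ 0 and 0 ≤ a_i < p: ∑_{p^s m ≤ k ≤ p^s(m+1)−1} ( A(a + p·k)·A(K − k) − A(a + p·(K − k))·A(k) ) ∈ p^{s+1}·g(m)·Z_p. -/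
namespace Dwork8

open Finset

variable {d : ℕ}

/-- `p^{-(s+1)}` as a real number. -/
noncomputable def Pw (p : ℕ) (s : ℕ) : ℝ := (p : ℝ) ^ (-(s + 1 : ℤ))

lemma Pw_pos {p : ℕ} (hp : 0 < p) (s : ℕ) : 0 < Pw p s := by
  have : (0:ℝ) < (p:ℝ) := by exact_mod_cast hp
  exact zpow_pos this _

lemma Pw_nonneg {p : ℕ} (hp : 0 < p) (s : ℕ) : 0 ≤ Pw p s := (Pw_pos hp s).le

lemma Pw_mul {p : ℕ} (hp : 0 < p) (a b : ℕ) : Pw p a * Pw p b = Pw p (a + b + 1) := by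
  have hne : (p:ℝ) ≠ 0 := by exact_mod_cast hp.ne'
  unfold Pw
  have h : (-(a + 1 : ℤ)) + -(b + 1 : ℤ) = -(((a + b + 1 : ℕ) : ℤ) + 1) := by push_cast; ring
  rw [← zpow_add₀ hne, h]

lemma sum_Icc_translate {M : Type*} [AddCommMonoid M] (lo hi : Fin d → ℤ)
    (f : (Fin d → ℤ) → M) :
    ∑ k ∈ Finset.Icc lo hi, f k = ∑ r ∈ Finset.Icc 0 (hi - lo), f (lo + r) := by
  have h : Finset.Icc lo hi = Finset.map (addLeftEmbedding lo) (Finset.Icc 0 (hi - lo)) := by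
    rw [Finset.map_add_left_Icc]
    congr 1
    · abel
    · abel
  rw [h, Finset.sum_map]
  simp [addLeftEmbedding_apply]

lemma sum_box_decomp {M : Type*} [AddCommMonoid M] (q : ℤ) (hq : 0 < q)
    (b : Fin d → ℤ) (f : (Fin d → ℤ) → M) :
    ∑ x ∈ Finset.Icc 0 (q • b - 1), f x
      = ∑ u ∈ Finset.Icc 0 (b - 1),
          ∑ v ∈ Finset.Icc (0 : Fin d → ℤ) (q • (1 : Fin d → ℤ) - 1), f (v + q • u) := by
  rw [← Finset.sum_product']
  refine Finset.sum_nbij' (i := fun x => ((fun j => x j / q, fun j => x j % q) :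
      (Fin d → ℤ) × (Fin d → ℤ))) (fun z => z.2 + q • z.1) ?_ ?_ ?_ ?_ ?_
  · intro x hx
    rw [Finset.mem_Icc] at hx
    obtain ⟨hx0, hx1⟩ := hx
    rw [Finset.mem_product, Finset.mem_Icc, Finset.mem_Icc]
    refine ⟨⟨?_, ?_⟩, ?_, ?_⟩ <;> intro j
    · exact Int.ediv_nonneg (hx0 j) hq.le
    · have h1 : x j ≤ q * b j - 1 := by
        have := hx1 j
        simpa [Pi.smul_apply, smul_eq_mul] using this
      have h2 : x j / q < b j := by
        rw [Int.ediv_lt_iff_lt_mul hq]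
        have : q * b j = b j * q := mul_comm _ _
        omega
      simpa [Pi.sub_apply] using (by omega : x j / q ≤ b j - 1)
    · exact Int.emod_nonneg _ hq.ne'
    · have := Int.emod_lt_of_pos (x j) hq
      simpa [Pi.sub_apply, Pi.smul_apply, smul_eq_mul] using (by omega : x j % q ≤ q * 1 - 1)
  · intro z hz
    rw [Finset.mem_product, Finset.mem_Icc, Finset.mem_Icc] at hz
    obtain ⟨⟨hu0, hu1⟩, hv0, hv1⟩ := hz
    rw [Finset.mem_Icc]
    constructor <;> intro j
    · have h1 : (0:ℤ) ≤ z.1 j := hu0 j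
      have h2 : (0:ℤ) ≤ z.2 j := hv0 j
      have hq0 : 0 ≤ q * z.1 j := mul_nonneg hq.le h1
      simp only [Pi.zero_apply, Pi.add_apply, Pi.smul_apply, smul_eq_mul]
      linarith
    · have h1 : z.1 j ≤ b j - 1 := by simpa [Pi.sub_apply] using hu1 j
      have h2 : z.2 j ≤ q * 1 - 1 := by
        simpa [Pi.sub_apply, Pi.smul_apply, smul_eq_mul] using hv1 j
      have h3 : q * z.1 j ≤ q * (b j - 1) := mul_le_mul_of_nonneg_left h1 hq.le
      simpa [Pi.add_apply, Pi.sub_apply, Pi.smul_apply, smul_eq_mul] using by nlinarith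
  · intro x hx
    funext j
    have := Int.emod_add_mul_ediv (x j) q
    simp only [Pi.add_apply, Pi.smul_apply, smul_eq_mul]
    omega
  · intro z hz
    rw [Finset.mem_product, Finset.mem_Icc, Finset.mem_Icc] at hz
    obtain ⟨⟨hu0, hu1⟩, hv0, hv1⟩ := hz
    have hv : ∀ j, 0 ≤ z.2 j ∧ z.2 j < q := by
      intro j
      refine ⟨hv0 j, ?_⟩
      have := hv1 j
      simp only [Pi.sub_apply, Pi.smul_apply, Pi.one_apply, smul_eq_mul] at this
      omega
    have h1 : (fun j => (z.2 + q • z.1) j / q) = z.1 := by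
      funext j
      simp only [Pi.add_apply, Pi.smul_apply, smul_eq_mul]
      rw [Int.add_mul_ediv_left _ _ hq.ne', Int.ediv_eq_zero_of_lt (hv j).1 (hv j).2, zero_add]
    have h2 : (fun j => (z.2 + q • z.1) j % q) = z.2 := by
      funext j
      simp only [Pi.add_apply, Pi.smul_apply, smul_eq_mul]
      rw [Int.add_mul_emod_self_left, Int.emod_eq_of_lt (hv j).1 (hv j).2]
    exact Prod.ext h1 h2
  · intro x hx
    congr 1
    funext j
    have := Int.emod_add_mul_ediv (x j) q
    simp only [Pi.add_apply, Pi.smul_apply, smul_eq_mul]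
    omega


structure Hyp (p : ℕ) (d : ℕ) [Fact p.Prime] : Type where
  A : (Fin d → ℤ) → ℚ_[p]
  g : (Fin d → ℤ) → ℚ_[p]
  hAneg : ∀ n, (∃ i, n i < 0) → A n = 0
  hA : ∀ n : Fin d → ℤ, (∀ i, 0 ≤ n i) → A n ≠ 0 ∧ ‖A n‖ ≤ 1
  hg : ∀ n : Fin d → ℤ, (∀ i, 0 ≤ n i) → g n ≠ 0 ∧ ‖g n‖ ≤ 1
  h1 : ‖A 0‖ = 1
  h2 : ∀ n : Fin d → ℤ, (∀ i, 0 ≤ n i) → ‖A n / g n‖ ≤ 1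
  h3 : ∀ (s : ℕ) (v u n : Fin d → ℤ),
      (∀ i, 0 ≤ v i ∧ v i < p) → (∀ i, 0 ≤ u i ∧ u i < (p : ℤ) ^ s) → (∀ i, 0 ≤ n i) →
      ‖(A (v + (p : ℤ) • u + (p : ℤ) ^ (s + 1) • n) / A (v + (p : ℤ) • u) -
          A (u + (p : ℤ) ^ s • n) / A u) * g (v + (p : ℤ) • u) / g n‖
        ≤ (p : ℝ) ^ (-(s + 1 : ℤ))

namespace Hyp

variable {p : ℕ} [hp : Fact p.Prime] (H : Hyp p d)

lemma p_pos (_H : Hyp p d) : 0 < p := hp.out.pos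

lemma p_int_pos (_H : Hyp p d) : (0:ℤ) < (p:ℤ) := by exact_mod_cast hp.out.pos

lemma normg_pos (n : Fin d → ℤ) (hn : ∀ i, 0 ≤ n i) : 0 < ‖H.g n‖ :=
  norm_pos_iff.mpr (H.hg n hn).1

lemma normg_le_one (n : Fin d → ℤ) (hn : ∀ i, 0 ≤ n i) : ‖H.g n‖ ≤ 1 := (H.hg n hn).2

lemma normA_le_g (n : Fin d → ℤ) (hn : ∀ i, 0 ≤ n i) : ‖H.A n‖ ≤ ‖H.g n‖ := by
  have h := H.h2 n hn
  rw [norm_div, div_le_one (H.normg_pos n hn)] at h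
  simpa using h

lemma normA_le_one (n : Fin d → ℤ) : ‖H.A n‖ ≤ 1 := by
  by_cases h : ∃ i, n i < 0
  · rw [H.hAneg n h]; simp
  · push_neg at h
    exact (H.hA n (fun i => not_lt.mp (by simpa using h i))).2

lemma normg0 : ‖H.g 0‖ = 1 := by
  have h := H.h2 0 (fun i => le_refl 0)
  rw [norm_div, H.h1, div_le_one (H.normg_pos 0 (fun i => le_refl 0))] at h
  exact le_antisymm (H.normg_le_one 0 (fun i => le_refl 0)) h

lemma normA0 : ‖H.A 0‖ = 1 := H.h1

/-- key2: the ratio difference times `‖g (v+p•u)‖`. -/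
lemma key2 (σ : ℕ) (v u n : Fin d → ℤ)
    (hv : ∀ i, 0 ≤ v i ∧ v i < p) (hu : ∀ i, 0 ≤ u i ∧ u i < (p:ℤ)^σ)
    (hn : ∀ i, 0 ≤ n i) :
    ‖H.A (v + (p:ℤ) • u + (p:ℤ)^(σ+1) • n) / H.A (v + (p:ℤ) • u)
        - H.A (u + (p:ℤ)^σ • n) / H.A u‖ * ‖H.g (v + (p:ℤ) • u)‖
      ≤ Pw p σ * ‖H.g n‖ := by
  have h := H.h3 σ v u n hv hu hn
  have hx : ∀ i, 0 ≤ (v + (p:ℤ) • u) i := by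
    intro i
    have h1 := (hv i).1
    have h2 := (hu i).1
    have : 0 ≤ (p:ℤ) * u i := mul_nonneg (H.p_int_pos).le h2
    simp only [Pi.add_apply, Pi.smul_apply, smul_eq_mul]
    linarith
  rw [norm_div, norm_mul, div_le_iff₀ (H.normg_pos n hn)] at h
  calc ‖_ - _‖ * ‖H.g (v + (p:ℤ) • u)‖ ≤ (p:ℝ) ^ (-(σ + 1 : ℤ)) * ‖H.g n‖ := h
  _ = Pw p σ * ‖H.g n‖ := rfl

/-- key1: the (non-divided) linear-form congruence. -/
lemma key1 (σ : ℕ) (v u n : Fin d → ℤ)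
    (hv : ∀ i, 0 ≤ v i ∧ v i < p) (hu : ∀ i, 0 ≤ u i ∧ u i < (p:ℤ)^σ)
    (hn : ∀ i, 0 ≤ n i) :
    ‖H.A (v + (p:ℤ) • u + (p:ℤ)^(σ+1) • n)
        - H.A (u + (p:ℤ)^σ • n) * (H.A (v + (p:ℤ) • u) / H.A u)‖
      ≤ Pw p σ * ‖H.g n‖ := by
  have hx : ∀ i, 0 ≤ (v + (p:ℤ) • u) i := by
    intro i
    have h1 := (hv i).1
    have h2 := (hu i).1
    have : 0 ≤ (p:ℤ) * u i := mul_nonneg (H.p_int_pos).le h2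
    simp only [Pi.add_apply, Pi.smul_apply, smul_eq_mul]
    linarith
  have hu0 : ∀ i, 0 ≤ u i := fun i => (hu i).1
  have hAx : H.A (v + (p:ℤ) • u) ≠ 0 := (H.hA _ hx).1
  have hAu : H.A u ≠ 0 := (H.hA _ hu0).1
  have heq : (H.A (v + (p:ℤ) • u + (p:ℤ)^(σ+1) • n) / H.A (v + (p:ℤ) • u)
        - H.A (u + (p:ℤ)^σ • n) / H.A u) * H.A (v + (p:ℤ) • u)
      = H.A (v + (p:ℤ) • u + (p:ℤ)^(σ+1) • n)
      - H.A (u + (p:ℤ)^σ • n) * (H.A (v + (p:ℤ) • u) / H.A u) := by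
    rw [sub_mul, div_mul_cancel₀ _ hAx, div_mul_eq_mul_div, mul_div_assoc]
  rw [← heq, norm_mul]
  calc ‖_‖ * ‖H.A (v + (p:ℤ) • u)‖
      ≤ ‖H.A (v + (p:ℤ) • u + (p:ℤ)^(σ+1) • n) / H.A (v + (p:ℤ) • u)
        - H.A (u + (p:ℤ)^σ • n) / H.A u‖ * ‖H.g (v + (p:ℤ) • u)‖ :=
        mul_le_mul_of_nonneg_left (H.normA_le_g _ hx) (norm_nonneg _)
  _ ≤ Pw p σ * ‖H.g n‖ := H.key2 σ v u n hv hu hn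

/-- The summand. -/
noncomputable def bt (a K k : Fin d → ℤ) : ℚ_[p] :=
  H.A (a + (p:ℤ) • k) * H.A (K - k) - H.A (a + (p:ℤ) • (K - k)) * H.A k

lemma bt_antisymm (a K k : Fin d → ℤ) : H.bt a K (K - k) = - H.bt a K k := by
  unfold bt
  rw [sub_sub_cancel]
  ring

lemma bt_zero (a K k : Fin d → ℤ) (ha : ∀ i, 0 ≤ a i ∧ a i < p)
    (hk : ∀ i, 0 ≤ k i) (i : Fin d) (hi : K i < k i) : H.bt a K k = 0 := by
  have h1 : H.A (K - k) = 0 := H.hAneg _ ⟨i, by simp only [Pi.sub_apply]; omega⟩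
  have h2 : H.A (a + (p:ℤ) • (K - k)) = 0 := by
    refine H.hAneg _ ⟨i, ?_⟩
    have hp1 : (1:ℤ) ≤ (p:ℤ) := H.p_int_pos
    have hKk : K i - k i ≤ -1 := by omega
    have : (p:ℤ) * (K i - k i) ≤ (p:ℤ) * (-1) := mul_le_mul_of_nonneg_left hKk (by linarith)
    have ha2 := (ha i).2
    simp only [Pi.add_apply, Pi.smul_apply, Pi.sub_apply, smul_eq_mul]
    nlinarith [(ha i).1]
  unfold bt
  rw [h1, h2]
  ring

/-- The box sum. -/
noncomputable def S (s : ℕ) (m K a : Fin d → ℤ) : ℚ_[p] :=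
  ∑ k ∈ Finset.Icc ((p : ℤ) ^ s • m) ((p : ℤ) ^ s • (m + 1) - 1), H.bt a K k

lemma S_eq (s : ℕ) (m K a : Fin d → ℤ) :
    H.S s m K a = ∑ r ∈ Finset.Icc (0 : Fin d → ℤ) ((p:ℤ)^s • (1 : Fin d → ℤ) - 1),
      H.bt a K ((p:ℤ)^s • m + r) := by
  unfold S
  rw [sum_Icc_translate]
  have hset : ((p:ℤ)^s • (m + 1) - 1 - (p:ℤ)^s • m : Fin d → ℤ) = (p:ℤ)^s • (1 : Fin d → ℤ) - 1 := by
    funext i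
    simp only [Pi.sub_apply, Pi.smul_apply, Pi.add_apply, Pi.one_apply, smul_eq_mul]
    ring
  rw [hset]

lemma S_zero_eq (m K a : Fin d → ℤ) : H.S 0 m K a = H.bt a K m := by
  unfold S
  have h1 : (p:ℤ)^0 • m = m := by rw [pow_zero, one_smul]
  have h2 : (p:ℤ)^0 • (m + 1) - 1 = m := by rw [pow_zero, one_smul]; abel
  rw [h1, h2, Finset.Icc_self, Finset.sum_singleton]

lemma sum_bt_box_zero (a K : Fin d → ℤ) (hK : ∀ i, 0 ≤ K i) :
    ∑ k ∈ Finset.Icc (0 : Fin d → ℤ) K, H.bt a K k = 0 := by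
  have hmem : ∀ k ∈ Finset.Icc (0 : Fin d → ℤ) K, K - k ∈ Finset.Icc (0 : Fin d → ℤ) K := by
    intro k hk
    rw [Finset.mem_Icc] at hk ⊢
    obtain ⟨h0, h1⟩ := hk
    constructor <;> intro i
    · have := h1 i
      simp only [Pi.sub_apply, Pi.zero_apply] at *
      omega
    · have := h0 i
      simp only [Pi.sub_apply, Pi.zero_apply] at *
      have := hK i
      omega
  have hinv : ∀ k ∈ Finset.Icc (0 : Fin d → ℤ) K, K - (K - k) = k := by
    intro k _; abel
  have h : ∑ k ∈ Finset.Icc (0 : Fin d → ℤ) K, H.bt a K k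
      = ∑ k ∈ Finset.Icc (0 : Fin d → ℤ) K, H.bt a K (K - k) := by
    refine Finset.sum_nbij' (i := fun k => K - k) (fun k => K - k) hmem hmem
      (fun k hk => hinv k hk) (fun k hk => hinv k hk) ?_
    intro k hk
    rw [hinv k hk]
  have h2 : ∑ k ∈ Finset.Icc (0 : Fin d → ℤ) K, H.bt a K (K - k)
      = - ∑ k ∈ Finset.Icc (0 : Fin d → ℤ) K, H.bt a K k := by
    rw [← Finset.sum_neg_distrib]
    exact Finset.sum_congr rfl (fun k hk => H.bt_antisymm a K k)
  have h3 := h.trans h2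
  have h4 : ∑ k ∈ Finset.Icc (0 : Fin d → ℤ) K, H.bt a K k
      + ∑ k ∈ Finset.Icc (0 : Fin d → ℤ) K, H.bt a K k = 0 := by
    nth_rewrite 1 [h3]
    ring
  exact add_self_eq_zero.mp h4

lemma norm_sub_le_max (_H : Hyp p d) (x y : ℚ_[p]) : ‖x - y‖ ≤ max ‖x‖ ‖y‖ := by
  have h := Padic.nonarchimedean x (-y)
  simpa [sub_eq_add_neg] using h

lemma key0 (a : Fin d → ℤ) (ha : ∀ i, 0 ≤ a i ∧ a i < p)
    (n : Fin d → ℤ) (hn : ∀ i, 0 ≤ n i) :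
    ‖H.A (a + (p:ℤ) • n) - H.A n * (H.A a / H.A 0)‖ ≤ Pw p 0 * ‖H.g n‖ := by
  have hu : ∀ i, 0 ≤ (0 : Fin d → ℤ) i ∧ (0 : Fin d → ℤ) i < (p:ℤ)^0 := by
    intro i; simp
  have h := H.key1 0 a 0 n ha hu hn
  have e1 : a + (p:ℤ) • (0 : Fin d → ℤ) + (p:ℤ)^(0+1) • n = a + (p:ℤ) • n := by
    funext i
    simp only [Pi.add_apply, Pi.smul_apply, Pi.zero_apply, smul_eq_mul, pow_one, zero_add,
      mul_zero, add_zero]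
  have e2 : (0 : Fin d → ℤ) + (p:ℤ)^0 • n = n := by
    funext i
    simp only [Pi.add_apply, Pi.smul_apply, Pi.zero_apply, smul_eq_mul, pow_zero, one_mul,
      zero_add]
  have e3 : a + (p:ℤ) • (0 : Fin d → ℤ) = a := by
    funext i
    simp only [Pi.add_apply, Pi.smul_apply, Pi.zero_apply, smul_eq_mul, mul_zero, add_zero]
  rw [e1, e2, e3] at h
  exact h

lemma base (a : Fin d → ℤ) (ha : ∀ i, 0 ≤ a i ∧ a i < p)
    (m K : Fin d → ℤ) (hm : ∀ i, 0 ≤ m i) :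
    ‖H.S 0 m K a‖ ≤ Pw p 0 * ‖H.g m‖ := by
  have hPw : 0 ≤ Pw p 0 := Pw_nonneg hp.out.pos 0
  rw [H.S_zero_eq]
  by_cases hneg : ∃ i, K i < m i
  · obtain ⟨i, hi⟩ := hneg
    rw [H.bt_zero a K m ha hm i hi, norm_zero]
    exact mul_nonneg hPw (norm_nonneg _)
  · push_neg at hneg
    have hn : ∀ i, 0 ≤ (K - m) i := by
      intro i
      have := hneg i
      simp only [Pi.sub_apply]
      omega
    have e1 := H.key0 a ha m hm
    have e2 := H.key0 a ha (K - m) hn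
    have hsplit : H.bt a K m
        = (H.A (a + (p:ℤ) • m) - H.A m * (H.A a / H.A 0)) * H.A (K - m)
          - (H.A (a + (p:ℤ) • (K - m)) - H.A (K - m) * (H.A a / H.A 0)) * H.A m := by
      unfold bt
      ring
    rw [hsplit]
    refine le_trans (H.norm_sub_le_max _ _) (max_le ?_ ?_)
    · rw [norm_mul]
      calc ‖H.A (a + (p:ℤ) • m) - H.A m * (H.A a / H.A 0)‖ * ‖H.A (K - m)‖
          ≤ (Pw p 0 * ‖H.g m‖) * 1 :=
            mul_le_mul e1 (H.normA_le_one _) (norm_nonneg _)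
              (mul_nonneg hPw (norm_nonneg _))
      _ = Pw p 0 * ‖H.g m‖ := by ring
    · rw [norm_mul]
      calc ‖H.A (a + (p:ℤ) • (K - m)) - H.A (K - m) * (H.A a / H.A 0)‖ * ‖H.A m‖
          ≤ (Pw p 0 * ‖H.g (K - m)‖) * ‖H.g m‖ :=
            mul_le_mul e2 (H.normA_le_g m hm) (norm_nonneg _)
              (mul_nonneg hPw (norm_nonneg _))
      _ ≤ (Pw p 0 * 1) * ‖H.g m‖ := by
            have := H.normg_le_one (K - m) hn
            have h2 := mul_le_mul_of_nonneg_left this hPw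
            exact mul_le_mul_of_nonneg_right h2 (norm_nonneg _)
      _ = Pw p 0 * ‖H.g m‖ := by ring

lemma union_boxes (s : ℕ) (a K M : Fin d → ℤ) (hM : ∀ i, 0 ≤ M i) :
    ∑ m' ∈ Finset.Icc (0 : Fin d → ℤ) M, H.S s m' K a
      = ∑ k ∈ Finset.Icc (0 : Fin d → ℤ) ((p:ℤ)^s • (M + 1) - 1), H.bt a K k := by
  rw [sum_box_decomp ((p:ℤ)^s) (pow_pos (H.p_int_pos) s) (M + 1) (H.bt a K)]
  have h1 : (M + 1 - 1 : Fin d → ℤ) = M := by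
    funext i; simp
  rw [h1]
  refine Finset.sum_congr rfl ?_
  intro u _
  rw [H.S_eq]
  refine Finset.sum_congr rfl ?_
  intro v _
  congr 1
  exact add_comm _ _

/-- The telescoping auxiliary sums. -/
noncomputable def Th (a K' m : Fin d → ℤ) (s t : ℕ) : ℚ_[p] :=
  ∑ x ∈ Finset.Icc (0 : Fin d → ℤ) ((p:ℤ)^(s+1-t) • 1 - 1),
    (H.A (x + (p:ℤ)^(s+1-t) • m) / H.A x) *
      ∑ r ∈ Finset.Icc (0 : Fin d → ℤ) ((p:ℤ)^t • 1 - 1), H.bt a K' ((p:ℤ)^t • x + r)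

lemma Th_zero (a K' m : Fin d → ℤ) (s : ℕ) :
    H.Th a K' m s 0 = ∑ x ∈ Finset.Icc (0 : Fin d → ℤ) ((p:ℤ)^(s+1) • 1 - 1),
      (H.A (x + (p:ℤ)^(s+1) • m) / H.A x) * H.bt a K' x := by
  unfold Th
  rw [Nat.sub_zero]
  refine Finset.sum_congr rfl ?_
  intro x _
  congr 1
  have e : ((p:ℤ)^0 • (1 : Fin d → ℤ) - 1) = 0 := by
    funext i; simp
  rw [e, Finset.Icc_self, Finset.sum_singleton]
  congr 1
  funext i
  simp

lemma Th_last (a K' m : Fin d → ℤ) (s : ℕ) :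
    H.Th a K' m s (s+1) = (H.A m / H.A 0) * H.S (s+1) 0 K' a := by
  unfold Th
  rw [Nat.sub_self]
  have e : ((p:ℤ)^0 • (1 : Fin d → ℤ) - 1) = 0 := by
    funext i; simp
  rw [e, Finset.Icc_self, Finset.sum_singleton]
  have e2 : (0 : Fin d → ℤ) + (p:ℤ)^0 • m = m := by
    funext i; simp
  rw [e2, H.S_eq]

lemma mem_box_iff (_H : Hyp p d) (s : ℕ) (r : Fin d → ℤ)
    (hr : r ∈ Finset.Icc (0 : Fin d → ℤ) ((p:ℤ)^s • 1 - 1)) :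
    ∀ i, 0 ≤ r i ∧ r i < (p:ℤ)^s := by
  rw [Finset.mem_Icc] at hr
  intro i
  have h0 := hr.1 i
  have h1 := hr.2 i
  simp only [Pi.zero_apply] at h0
  simp only [Pi.sub_apply, Pi.smul_apply, Pi.one_apply, smul_eq_mul, mul_one] at h1
  exact ⟨h0, by omega⟩

lemma step1 (a : Fin d → ℤ) (ha : ∀ i, 0 ≤ a i ∧ a i < p) (s : ℕ)
    (m K : Fin d → ℤ) (hm : ∀ i, 0 ≤ m i) :
    ‖H.S (s+1) m K a - H.Th a (K - (p:ℤ)^(s+1) • m) m s 0‖ ≤ Pw p (s+1) * ‖H.g m‖ := by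
  have hPw : 0 ≤ Pw p (s+1) * ‖H.g m‖ :=
    mul_nonneg (Pw_nonneg hp.out.pos _) (norm_nonneg _)
  rw [H.Th_zero, H.S_eq, ← Finset.sum_sub_distrib]
  apply IsUltrametricDist.norm_sum_le_of_forall_le_of_nonneg hPw
  intro r hr
  have hrb := H.mem_box_iff (s+1) r hr
  have hr0 : ∀ i, 0 ≤ r i := fun i => (hrb i).1
  have hAr : H.A r ≠ 0 := (H.hA r hr0).1
  have veq1 : a + (p:ℤ) • ((p:ℤ)^(s+1) • m + r) = a + (p:ℤ) • r + (p:ℤ)^(s+1+1) • m := by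
    funext i
    simp only [Pi.add_apply, Pi.smul_apply, smul_eq_mul]
    ring
  have veq2 : K - ((p:ℤ)^(s+1) • m + r) = (K - (p:ℤ)^(s+1) • m) - r := by
    funext i
    simp only [Pi.sub_apply, Pi.add_apply, Pi.smul_apply, smul_eq_mul]
    ring
  have veq3 : (p:ℤ)^(s+1) • m + r = r + (p:ℤ)^(s+1) • m := add_comm _ _
  have hsplit : H.bt a K ((p:ℤ)^(s+1) • m + r)
      - (H.A (r + (p:ℤ)^(s+1) • m) / H.A r) * H.bt a (K - (p:ℤ)^(s+1) • m) r
      = (H.A (a + (p:ℤ) • r + (p:ℤ)^(s+1+1) • m)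
          - H.A (r + (p:ℤ)^(s+1) • m) * (H.A (a + (p:ℤ) • r) / H.A r))
        * H.A ((K - (p:ℤ)^(s+1) • m) - r) := by
    unfold bt
    rw [veq1, veq2, veq3]
    field_simp
    ring
  rw [hsplit, norm_mul]
  have hk1 := H.key1 (s+1) a r m ha hrb hm
  calc ‖H.A (a + (p:ℤ) • r + (p:ℤ)^(s+1+1) • m)
          - H.A (r + (p:ℤ)^(s+1) • m) * (H.A (a + (p:ℤ) • r) / H.A r)‖
        * ‖H.A ((K - (p:ℤ)^(s+1) • m) - r)‖
      ≤ (Pw p (s+1) * ‖H.g m‖) * 1 :=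
        mul_le_mul hk1 (H.normA_le_one _) (norm_nonneg _) hPw
  _ = Pw p (s+1) * ‖H.g m‖ := by ring

lemma step2 (a : Fin d → ℤ) (s : ℕ)
    (ih : ∀ t, t ≤ s → ∀ m K : Fin d → ℤ, (∀ i, 0 ≤ m i) →
      ‖H.S t m K a‖ ≤ Pw p t * ‖H.g m‖)
    (m K' : Fin d → ℤ) (hm : ∀ i, 0 ≤ m i) (t : ℕ) (ht : t ≤ s) :
    ‖H.Th a K' m s t - H.Th a K' m s (t+1)‖ ≤ Pw p (s+1) * ‖H.g m‖ := by
  have hPw : 0 ≤ Pw p (s+1) * ‖H.g m‖ :=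
    mul_nonneg (Pw_nonneg hp.out.pos _) (norm_nonneg _)
  have hpi : (0:ℤ) < (p:ℤ) := H.p_int_pos
  set σ := s - t with hσdef
  have hst : s + 1 - t = σ + 1 := by omega
  have hst2 : s + 1 - (t+1) = σ := by omega
  -- reshape Θ t
  have hTht : H.Th a K' m s t
      = ∑ x ∈ Finset.Icc (0 : Fin d → ℤ) ((p:ℤ)^σ • 1 - 1),
          ∑ v ∈ Finset.Icc (0 : Fin d → ℤ) ((p:ℤ) • 1 - 1),
            (H.A ((v + (p:ℤ) • x) + (p:ℤ)^(σ+1) • m) / H.A (v + (p:ℤ) • x)) *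
              ∑ r ∈ Finset.Icc (0 : Fin d → ℤ) ((p:ℤ)^t • 1 - 1),
                H.bt a K' ((p:ℤ)^t • (v + (p:ℤ) • x) + r) := by
    unfold Th
    rw [hst]
    have e1 : ((p:ℤ)^(σ+1) • (1 : Fin d → ℤ) - 1)
        = (p:ℤ) • ((p:ℤ)^σ • (1 : Fin d → ℤ)) - 1 := by
      funext i
      simp only [Pi.sub_apply, Pi.smul_apply, Pi.one_apply, smul_eq_mul, mul_one]
      ring
    rw [e1, sum_box_decomp (p:ℤ) hpi ((p:ℤ)^σ • 1)]
  -- reshape Θ (t+1)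
  have hTht1 : H.Th a K' m s (t+1)
      = ∑ x ∈ Finset.Icc (0 : Fin d → ℤ) ((p:ℤ)^σ • 1 - 1),
          ∑ v ∈ Finset.Icc (0 : Fin d → ℤ) ((p:ℤ) • 1 - 1),
            (H.A (x + (p:ℤ)^σ • m) / H.A x) *
              ∑ r ∈ Finset.Icc (0 : Fin d → ℤ) ((p:ℤ)^t • 1 - 1),
                H.bt a K' ((p:ℤ)^t • (v + (p:ℤ) • x) + r) := by
    unfold Th
    rw [hst2]
    refine Finset.sum_congr rfl ?_
    intro x _
    rw [Finset.mul_sum]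
    have e1 : ((p:ℤ)^(t+1) • (1 : Fin d → ℤ) - 1)
        = (p:ℤ)^t • ((p:ℤ) • (1 : Fin d → ℤ)) - 1 := by
      funext i
      simp only [Pi.sub_apply, Pi.smul_apply, Pi.one_apply, smul_eq_mul, mul_one]
      ring
    rw [e1, sum_box_decomp ((p:ℤ)^t) (pow_pos hpi t) ((p:ℤ) • 1)]
    refine Finset.sum_congr rfl ?_
    intro u _
    rw [Finset.mul_sum]
    refine Finset.sum_congr rfl ?_
    intro r _
    have harg : (p:ℤ)^(t+1) • x + (r + (p:ℤ)^t • u)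
        = (p:ℤ)^t • (u + (p:ℤ) • x) + r := by
      funext i
      simp only [Pi.add_apply, Pi.smul_apply, smul_eq_mul]
      ring
    rw [harg]
  rw [hTht, hTht1, ← Finset.sum_sub_distrib]
  apply IsUltrametricDist.norm_sum_le_of_forall_le_of_nonneg hPw
  intro x hx
  rw [← Finset.sum_sub_distrib]
  apply IsUltrametricDist.norm_sum_le_of_forall_le_of_nonneg hPw
  intro v hv
  rw [← sub_mul, norm_mul]
  -- facts about x and v
  have hxb := H.mem_box_iff σ x hx
  have hvb : ∀ i, 0 ≤ v i ∧ v i < (p:ℤ) := by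
    have h := H.mem_box_iff 1 v (by simpa [pow_one] using hv)
    intro i
    simpa [pow_one] using h i
  have hvb' : ∀ i, 0 ≤ v i ∧ v i < p := hvb
  have hy : ∀ i, 0 ≤ (v + (p:ℤ) • x) i := by
    intro i
    have h1 := (hvb i).1
    have h2 := (hxb i).1
    have : 0 ≤ (p:ℤ) * x i := mul_nonneg hpi.le h2
    simp only [Pi.add_apply, Pi.smul_apply, smul_eq_mul]
    linarith
  -- inner sum = S t (v + p•x) K' a
  have hI : ∑ r ∈ Finset.Icc (0 : Fin d → ℤ) ((p:ℤ)^t • 1 - 1),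
      H.bt a K' ((p:ℤ)^t • (v + (p:ℤ) • x) + r) = H.S t (v + (p:ℤ) • x) K' a :=
    (H.S_eq t (v + (p:ℤ) • x) K' a).symm
  rw [hI]
  have hihy := ih t ht (v + (p:ℤ) • x) K' hy
  have hk2 := H.key2 σ v x m hvb' hxb hm
  calc ‖H.A (v + (p:ℤ) • x + (p:ℤ)^(σ+1) • m) / H.A (v + (p:ℤ) • x)
        - H.A (x + (p:ℤ)^σ • m) / H.A x‖ * ‖H.S t (v + (p:ℤ) • x) K' a‖
      ≤ ‖H.A (v + (p:ℤ) • x + (p:ℤ)^(σ+1) • m) / H.A (v + (p:ℤ) • x)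
        - H.A (x + (p:ℤ)^σ • m) / H.A x‖ * (Pw p t * ‖H.g (v + (p:ℤ) • x)‖) :=
        mul_le_mul_of_nonneg_left hihy (norm_nonneg _)
  _ = Pw p t * (‖H.A (v + (p:ℤ) • x + (p:ℤ)^(σ+1) • m) / H.A (v + (p:ℤ) • x)
        - H.A (x + (p:ℤ)^σ • m) / H.A x‖ * ‖H.g (v + (p:ℤ) • x)‖) := by ring
  _ ≤ Pw p t * (Pw p σ * ‖H.g m‖) :=
        mul_le_mul_of_nonneg_left hk2 (Pw_nonneg hp.out.pos t)
  _ = (Pw p t * Pw p σ) * ‖H.g m‖ := by ring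
  _ = Pw p (s+1) * ‖H.g m‖ := by
        rw [Pw_mul hp.out.pos t σ]
        congr 2
        omega

lemma Rred (a : Fin d → ℤ) (ha : ∀ i, 0 ≤ a i ∧ a i < p) (s : ℕ)
    (ih : ∀ t, t ≤ s → ∀ m K : Fin d → ℤ, (∀ i, 0 ≤ m i) →
      ‖H.S t m K a‖ ≤ Pw p t * ‖H.g m‖)
    (m K : Fin d → ℤ) (hm : ∀ i, 0 ≤ m i) :
    ‖H.S (s+1) m K a - (H.A m / H.A 0) * H.S (s+1) 0 (K - (p:ℤ)^(s+1) • m) a‖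
      ≤ Pw p (s+1) * ‖H.g m‖ := by
  have hrec : ∀ t, t ≤ s + 1 →
      ‖H.S (s+1) m K a - H.Th a (K - (p:ℤ)^(s+1) • m) m s t‖ ≤ Pw p (s+1) * ‖H.g m‖ := by
    intro t
    induction t with
    | zero => intro _; exact H.step1 a ha s m K hm
    | succ t iht =>
      intro h
      have h1 := iht (by omega)
      have h2 := H.step2 a s ih m (K - (p:ℤ)^(s+1) • m) hm t (by omega)
      have e : H.S (s+1) m K a - H.Th a (K - (p:ℤ)^(s+1) • m) m s (t+1)
          = (H.S (s+1) m K a - H.Th a (K - (p:ℤ)^(s+1) • m) m s t)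
            + (H.Th a (K - (p:ℤ)^(s+1) • m) m s t
                - H.Th a (K - (p:ℤ)^(s+1) • m) m s (t+1)) := by ring
      rw [e]
      exact le_trans (Padic.nonarchimedean _ _) (max_le h1 h2)
  have h := hrec (s+1) le_rfl
  rwa [H.Th_last] at h

lemma Zlem (a : Fin d → ℤ) (ha : ∀ i, 0 ≤ a i ∧ a i < p) (s : ℕ)
    (hR : ∀ m K : Fin d → ℤ, (∀ i, 0 ≤ m i) →
      ‖H.S (s+1) m K a - (H.A m / H.A 0) * H.S (s+1) 0 (K - (p:ℤ)^(s+1) • m) a‖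
        ≤ Pw p (s+1) * ‖H.g m‖) :
    ∀ K : Fin d → ℤ, ‖H.S (s+1) 0 K a‖ ≤ Pw p (s+1) := by
  have hpi : (0:ℤ) < (p:ℤ) := H.p_int_pos
  have hq : (0:ℤ) < (p:ℤ)^(s+1) := pow_pos hpi _
  have hPw : (0:ℝ) ≤ Pw p (s+1) := Pw_nonneg hp.out.pos _
  have main : ∀ N : ℕ, ∀ K : Fin d → ℤ, (∀ i, 0 ≤ K i) → (∑ i, K i).toNat ≤ N →
      ‖H.S (s+1) 0 K a‖ ≤ Pw p (s+1) := by
    intro N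
    induction N using Nat.strong_induction_on with
    | _ N ihN =>
    intro K hK hKN
    set M : Fin d → ℤ := fun i => K i / (p:ℤ)^(s+1) with hMdef
    have hM : ∀ i, 0 ≤ M i := fun i => Int.ediv_nonneg (hK i) hq.le
    have hpart := H.union_boxes (s+1) a K M hM
    have hsub : ∑ k ∈ Finset.Icc (0 : Fin d → ℤ) ((p:ℤ)^(s+1) • (M + 1) - 1), H.bt a K k
        = ∑ k ∈ Finset.Icc (0 : Fin d → ℤ) K, H.bt a K k := by
      symm
      apply Finset.sum_subset
      · intro k hk
        rw [Finset.mem_Icc] at hk ⊢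
        refine ⟨hk.1, ?_⟩
        intro i
        have h1 : k i ≤ K i := hk.2 i
        have h2 := Int.lt_ediv_add_one_mul_self (K i) hq
        simp only [Pi.sub_apply, Pi.smul_apply, Pi.add_apply, Pi.one_apply, smul_eq_mul]
        have h3 : (K i / (p:ℤ)^(s+1) + 1) * (p:ℤ)^(s+1) = (p:ℤ)^(s+1) * (M i + 1) := by
          rw [hMdef]; ring
        omega
      · intro k hk hnk
        rw [Finset.mem_Icc] at hk hnk
        have hk0 : (0 : Fin d → ℤ) ≤ k := hk.1
        have hkK : ¬ (k ≤ K) := fun h => hnk ⟨hk0, h⟩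
        rw [Pi.le_def] at hkK
        push_neg at hkK
        obtain ⟨i, hi⟩ := hkK
        exact H.bt_zero a K k ha (fun j => hk0 j) i hi
    have hzero := H.sum_bt_box_zero a K hK
    have h0mem : (0 : Fin d → ℤ) ∈ Finset.Icc (0 : Fin d → ℤ) M := by
      rw [Finset.mem_Icc]
      exact ⟨le_rfl, fun i => hM i⟩
    have hsum0 : H.S (s+1) 0 K a
        + ∑ m' ∈ (Finset.Icc (0 : Fin d → ℤ) M).erase 0, H.S (s+1) m' K a = 0 := by
      rw [Finset.add_sum_erase _ (fun m' => H.S (s+1) m' K a) h0mem, hpart, hsub, hzero]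
    have heq : H.S (s+1) 0 K a
        = - ∑ m' ∈ (Finset.Icc (0 : Fin d → ℤ) M).erase 0, H.S (s+1) m' K a :=
      eq_neg_of_add_eq_zero_left hsum0
    rw [heq, norm_neg]
    apply IsUltrametricDist.norm_sum_le_of_forall_le_of_nonneg hPw
    intro m' hm'
    have hm'0 : m' ≠ 0 := (Finset.mem_erase.mp hm').1
    have hm'M := (Finset.mem_erase.mp hm').2
    rw [Finset.mem_Icc] at hm'M
    have hm'nn : ∀ i, 0 ≤ m' i := fun i => hm'M.1 i
    have hK'' : ∀ i, 0 ≤ (K - (p:ℤ)^(s+1) • m') i := by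
      intro i
      have h1 : m' i ≤ M i := hm'M.2 i
      have h2 : (p:ℤ)^(s+1) * M i ≤ K i := by
        have := Int.ediv_mul_le (K i) hq.ne'
        rw [hMdef]
        simpa [mul_comm] using this
      have h3 : (p:ℤ)^(s+1) * m' i ≤ (p:ℤ)^(s+1) * M i :=
        mul_le_mul_of_nonneg_left h1 hq.le
      simp only [Pi.sub_apply, Pi.smul_apply, smul_eq_mul]
      linarith
    have hlt : ∑ i, (K - (p:ℤ)^(s+1) • m') i < ∑ i, K i := by
      apply Finset.sum_lt_sum
      · intro i _
        have := mul_nonneg hq.le (hm'nn i)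
        simp only [Pi.sub_apply, Pi.smul_apply, smul_eq_mul]
        linarith
      · obtain ⟨i0, hi0⟩ := Function.ne_iff.mp hm'0
        refine ⟨i0, Finset.mem_univ _, ?_⟩
        have h1 : (1:ℤ) ≤ m' i0 := by
          have := hm'nn i0
          have : m' i0 ≠ 0 := by simpa using hi0
          omega
        have h2 : (p:ℤ)^(s+1) ≤ (p:ℤ)^(s+1) * m' i0 := le_mul_of_one_le_right hq.le h1
        simp only [Pi.sub_apply, Pi.smul_apply, smul_eq_mul]
        linarith
    have hnn'' : (0:ℤ) ≤ ∑ i, (K - (p:ℤ)^(s+1) • m') i :=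
      Finset.sum_nonneg (fun i _ => hK'' i)
    have hposK : (0:ℤ) < ∑ i, K i := lt_of_le_of_lt hnn'' hlt
    have htn : (∑ i, (K - (p:ℤ)^(s+1) • m') i).toNat < N := by
      have := (Int.toNat_lt_toNat hposK).mpr hlt
      omega
    have hZ'' := ihN _ htn (K - (p:ℤ)^(s+1) • m') hK'' le_rfl
    have hRm := hR m' K hm'nn
    have hsplit : H.S (s+1) m' K a
        = (H.S (s+1) m' K a - (H.A m' / H.A 0) * H.S (s+1) 0 (K - (p:ℤ)^(s+1) • m') a)
          + (H.A m' / H.A 0) * H.S (s+1) 0 (K - (p:ℤ)^(s+1) • m') a := by ring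
    rw [hsplit]
    refine le_trans (Padic.nonarchimedean _ _) (max_le ?_ ?_)
    · exact le_trans hRm (mul_le_of_le_one_right hPw (H.normg_le_one m' hm'nn))
    · rw [norm_mul, norm_div, H.h1, div_one]
      calc ‖H.A m'‖ * ‖H.S (s+1) 0 (K - (p:ℤ)^(s+1) • m') a‖
          ≤ 1 * Pw p (s+1) :=
            mul_le_mul (H.normA_le_one _) hZ'' (norm_nonneg _) zero_le_one
      _ = Pw p (s+1) := one_mul _
  intro K
  by_cases hneg : ∃ i, K i < 0
  · have h0 : H.S (s+1) 0 K a = 0 := by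
      rw [H.S_eq]
      apply Finset.sum_eq_zero
      intro r hr
      have hrb := H.mem_box_iff (s+1) r hr
      obtain ⟨i, hi⟩ := hneg
      have hk0 : ∀ j, 0 ≤ ((p:ℤ)^(s+1) • (0 : Fin d → ℤ) + r) j := by
        intro j
        have := (hrb j).1
        simp only [Pi.add_apply, Pi.smul_apply, Pi.zero_apply, smul_eq_mul, mul_zero, zero_add]
        exact this
      refine H.bt_zero a K _ ha hk0 i ?_
      have := (hrb i).1
      simp only [Pi.add_apply, Pi.smul_apply, Pi.zero_apply, smul_eq_mul, mul_zero, zero_add]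
      omega
    rw [h0, norm_zero]
    exact hPw
  · push_neg at hneg
    exact main (∑ i, K i).toNat K (fun i => hneg i) le_rfl

theorem keyP (a : Fin d → ℤ) (ha : ∀ i, 0 ≤ a i ∧ a i < p) :
    ∀ s : ℕ, ∀ m K : Fin d → ℤ, (∀ i, 0 ≤ m i) →
      ‖H.S s m K a‖ ≤ Pw p s * ‖H.g m‖ := by
  intro n
  induction n using Nat.strong_induction_on with
  | _ n ihn =>
    match n with
    | 0 => exact fun m K hm => H.base a ha m K hm
    | Nat.succ s =>
      have ih : ∀ t, t ≤ s → ∀ m K : Fin d → ℤ, (∀ i, 0 ≤ m i) →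
          ‖H.S t m K a‖ ≤ Pw p t * ‖H.g m‖ := by
        intro t ht
        exact ihn t (by omega)
      have hR := H.Rred a ha s ih
      have hZ := H.Zlem a ha s hR
      intro m K hm
      have hs : H.S (s+1) m K a
          = (H.S (s+1) m K a - (H.A m / H.A 0) * H.S (s+1) 0 (K - (p:ℤ)^(s+1) • m) a)
            + (H.A m / H.A 0) * H.S (s+1) 0 (K - (p:ℤ)^(s+1) • m) a := by ring
      rw [hs]
      refine le_trans (Padic.nonarchimedean _ _) (max_le ?_ ?_)
      · exact hR m K hm
      · rw [norm_mul, norm_div, H.h1, div_one]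
        calc ‖H.A m‖ * ‖H.S (s+1) 0 (K - (p:ℤ)^(s+1) • m) a‖
            ≤ ‖H.g m‖ * Pw p (s+1) :=
              mul_le_mul (H.normA_le_g m hm) (hZ _) (norm_nonneg _) (norm_nonneg _)
        _ = Pw p (s+1) * ‖H.g m‖ := mul_comm _ _

end Hyp

end Dwork8

/-- Multivariate generalisation of Dwork's formal congruence theorem (Theorem 1 of
Krattenthaler–Rivoal). `A, g : ℤ_{≥0}^d → ℤ_p \ {0}` (viewed inside `ℚ_p`), with `A`
extended by `0` to vectors having a negative coordinate. -/
theorem stmt8 (p : ℕ) [Fact p.Prime] (d : ℕ) (hd : 0 < d)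
    (A g : (Fin d → ℤ) → ℚ_[p])
    (hAneg : ∀ n, (∃ i, n i < 0) → A n = 0)
    (hA : ∀ n : Fin d → ℤ, (∀ i, 0 ≤ n i) → A n ≠ 0 ∧ ‖A n‖ ≤ 1)
    (hg : ∀ n : Fin d → ℤ, (∀ i, 0 ≤ n i) → g n ≠ 0 ∧ ‖g n‖ ≤ 1)
    (h1 : ‖A 0‖ = 1)
    (h2 : ∀ n : Fin d → ℤ, (∀ i, 0 ≤ n i) → ‖A n / g n‖ ≤ 1)
    (h3 : ∀ (s : ℕ) (v u n : Fin d → ℤ),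
      (∀ i, 0 ≤ v i ∧ v i < p) → (∀ i, 0 ≤ u i ∧ u i < (p : ℤ) ^ s) → (∀ i, 0 ≤ n i) →
      ‖(A (v + (p : ℤ) • u + (p : ℤ) ^ (s + 1) • n) / A (v + (p : ℤ) • u) -
          A (u + (p : ℤ) ^ s • n) / A u) * g (v + (p : ℤ) • u) / g n‖
        ≤ (p : ℝ) ^ (-(s + 1 : ℤ))) :
    ∀ (s : ℕ) (m K a : Fin d → ℤ), (∀ i, 0 ≤ m i) → (∀ i, 0 ≤ a i ∧ a i < p) →
      ‖(∑ k ∈ Finset.Icc ((p : ℤ) ^ s • m) ((p : ℤ) ^ s • (m + 1) - 1),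
          (A (a + (p : ℤ) • k) * A (K - k) - A (a + (p : ℤ) • (K - k)) * A k)) / g m‖
        ≤ (p : ℝ) ^ (-(s + 1 : ℤ)) := by
  intro s m K a hm ha
  let H : Dwork8.Hyp p d := ⟨A, g, hAneg, hA, hg, h1, h2, h3⟩
  have hP := H.keyP a ha s m K hm
  have hgm : 0 < ‖g m‖ := norm_pos_iff.mpr (hg m hm).1
  rw [norm_div, div_le_iff₀ hgm]
  exact hP
end

section
/- Let p be a prime, d ≥ 1, s ≥ 0 an integer, and m, L, N^{(1)},...,N^{(k)} ∈ Z^d nonnegative integer vectors with L ≤ N^{(1)} componentwise. Define B_N(m) = ∏_{j=1}^k (∑_i N_i^{(j)} m_i)!/∏_i (m_i!)^{N_i^{(j)}}. Then B_N(m)·( H_{p^s·∑_i L_i m_i} − H_{p^{s+1}·∑_i L_i ⌊m_i/p⌋} ) ∈ p^{−s}·Z_p, where H_n is the n-th harmonic number with H_0 = 0. -/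
open Finset

/-- floor superadditivity, weighted: `∑ wᵢ ⌊mᵢ/q⌋ ≤ ⌊∑ wᵢ mᵢ / q⌋`. -/
lemma aux_sum_mul_div_le {d : ℕ} (w m : Fin d → ℕ) (q : ℕ) (hq : 0 < q) :
    ∑ i, w i * (m i / q) ≤ (∑ i, w i * m i) / q := by
  rw [Nat.le_div_iff_mul_le hq, Finset.sum_mul]
  refine Finset.sum_le_sum fun i _ => ?_
  rw [mul_assoc]
  exact Nat.mul_le_mul_left _ (Nat.div_mul_le_self _ _)

/-- `∏ᵢ (mᵢ!)^{wᵢ} ∣ (∑ᵢ wᵢ mᵢ)!`. -/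
lemma aux_prod_pow_factorial_dvd {d : ℕ} (w m : Fin d → ℕ) :
    (∏ i, (m i).factorial ^ (w i)) ∣ (∑ i, w i * m i).factorial := by
  have h := Nat.prod_factorial_dvd_factorial_sum
    ((Finset.univ : Finset (Fin d)).sigma fun i => Finset.range (w i)) (fun x => m x.1)
  rw [Finset.prod_sigma, Finset.sum_sigma] at h
  simpa [Finset.prod_const, Finset.sum_const, Nat.smul_one_eq_cast, mul_comm] using h

/-- Core counting: if `p^r ∣ c`, `p·S' < c ≤ S`, then `∑ Nᵢ⌊mᵢ/pʳ⌋ + 1 ≤ ⌊∑ Nᵢmᵢ/pʳ⌋`. -/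
lemma aux_core {d : ℕ} (p : ℕ) (hp : 1 < p) (L Nw m : Fin d → ℕ) (hL : ∀ i, L i ≤ Nw i)
    {c r : ℕ} (hdvd : p ^ (r + 1) ∣ c)
    (hcle : c ≤ ∑ i, L i * m i) (hcgt : p * ∑ i, L i * (m i / p) < c) :
    ∑ i, Nw i * (m i / p ^ (r + 1)) + 1 ≤ (∑ i, Nw i * m i) / p ^ (r + 1) := by
  have hp0 : 0 < p := lt_trans one_pos hp
  have hpr : 0 < p ^ r := Nat.pow_pos hp0
  have hpr1 : 0 < p ^ (r + 1) := Nat.pow_pos hp0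
  obtain ⟨e, rfl⟩ := hdvd
  -- step 1 : ∑ L i * (m i / p^(r+1)) ≤ S' / p^r
  have hdivdiv : ∀ x : ℕ, x / p ^ (r + 1) = (x / p) / p ^ r := by
    intro x
    rw [Nat.div_div_eq_div_mul, pow_succ']
  have step1 : ∑ i, L i * (m i / p ^ (r + 1)) ≤ (∑ i, L i * (m i / p)) / p ^ r := by
    calc ∑ i, L i * (m i / p ^ (r + 1)) = ∑ i, L i * ((m i / p) / p ^ r) := by
          simp only [hdivdiv]
      _ ≤ _ := aux_sum_mul_div_le _ _ _ hpr
  -- step 2 : S' / p^r < e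
  have step2 : (∑ i, L i * (m i / p)) / p ^ r < e := by
    rw [Nat.div_lt_iff_lt_mul hpr]
    have : p * ((∑ i, L i * (m i / p))) < p * (e * p ^ r) := by
      calc p * ∑ i, L i * (m i / p) < p ^ (r + 1) * e := hcgt
        _ = p * (e * p ^ r) := by ring
    exact lt_of_mul_lt_mul_left this (Nat.zero_le p)
  -- step 3 : e ≤ S / p^(r+1)
  have step3 : e ≤ (∑ i, L i * m i) / p ^ (r + 1) := by
    rw [Nat.le_div_iff_mul_le hpr1]
    rw [mul_comm] at hcle
    exact hcle
  -- combine for L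
  have hLpart : ∑ i, L i * (m i / p ^ (r + 1)) + 1 ≤ (∑ i, L i * m i) / p ^ (r + 1) :=
    le_trans (Nat.add_le_add_right step1 1) (le_trans step2 step3)
  -- add the (Nw - L) part
  have hsplitN : ∀ (f : Fin d → ℕ), ∑ i, Nw i * f i = ∑ i, L i * f i + ∑ i, (Nw i - L i) * f i := by
    intro f
    rw [← Finset.sum_add_distrib]
    refine Finset.sum_congr rfl fun i _ => ?_
    rw [← Nat.add_mul, Nat.add_sub_cancel' (hL i)]
  rw [hsplitN fun i => m i / p ^ (r + 1), hsplitN m]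
  calc ∑ i, L i * (m i / p ^ (r + 1)) + ∑ i, (Nw i - L i) * (m i / p ^ (r + 1)) + 1
      = (∑ i, L i * (m i / p ^ (r + 1)) + 1) + ∑ i, (Nw i - L i) * (m i / p ^ (r + 1)) := by ring
    _ ≤ (∑ i, L i * m i) / p ^ (r + 1) + (∑ i, (Nw i - L i) * m i) / p ^ (r + 1) :=
        Nat.add_le_add hLpart (aux_sum_mul_div_le _ _ _ hpr1)
    _ ≤ _ := Nat.add_div_le_add_div _ _ _

/-- If the floor-count inequality is strict for `r = 1, …, e`, then `p^e · ∏ (mᵢ!)^{Nᵢ} ∣ (∑ Nᵢmᵢ)!`. -/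
lemma aux_pow_dvd {d : ℕ} (p : ℕ) [hp : Fact p.Prime] (Nw m : Fin d → ℕ) (e : ℕ)
    (key : ∀ r, 1 ≤ r → r ≤ e → ∑ i, Nw i * (m i / p ^ r) + 1 ≤ (∑ i, Nw i * m i) / p ^ r) :
    p ^ e * (∏ i, (m i).factorial ^ (Nw i)) ∣ (∑ i, Nw i * m i).factorial := by
  set M := ∑ i, Nw i * m i with hM
  set D := ∏ i, (m i).factorial ^ (Nw i) with hD
  have hDdvd : D ∣ M.factorial := aux_prod_pow_factorial_dvd Nw m
  have hD0 : D ≠ 0 := by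
    positivity
  have hM0 : M.factorial ≠ 0 := M.factorial_pos.ne'
  -- choose a common Legendre bound
  set b : ℕ := e + 1 + M + ∑ i, m i with hb
  have hlogM : Nat.log p M < b := lt_of_le_of_lt (Nat.log_le_self _ _) (by omega)
  have hlogm : ∀ i : Fin d, Nat.log p (m i) < b := by
    intro i
    have h1 : m i ≤ ∑ i, m i := Finset.single_le_sum (fun i _ => Nat.zero_le (m i)) (Finset.mem_univ i)
    exact lt_of_le_of_lt (le_trans (Nat.log_le_self _ _) h1) (by omega)
  -- valuation of D
  have hvD : padicValNat p D = ∑ r ∈ Finset.Ico 1 b, ∑ i, Nw i * (m i / p ^ r) := by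
    have h1 : D.factorization = ∑ i, (Nw i) • ((m i).factorial.factorization) := by
      rw [hD, Nat.factorization_prod (fun i _ => pow_ne_zero _ (m i).factorial_pos.ne')]
      exact Finset.sum_congr rfl fun i _ => Nat.factorization_pow _ _
    have h2 : D.factorization p = ∑ i, Nw i * ((m i).factorial.factorization p) := by
      rw [h1, Finset.sum_apply']
      rfl
    rw [← Nat.factorization_def D hp.out, h2]
    rw [Finset.sum_comm]
    refine Finset.sum_congr rfl fun i _ => ?_
    rw [Nat.factorization_def _ hp.out, padicValNat_factorial (hlogm i), Finset.mul_sum]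
  have hvM : padicValNat p M.factorial = ∑ r ∈ Finset.Ico 1 b, M / p ^ r :=
    padicValNat_factorial hlogM
  -- the key inequality on valuations
  have hineq : e + padicValNat p D ≤ padicValNat p M.factorial := by
    rw [hvD, hvM]
    have hge : ∑ r ∈ Finset.Ico 1 b, ((if r ≤ e then 1 else 0) + ∑ i, Nw i * (m i / p ^ r))
        ≤ ∑ r ∈ Finset.Ico 1 b, M / p ^ r := by
      refine Finset.sum_le_sum fun r hr => ?_
      rw [Finset.mem_Ico] at hr
      by_cases hre : r ≤ e
      · simpa [hre, add_comm] using key r hr.1 hre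
      · simpa [hre] using aux_sum_mul_div_le Nw m (p ^ r)
          (Nat.pow_pos hp.out.pos)
    have hcount : (∑ x ∈ Finset.Ico 1 b, if x ≤ e then 1 else 0) = e := by
      rw [← Finset.card_filter]
      have hfilter : (Finset.Ico 1 b).filter (· ≤ e) = Finset.Ico 1 (e + 1) := by
        ext r
        simp only [Finset.mem_filter, Finset.mem_Ico]
        omega
      rw [hfilter, Nat.card_Ico]
      omega
    rw [Finset.sum_add_distrib, hcount] at hge
    exact hge
  -- conclude
  have hdvd2 : p ^ e ∣ M.factorial / D := by
    have hne : M.factorial / D ≠ 0 := by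
      have := Nat.div_pos (Nat.le_of_dvd M.factorial_pos hDdvd) (Nat.pos_of_ne_zero hD0)
      omega
    rw [Nat.Prime.pow_dvd_iff_le_factorization hp.out hne, Nat.factorization_def _ hp.out,
      padicValNat.div_of_dvd hDdvd]
    have hvDM : padicValNat p D ≤ padicValNat p M.factorial := by omega
    omega
  calc p ^ e * D ∣ (M.factorial / D) * D := mul_dvd_mul_right (by exact hdvd2) D
    _ = M.factorial := Nat.div_mul_cancel hDdvd

lemma aux_term_norm (p : ℕ) [hp : Fact p.Prime] (s a b : ℕ) (ha : a ≠ 0) (hb : b ≠ 0)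
    (h : padicValNat p a ≤ s + padicValNat p b) :
    padicNorm p ((b : ℚ) / (a : ℚ)) ≤ (p : ℚ) ^ s := by
  have hp1 : 1 < (p : ℚ) := by exact_mod_cast hp.out.one_lt
  have hp0 : (p : ℚ) ≠ 0 := ne_of_gt (lt_trans zero_lt_one hp1)
  rw [padicNorm.div]
  have hna : padicNorm p (a : ℚ) = (p : ℚ) ^ (-(padicValNat p a : ℤ)) := by
    rw [padicNorm.eq_zpow_of_nonzero (by exact_mod_cast ha), padicValRat.of_nat]
  have hnb : padicNorm p (b : ℚ) = (p : ℚ) ^ (-(padicValNat p b : ℤ)) := by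
    rw [padicNorm.eq_zpow_of_nonzero (by exact_mod_cast hb), padicValRat.of_nat]
  rw [hna, hnb, ← zpow_sub₀ hp0, ← zpow_natCast (p : ℚ) s]
  refine zpow_le_zpow_right₀ hp1.le ?_
  omega

/-- `B_N(m) = ∏ⱼ (∑ᵢ Nᵢ⁽ʲ⁾ mᵢ)! / ∏ᵢ (mᵢ!)^{Nᵢ⁽ʲ⁾}`. -/
def BfamFun {d k : ℕ} (N : Fin k → Fin d → ℕ) (m : Fin d → ℕ) : ℚ :=
  ∏ j, (((∑ i, N j i * m i).factorial : ℚ) / ∏ i, ((m i).factorial : ℚ) ^ (N j i))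

/-- For `L ≤ N⁽¹⁾`: `B_N(m)·(H_{pˢ L·m} − H_{p^{s+1} L·⌊m/p⌋}) ∈ p⁻ˢ ℤ_p`. -/
theorem stmt14 (p : ℕ) [Fact p.Prime] (d k : ℕ) (hd : 0 < d) (hk : 0 < k) (s : ℕ)
    (N : Fin k → Fin d → ℕ) (L m : Fin d → ℕ) (hL : ∀ i, L i ≤ N ⟨0, hk⟩ i) :
    ‖((BfamFun N m *
        (harmonic' (p ^ s * ∑ i, L i * m i) -
          harmonic' (p ^ (s + 1) * ∑ i, L i * (m i / p))) : ℚ) : ℚ_[p])‖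
      ≤ (p : ℝ) ^ (s : ℤ) := by
  have hp : p.Prime := Fact.out
  have hp1 : 1 < p := hp.one_lt
  set S := ∑ i, L i * m i with hS
  set S' := ∑ i, L i * (m i / p) with hS'
  have hpS' : p * S' ≤ S := by
    rw [hS', hS, Finset.mul_sum]
    refine Finset.sum_le_sum fun i _ => ?_
    calc p * (L i * (m i / p)) = L i * (m i / p * p) := by ring
      _ ≤ L i * m i := Nat.mul_le_mul_left _ (Nat.div_mul_le_self _ _)
  have hle : p ^ (s + 1) * S' ≤ p ^ s * S := by
    rw [pow_succ, mul_assoc]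
    exact Nat.mul_le_mul_left _ hpS'
  -- B as a natural number
  set bnat : ℕ := ∏ j, ((∑ i, N j i * m i).factorial / ∏ i, (m i).factorial ^ (N j i))
    with hbnat
  have hfac : ∀ j, (∏ i, (m i).factorial ^ (N j i)) ∣ (∑ i, N j i * m i).factorial :=
    fun j => aux_prod_pow_factorial_dvd _ _
  have hDpos : ∀ j, 0 < ∏ i, (m i).factorial ^ (N j i) := by
    intro j; positivity
  have hbpos : 0 < bnat :=
    Finset.prod_pos fun j _ =>
      Nat.div_pos (Nat.le_of_dvd (Nat.factorial_pos _) (hfac j)) (hDpos j)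
  have hBcast : BfamFun N m = (bnat : ℚ) := by
    rw [BfamFun, hbnat, Nat.cast_prod]
    refine Finset.prod_congr rfl fun j _ => ?_
    rw [Nat.cast_div (hfac j) (by exact_mod_cast (hDpos j).ne')]
    push_cast
    ring
  -- rewrite the expression as a sum over an interval
  have hexpr : BfamFun N m *
      (harmonic' (p ^ s * S) - harmonic' (p ^ (s + 1) * S')) =
      ∑ j ∈ Finset.Ico (p ^ (s + 1) * S') (p ^ s * S), (bnat : ℚ) / ((j + 1 : ℕ) : ℚ) := by
    rw [hBcast, harmonic', harmonic', ← Finset.sum_Ico_eq_sub _ hle, Finset.mul_sum]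
    refine Finset.sum_congr rfl fun j _ => ?_
    push_cast
    ring
  rw [hexpr, Padic.eq_padicNorm]
  -- per-term valuation bound
  have hterm : ∀ j ∈ Finset.Ico (p ^ (s + 1) * S') (p ^ s * S),
      padicNorm p ((bnat : ℚ) / ((j + 1 : ℕ) : ℚ)) ≤ (p : ℚ) ^ s := by
    intro j hj
    rw [Finset.mem_Ico] at hj
    set a := j + 1 with haj
    have ha0 : a ≠ 0 := Nat.succ_ne_zero j
    have hagt : p ^ (s + 1) * S' < a := Nat.lt_succ_of_le hj.1
    have hale : a ≤ p ^ s * S := hj.2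
    refine aux_term_norm p s a bnat ha0 hbpos.ne' ?_
    set t := padicValNat p a with ht
    by_cases hts : t ≤ s
    · omega
    · -- the nontrivial case
      set e := t - s with he
      have hst : s + e = t := by omega
      have hpsa : p ^ s * p ^ e ∣ a := by
        rw [← pow_add, hst]
        exact pow_padicValNat_dvd
      obtain ⟨c, hc⟩ : p ^ s ∣ a := (dvd_mul_right _ _).trans hpsa
      have hec : p ^ e ∣ c := by
        rw [hc] at hpsa
        exact (mul_dvd_mul_iff_left (pow_ne_zero s hp.pos.ne')).mp hpsa
      have hps0 : 0 < p ^ s := Nat.pow_pos hp.pos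
      have hcle : c ≤ S := by
        rw [hc] at hale
        exact Nat.le_of_mul_le_mul_left hale hps0
      have hcgt : p * S' < c := by
        rw [hc, pow_succ, mul_assoc] at hagt
        exact lt_of_mul_lt_mul_left hagt (Nat.zero_le _)
      have key : ∀ r, 1 ≤ r → r ≤ e →
          ∑ i, N ⟨0, hk⟩ i * (m i / p ^ r) + 1 ≤ (∑ i, N ⟨0, hk⟩ i * m i) / p ^ r := by
        intro r hr1 hre
        obtain ⟨r', rfl⟩ : ∃ r', r = r' + 1 := ⟨r - 1, by omega⟩
        have hrc : p ^ (r' + 1) ∣ c := (pow_dvd_pow p hre).trans hec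
        exact aux_core p hp1 L (N ⟨0, hk⟩) m hL hrc hcle hcgt
      have hdvd := aux_pow_dvd p (N ⟨0, hk⟩) m e key
      have hdvd0 : p ^ e ∣ (∑ i, N ⟨0, hk⟩ i * m i).factorial /
          ∏ i, (m i).factorial ^ (N ⟨0, hk⟩ i) := by
        rw [Nat.dvd_div_iff_mul_dvd (hfac _), mul_comm]
        exact hdvd
      have hdvdb : p ^ e ∣ bnat :=
        hdvd0.trans (Finset.dvd_prod_of_mem _ (Finset.mem_univ (⟨0, hk⟩ : Fin k)))
      have := (Nat.Prime.pow_dvd_iff_le_factorization hp hbpos.ne').mp hdvdb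
      rw [Nat.factorization_def _ hp] at this
      omega
  have hnorm : padicNorm p (∑ j ∈ Finset.Ico (p ^ (s + 1) * S') (p ^ s * S),
      (bnat : ℚ) / ((j + 1 : ℕ) : ℚ)) ≤ (p : ℚ) ^ s :=
    padicNorm.sum_le' hterm (by positivity)
  calc ((padicNorm p _ : ℚ) : ℝ) ≤ (((p : ℚ) ^ s : ℚ) : ℝ) := by exact_mod_cast hnorm
    _ = (p : ℝ) ^ (s : ℤ) := by push_cast [zpow_natCast]; ring
end

section
/- Let p be a prime, d ≥ 1, k ≥ 1, s ≥ 0, and N^{(1)},...,N^{(k)} ∈ Z^d nonnegative integer vectors. Let v, u, n ∈ Z_{≥0}^d with 0 ≤ v_i < p and 0 ≤ u_i < p^s for all i. Define B_N(m) = ∏_{j=1}^k (∑_i N_i^{(j)} m_i)!/∏_i (m_i!)^{N_i^{(j)}}. Then B_N(v + p·u + p^{s+1}·n)/B_N(v + p·u) − B_N(u + p^s·n)/B_N(u) ∈ p^{s+1}·(B_N(n)/B_N(v + p·u))·Z_p. -/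
open Finset Nat

namespace DworkAux

set_option linter.unusedSectionVars false
set_option maxHeartbeats 1000000

variable {p : ℕ} [hp : Fact p.Prime]

/-- product of integers in `[1,a]` not divisible by `p`. -/
def Pp (p a : ℕ) : ℕ := ∏ x ∈ Finset.Icc 1 a, if p ∣ x then 1 else x

lemma Pp_zero : Pp p 0 = 1 := by simp [Pp]

lemma Pp_succ (a : ℕ) : Pp p (a + 1) = Pp p a * (if p ∣ (a + 1) then 1 else (a + 1)) := by
  rw [Pp, Pp, ← Finset.prod_Icc_succ_top (by omega)]

lemma not_dvd_Pp (a : ℕ) : ¬ p ∣ Pp p a := by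
  induction a with
  | zero => simpa [Pp_zero] using hp.out.one_lt.ne'
  | succ a ih =>
    rw [Pp_succ]
    by_cases h : p ∣ (a + 1)
    · simpa [h] using ih
    · rw [if_neg h]
      intro hdvd
      rcases hp.out.dvd_mul.mp hdvd with h1 | h2
      exacts [ih h1, h h2]

lemma Pp_pos (a : ℕ) : 0 < Pp p a := by
  rcases Nat.eq_zero_or_pos (Pp p a) with h | h
  · exact absurd (h ▸ dvd_zero p) (not_dvd_Pp a)
  · exact h

lemma factorial_pp (a : ℕ) : a ! = p ^ (a / p) * ((a / p)! * Pp p a) := by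
  induction a with
  | zero => simp [Pp_zero]
  | succ a ih =>
    have hppos := hp.out.pos
    rw [Nat.factorial_succ, ih, Pp_succ, Nat.succ_div]
    by_cases h : p ∣ (a + 1)
    · have ha1 : a + 1 = p * ((a + 1) / p) := (Nat.mul_div_cancel' h).symm
      have hd : (a + 1) / p = a / p + 1 := by rw [Nat.succ_div, if_pos h]
      rw [if_pos h, if_pos h]
      calc (a + 1) * (p ^ (a / p) * ((a / p)! * Pp p a))
          = (p * ((a + 1) / p)) * (p ^ (a / p) * ((a / p)! * Pp p a)) := by rw [← ha1]
        _ = p ^ (a / p + 1) * (((a + 1) / p) * (a / p)! * (Pp p a * 1)) := by ring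
        _ = p ^ (a / p + 1) * ((a / p + 1)! * (Pp p a * 1)) := by
            rw [hd, Nat.factorial_succ]
    · rw [if_neg h, if_neg h]
      simp only [Nat.add_zero]
      ring

lemma zmod_Pp {M : ℕ} (hM : p ∣ M) (a : ℕ) :
    ((Pp p (a + M) : ZMod M)) = (Pp p a : ZMod M) * (Pp p M : ZMod M) := by
  induction a with
  | zero => simp [Pp_zero]
  | succ a ih =>
    have e : a + 1 + M = (a + M) + 1 := by ring
    rw [e, Pp_succ, Pp_succ, Nat.cast_mul, Nat.cast_mul, ih]
    have hdd : p ∣ (a + M + 1) ↔ p ∣ (a + 1) := by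
      constructor <;> intro hh
      · have := (Nat.dvd_sub hh hM)
        simpa [show a + M + 1 - M = a + 1 by omega] using this
      · exact (by omega : a + M + 1 = (a+1) + M) ▸ Nat.dvd_add hh hM
    by_cases h : p ∣ (a + 1)
    · rw [if_pos h, if_pos (hdd.mpr h)]; push_cast; ring
    · rw [if_neg h, if_neg (fun hc => h (hdd.mp hc))]
      push_cast
      rw [ZMod.natCast_self]
      ring

lemma zmod_Pp_mul {M : ℕ} (hM : p ∣ M) (a b : ℕ) :
    ((Pp p (a + M * b) : ZMod M)) = (Pp p a : ZMod M) * (Pp p M : ZMod M) ^ b := by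
  induction b with
  | zero => simp
  | succ b ih =>
    have e : a + M * (b + 1) = (a + M * b) + M := by ring
    rw [e, zmod_Pp hM, ih]; ring

lemma vf_eq (a : ℕ) : padicValNat p (a !) = a / p + padicValNat p ((a / p)!) := by
  conv_lhs => rw [← padicValNat_mul_div_factorial a]
  rw [padicValNat_factorial_mul]
  ring

lemma vf_pow_mul (s b : ℕ) :
    padicValNat p ((p ^ s * b)!) = (∑ r ∈ Finset.range s, p ^ r) * b + padicValNat p (b !) := by
  induction s with
  | zero => simp
  | succ s ih =>
    have e : p ^ (s + 1) * b = p * (p ^ s * b) := by ring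
    rw [e, padicValNat_factorial_mul, ih, Finset.sum_range_succ]
    ring

lemma vf_add_choose (a b : ℕ) :
    padicValNat p ((a + b)!) =
      padicValNat p ((a + b).choose a) + padicValNat p (a !) + padicValNat p (b !) := by
  have h := Nat.add_choose_mul_factorial_mul_factorial b a
  rw [add_comm b a] at h
  have hc : (a + b).choose a ≠ 0 := (Nat.choose_pos (Nat.le_add_right a b)).ne'
  rw [← h, padicValNat.mul (mul_ne_zero hc (factorial_ne_zero b)) (factorial_ne_zero a),
      padicValNat.mul hc (factorial_ne_zero b)]
  ring

lemma no_carry_choose_unit {s u m : ℕ} (hu : u < p ^ s) : ¬ p ∣ (u + p ^ s * m).choose u := by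
  induction s generalizing u m with
  | zero =>
    simp only [pow_zero, Nat.lt_one_iff] at hu
    subst hu
    simpa using hp.out.not_dvd_one
  | succ s ih =>
    intro hdvd
    have hlucas := Choose.choose_modEq_choose_mod_mul_choose_div
        (p := p) (n := u + p ^ (s+1) * m) (k := u)
    have hmod : (u + p ^ (s+1) * m) % p = u % p := by
      have e : u + p ^ (s+1) * m = u + p * (p ^ s * m) := by ring
      rw [e, Nat.add_mul_mod_self_left]
    have hdiv : (u + p ^ (s+1) * m) / p = u / p + p ^ s * m := by
      have e : u + p ^ (s+1) * m = u + p * (p ^ s * m) := by ring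
      rw [e, Nat.add_mul_div_left _ _ hp.out.pos]
    rw [hmod, hdiv, Nat.choose_self] at hlucas
    have hzero : ((u + p ^ (s+1) * m).choose u : ZMod p) = 0 := by
      exact_mod_cast (ZMod.natCast_eq_zero_iff _ p).mpr hdvd
    have : ((1 * ((u / p + p ^ s * m).choose (u / p)) : ℕ) : ZMod p) = 0 := by
      have := (ZMod.intCast_eq_intCast_iff _ _ _).mpr hlucas
      push_cast at this ⊢
      rw [← this]
      exact_mod_cast hzero
    rw [one_mul] at this
    have hdvd2 : p ∣ (u / p + p ^ s * m).choose (u / p) :=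
      (ZMod.natCast_eq_zero_iff _ p).mp this
    have hup : u / p < p ^ s := by
      rw [Nat.div_lt_iff_lt_mul hp.out.pos]
      calc u < p ^ (s+1) := hu
        _ = p ^ s * p := by ring
    exact ih hup hdvd2

lemma padicValNat_prod {ι : Type*} (S : Finset ι) (f : ι → ℕ) (hf : ∀ x ∈ S, f x ≠ 0) :
    padicValNat p (∏ x ∈ S, f x) = ∑ x ∈ S, padicValNat p (f x) := by
  induction S using Finset.cons_induction with
  | empty => simp
  | cons a S ha ih =>
    rw [Finset.prod_cons, Finset.sum_cons,
      padicValNat.mul (hf a (Finset.mem_cons_self a S))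
        (Finset.prod_ne_zero_iff.mpr fun x hx => hf x (Finset.mem_cons_of_mem hx)),
      ih fun x hx => hf x (Finset.mem_cons_of_mem hx)]

lemma le_padicValNat_of_dvd {a b : ℕ} (hb : b ≠ 0) (h : a ∣ b) (ha : a ≠ 0) :
    padicValNat p a ≤ padicValNat p b := by
  obtain ⟨c, rfl⟩ := h
  rw [padicValNat.mul ha (by rintro rfl; exact hb (mul_zero a))]
  omega

lemma val_lt_self {i : ℕ} (hi : i ≠ 0) : padicValNat p i < i := by
  have h1 : p ^ padicValNat p i ∣ i := pow_padicValNat_dvd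
  have h2 : p ^ padicValNat p i ≤ i := Nat.le_of_dvd (Nat.pos_of_ne_zero hi) h1
  calc padicValNat p i < p ^ padicValNat p i := Nat.lt_pow_self hp.out.one_lt
    _ ≤ i := h2

lemma dvd_pow_mul_choose (s b i : ℕ) (hi : i ≠ 0) :
    ((p : ℤ) ^ (s + 1)) ∣ (p : ℤ) ^ i * ((p ^ s * b).choose i : ℤ) := by
  set C := (p ^ s * b).choose i with hC
  rcases Nat.eq_zero_or_pos C with h0 | hpos
  · rw [h0]; simp
  have hle : i ≤ p ^ s * b := by
    by_contra hlt
    rw [Nat.choose_eq_zero_of_lt (by omega)] at hC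
    omega
  have hb1 : 1 ≤ p ^ s * b := le_trans (Nat.pos_of_ne_zero hi) hle
  have key : p ^ s * b * (p ^ s * b - 1).choose (i - 1) = C * i := by
    have := Nat.add_one_mul_choose_eq (p ^ s * b - 1) (i - 1)
    rw [show p ^ s * b - 1 + 1 = p ^ s * b by omega, show i - 1 + 1 = i by omega] at this
    rw [this, hC]
  have hdvd : p ^ s ∣ C * i := ⟨b * (p ^ s * b - 1).choose (i - 1), by rw [← key]; ring⟩
  have hval : s ≤ padicValNat p (C * i) := by
    rcases Nat.eq_zero_or_pos s with rfl | _
    · omega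
    · exact (padicValNat_dvd_iff_le (by positivity)).mp hdvd
  rw [padicValNat.mul hpos.ne' hi] at hval
  have hvi : padicValNat p i < i := val_lt_self hi
  have hfin : s + 1 ≤ i + padicValNat p C := by omega
  have hdvd2 : p ^ (s + 1) ∣ p ^ i * C := by
    have h1 : p ^ (s + 1) ∣ p ^ (i + padicValNat p C) := pow_dvd_pow p hfin
    have h2 : p ^ (i + padicValNat p C) ∣ p ^ i * C := by
      rw [pow_add]
      exact mul_dvd_mul_left _ pow_padicValNat_dvd
    exact h1.trans h2
  exact_mod_cast Int.natCast_dvd_natCast.mpr hdvd2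

lemma dvd_pow_mul_choose_sub (s t A B : ℕ) :
    ((p : ℤ) ^ (s + 1)) ∣
      (p : ℤ) ^ t * (((t + A + p ^ s * B).choose t : ℤ) - ((t + A).choose t : ℤ)) := by
  have hvdm := Nat.add_choose_eq (t + A) (p ^ s * B) t
  have hmem : ((t, 0) : ℕ × ℕ) ∈ Finset.HasAntidiagonal.antidiagonal t := by
    simp [Finset.HasAntidiagonal.mem_antidiagonal]
  have hsplit := Finset.sum_erase_add (Finset.HasAntidiagonal.antidiagonal t)
      (fun ij => (t + A).choose ij.1 * (p ^ s * B).choose ij.2) hmem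
  rw [← hsplit] at hvdm
  simp only [Nat.choose_zero_right, mul_one] at hvdm
  have hdiff : ((t + A + p ^ s * B).choose t : ℤ) - ((t + A).choose t : ℤ)
      = ∑ ij ∈ (Finset.HasAntidiagonal.antidiagonal t).erase (t, 0),
          ((t + A).choose ij.1 : ℤ) * ((p ^ s * B).choose ij.2 : ℤ) := by
    have := congrArg (fun x : ℕ => (x : ℤ)) hvdm
    push_cast at this
    rw [this]; ring
  rw [hdiff, Finset.mul_sum]
  apply Finset.dvd_sum
  intro ij hij
  have hij2 : ij.1 + ij.2 = t := Finset.HasAntidiagonal.mem_antidiagonal.mp (Finset.mem_of_mem_erase hij)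
  have hij0 : ij.2 ≠ 0 := by
    intro h0
    apply (Finset.mem_erase.mp hij).1
    have : ij.1 = t := by omega
    ext <;> simp [this, h0]
  calc ((p:ℤ) ^ (s+1)) ∣ (p:ℤ) ^ ij.2 * ((p ^ s * B).choose ij.2 : ℤ) :=
        dvd_pow_mul_choose s B ij.2 hij0
    _ ∣ (p:ℤ) ^ t * (((t + A).choose ij.1 : ℤ) * ((p ^ s * B).choose ij.2 : ℤ)) := by
        refine Dvd.intro_left ((p:ℤ) ^ ij.1 * ((t + A).choose ij.1 : ℤ)) ?_
        rw [← hij2, pow_add]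
        ring

lemma dvd_pow_mul_prod_sub {ι : Type*} (S : Finset ι) (t : ι → ℕ) (F G : ι → ℤ) (s : ℕ)
    (h : ∀ j ∈ S, ((p : ℤ) ^ (s + 1)) ∣ (p : ℤ) ^ (t j) * (F j - G j)) :
    ((p : ℤ) ^ (s + 1)) ∣ (p : ℤ) ^ (∑ j ∈ S, t j) * (∏ j ∈ S, F j - ∏ j ∈ S, G j) := by
  induction S using Finset.cons_induction with
  | empty => simp
  | cons a S ha ih =>
    rw [Finset.prod_cons, Finset.prod_cons, Finset.sum_cons]
    have key : (p : ℤ) ^ (t a + ∑ j ∈ S, t j) * (F a * ∏ j ∈ S, F j - G a * ∏ j ∈ S, G j)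
        = ((p:ℤ) ^ t a * F a) * ((p:ℤ) ^ (∑ j ∈ S, t j) * (∏ j ∈ S, F j - ∏ j ∈ S, G j))
          + ((p:ℤ) ^ t a * (F a - G a)) * ((p:ℤ) ^ (∑ j ∈ S, t j) * ∏ j ∈ S, G j) := by
      rw [pow_add]; ring
    rw [key]
    exact dvd_add
      (Dvd.dvd.mul_left (ih fun j hj => h j (Finset.mem_cons_of_mem hj)) _)
      (Dvd.dvd.mul_right (h a (Finset.mem_cons_self a S)) _)

lemma choose_core (t A C : ℕ) :
    (t + A + C)! * A ! * ((t + A).choose t) = (t + A)! * (A + C)! * ((t + A + C).choose t) := by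
  have h1 := Nat.add_choose_mul_factorial_mul_factorial A t
  rw [add_comm A t] at h1
  have h2 := Nat.add_choose_mul_factorial_mul_factorial (A + C) t
  rw [show A + C + t = t + A + C by ring] at h2
  apply Nat.eq_of_mul_eq_mul_left (Nat.factorial_pos t)
  calc t ! * ((t + A + C)! * A ! * ((t + A).choose t))
      = (t + A + C)! * ((t + A).choose t * A ! * t !) := by ring
    _ = (t + A + C)! * (t + A)! := by rw [h1]
    _ = ((t + A + C).choose t * (A + C)! * t !) * (t + A)! := by rw [h2]
    _ = t ! * ((t + A)! * (A + C)! * ((t + A + C).choose t)) := by ring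

lemma SC1Q (s a A B t : ℕ) (hdiv : a / p = t + A) :
    (((a + p ^ (s+1) * B)! : ℚ)) * ((A ! : ℚ) * (((t + A).choose t : ℕ) : ℚ) * ((Pp p a : ℕ) : ℚ))
    = ((a ! : ℚ)) * (((A + p ^ s * B)! : ℚ) * (((t + A + p ^ s * B).choose t : ℕ) : ℚ)
        * (((Pp p (a + p ^ (s+1) * B) : ℕ) : ℚ) * (p : ℚ) ^ (p ^ s * B))) := by
  have hdiv2 : (a + p ^ (s+1) * B) / p = t + A + p ^ s * B := by
    rw [show a + p ^ (s+1) * B = a + p * (p ^ s * B) by ring,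
      Nat.add_mul_div_left _ _ hp.out.pos, hdiv]
  have hcore := choose_core t A (p ^ s * B)
  have hcoreQ : ((t + A + p ^ s * B)! : ℚ) * (A ! : ℚ) * (((t + A).choose t : ℕ) : ℚ)
      = ((t + A)! : ℚ) * ((A + p ^ s * B)! : ℚ) * (((t + A + p ^ s * B).choose t : ℕ) : ℚ) := by
    exact_mod_cast congrArg (fun x : ℕ => (x : ℚ)) hcore
  have hf1 := factorial_pp (p := p) (a + p ^ (s+1) * B)
  have hf2 := factorial_pp (p := p) a
  rw [hdiv2] at hf1
  rw [hdiv] at hf2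
  have hf1Q : (((a + p ^ (s+1) * B)!) : ℚ)
      = (p:ℚ) ^ (t + A + p ^ s * B) * (((t + A + p ^ s * B)! : ℚ)
          * ((Pp p (a + p ^ (s+1) * B) : ℕ) : ℚ)) := by exact_mod_cast congrArg (fun x : ℕ => (x : ℚ)) hf1
  have hf2Q : ((a !) : ℚ) = (p:ℚ) ^ (t + A) * (((t + A)! : ℚ) * ((Pp p a : ℕ) : ℚ)) := by
    exact_mod_cast congrArg (fun x : ℕ => (x : ℚ)) hf2
  rw [hf1Q, hf2Q, show t + A + p ^ s * B = (t + A) + p ^ s * B by ring, pow_add]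
  linear_combination ((p:ℚ) ^ (t + A) * (p:ℚ) ^ (p ^ s * B) * ((Pp p (a + p ^ (s+1) * B) : ℕ) : ℚ)
      * ((Pp p a : ℕ) : ℚ)) * hcoreQ

lemma SC2Q (s w U m : ℕ) (hw : w < p) :
    (((w + p * U + p ^ (s+1) * m)! : ℚ)) * ((U ! : ℚ) * ((Pp p (w + p * U) : ℕ) : ℚ))
    = (((w + p * U)! : ℚ)) * (((U + p ^ s * m)! : ℚ)
        * (((Pp p (w + p * U + p ^ (s+1) * m) : ℕ) : ℚ) * (p : ℚ) ^ (p ^ s * m))) := by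
  have hd1 : (w + p * U) / p = U := by
    rw [Nat.add_mul_div_left _ _ hp.out.pos, Nat.div_eq_of_lt hw, Nat.zero_add]
  have hd2 : (w + p * U + p ^ (s+1) * m) / p = U + p ^ s * m := by
    rw [show w + p * U + p ^ (s+1) * m = w + p * (U + p ^ s * m) by ring,
      Nat.add_mul_div_left _ _ hp.out.pos, Nat.div_eq_of_lt hw, Nat.zero_add]
  have hf1 := factorial_pp (p := p) (w + p * U + p ^ (s+1) * m)
  have hf2 := factorial_pp (p := p) (w + p * U)
  rw [hd2] at hf1
  rw [hd1] at hf2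
  have hf1Q : (((w + p * U + p ^ (s+1) * m)!) : ℚ)
      = (p:ℚ) ^ (U + p ^ s * m) * (((U + p ^ s * m)! : ℚ)
          * ((Pp p (w + p * U + p ^ (s+1) * m) : ℕ) : ℚ)) := by
    exact_mod_cast congrArg (fun x : ℕ => (x : ℚ)) hf1
  have hf2Q : (((w + p * U)!) : ℚ) = (p:ℚ) ^ U * ((U ! : ℚ) * ((Pp p (w + p * U) : ℕ) : ℚ)) := by
    exact_mod_cast congrArg (fun x : ℕ => (x : ℚ)) hf2
  rw [hf1Q, hf2Q, pow_add]
  ring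

lemma prod_pow_factorial_dvd {d : ℕ} (c m : Fin d → ℕ) :
    (∏ i, ((m i)!) ^ (c i)) ∣ (∑ i, c i * m i)! := by
  have h := Nat.prod_factorial_dvd_factorial_sum
      (Finset.univ.sigma fun i : Fin d => Finset.range (c i)) (fun x => m x.1)
  rw [Finset.prod_sigma, Finset.sum_sigma] at h
  simpa [Finset.prod_const, Finset.sum_const, Nat.smul_one_eq_cast] using h

end DworkAux

namespace DworkAux
set_option linter.unusedSectionVars false
set_option maxHeartbeats 1000000

section Main

variable {d k : ℕ} (p : ℕ) (N : Fin k → Fin d → ℕ)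

/-- the linear forms -/
def LL (m : Fin d → ℕ) (j : Fin k) : ℕ := ∑ i, N j i * m i

/-- column sums -/
def SS (i : Fin d) : ℕ := ∑ j, N j i

/-- numerator of `B_N` -/
def Fn (m : Fin d → ℕ) : ℕ := ∏ j, (LL N m j)!

/-- denominator of `B_N` -/
def Fd (m : Fin d → ℕ) : ℕ := ∏ i, ((m i)!) ^ (SS N i)

variable [hp : Fact p.Prime]

lemma Fn_pos (m : Fin d → ℕ) : 0 < Fn N m :=
  Finset.prod_pos fun j _ => Nat.factorial_pos _

lemma Fd_pos (m : Fin d → ℕ) : 0 < Fd N m :=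
  Finset.prod_pos fun i _ => pow_pos (Nat.factorial_pos _) _

lemma gq_eq (m : Fin d → ℕ) : BfamFun N m = (Fn N m : ℚ) / (Fd N m : ℚ) := by
  have hden : (∏ j, ∏ i, ((m i)! : ℚ) ^ N j i) = ∏ i, ((m i)! : ℚ) ^ SS N i := by
    rw [Finset.prod_comm]
    refine Finset.prod_congr rfl fun i _ => ?_
    rw [Finset.prod_pow_eq_pow_sum]
    rfl
  rw [BfamFun, Finset.prod_div_distrib, hden, Fn, Fd]
  push_cast
  rfl

lemma gq_pos (m : Fin d → ℕ) : 0 < BfamFun N m := by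
  rw [gq_eq]
  exact div_pos (by exact_mod_cast Fn_pos N m) (by exact_mod_cast Fd_pos N m)

lemma gq_val (m : Fin d → ℕ) :
    padicValRat p (BfamFun N m)
      = (((∑ j, padicValNat p ((LL N m j)!) : ℕ) : ℤ))
        - (((∑ i, SS N i * padicValNat p ((m i)!) : ℕ) : ℤ)) := by
  rw [gq_eq, padicValRat.div (by exact_mod_cast (Fn_pos N m).ne')
      (by exact_mod_cast (Fd_pos N m).ne'),
    padicValRat.of_nat, padicValRat.of_nat, Fn, Fd,
    padicValNat_prod _ _ (fun j _ => factorial_ne_zero _),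
    padicValNat_prod _ _ (fun i _ => pow_ne_zero _ (factorial_ne_zero _))]
  have : ∀ i : Fin d, padicValNat p (((m i)!) ^ (SS N i)) = SS N i * padicValNat p ((m i)!) :=
    fun i => padicValNat.pow _ _
  rw [Finset.sum_congr rfl fun i _ => this i]

variable (s : ℕ) (v u n : Fin d → ℕ)

/-- `v + p u` -/
def Vv : Fin d → ℕ := fun i => v i + p * u i
/-- `v + p u + p^(s+1) n` -/
def Vnn : Fin d → ℕ := fun i => v i + p * u i + p ^ (s+1) * n i
/-- `u + p^s n` -/
def Unn : Fin d → ℕ := fun i => u i + p ^ s * n i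
/-- carry offsets -/
def Tj (j : Fin k) : ℕ := LL N v j / p

def CNn : ℕ := ∏ j, (Tj p N v j + LL N u j + p ^ s * LL N n j).choose (Tj p N v j)
def CDn : ℕ := ∏ j, (Tj p N v j + LL N u j).choose (Tj p N v j)
def PXn : ℕ := (∏ j, Pp p (LL N (Vnn p s v u n) j)) * ∏ i, (Pp p (Vv p v u i)) ^ (SS N i)
def PYn : ℕ := (∏ j, Pp p (LL N (Vv p v u) j)) * ∏ i, (Pp p (Vnn p s v u n i)) ^ (SS N i)

omit [Fact p.Prime]

lemma LL_Vv (j : Fin k) : LL N (Vv p v u) j = LL N v j + p * LL N u j := by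
  simp [LL, Vv, mul_add, Finset.sum_add_distrib, Finset.mul_sum, mul_left_comm]

lemma LL_Vnn (j : Fin k) :
    LL N (Vnn p s v u n) j = LL N (Vv p v u) j + p ^ (s+1) * LL N n j := by
  simp [LL, Vv, Vnn, mul_add, Finset.sum_add_distrib, Finset.mul_sum, mul_left_comm]

lemma LL_Unn (j : Fin k) : LL N (Unn p s u n) j = LL N u j + p ^ s * LL N n j := by
  simp [LL, Unn, mul_add, Finset.sum_add_distrib, Finset.mul_sum, mul_left_comm]

lemma sum_LL (m : Fin d → ℕ) : ∑ j, LL N m j = ∑ i, SS N i * m i := by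
  simp only [LL, SS, Finset.sum_mul]
  rw [Finset.sum_comm]

variable [hp : Fact p.Prime]

lemma LL_Vv_div (j : Fin k) : LL N (Vv p v u) j / p = Tj p N v j + LL N u j := by
  rw [LL_Vv, Nat.add_mul_div_left _ _ hp.out.pos]
  rfl

lemma main_id (hv : ∀ i, v i < p) :
    BfamFun N (Vnn p s v u n) * BfamFun N u * (PYn p N s v u n : ℚ) * (CDn p N v u : ℚ)
    = BfamFun N (Unn p s u n) * BfamFun N (Vv p v u) * (PXn p N s v u n : ℚ)
        * (CNn p N s v u n : ℚ) := by
  have hppos := hp.out.pos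
  -- per-j identity, folded
  have phi : ∀ j : Fin k,
      ((LL N (Vnn p s v u n) j)! : ℚ) * (((LL N u j)! : ℚ)
          * (((Tj p N v j + LL N u j).choose (Tj p N v j) : ℕ) : ℚ)
          * ((Pp p (LL N (Vv p v u) j) : ℕ) : ℚ))
      = ((LL N (Vv p v u) j)! : ℚ) * (((LL N (Unn p s u n) j)! : ℚ)
          * (((Tj p N v j + LL N u j + p ^ s * LL N n j).choose (Tj p N v j) : ℕ) : ℚ)
          * (((Pp p (LL N (Vnn p s v u n) j) : ℕ) : ℚ) * (p : ℚ) ^ (p ^ s * LL N n j))) := by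
    intro j
    have h := SC1Q (p := p) s (LL N (Vv p v u) j) (LL N u j) (LL N n j) (Tj p N v j)
      (LL_Vv_div p N v u j)
    rw [← LL_Vnn p N s v u n j, ← LL_Unn p N s u n j] at h
    exact h
  have h1 := Finset.prod_congr (rfl : (Finset.univ : Finset (Fin k)) = Finset.univ) (fun j _ => phi j)
  simp only [Finset.prod_mul_distrib] at h1
  rw [Finset.prod_pow_eq_pow_sum] at h1
  -- per-i identity, raised to powers
  have psi : ∀ i : Fin d,
      (((Vnn p s v u n i)! : ℚ)) ^ SS N i * ((((u i)! : ℚ)) ^ SS N i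
          * (((Pp p (Vv p v u i) : ℕ) : ℚ)) ^ SS N i)
      = (((Vv p v u i)! : ℚ)) ^ SS N i * ((((Unn p s u n i)! : ℚ)) ^ SS N i
          * ((((Pp p (Vnn p s v u n i) : ℕ) : ℚ)) ^ SS N i
              * (p : ℚ) ^ (p ^ s * n i * SS N i))) := by
    intro i
    have h := SC2Q (p := p) s (v i) (u i) (n i) (hv i)
    have h2 := congrArg (fun x : ℚ => x ^ SS N i) h
    simp only [mul_pow, ← pow_mul] at h2
    exact h2
  have h2 := Finset.prod_congr (rfl : (Finset.univ : Finset (Fin d)) = Finset.univ) (fun i _ => psi i)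
  simp only [Finset.prod_mul_distrib] at h2
  rw [Finset.prod_pow_eq_pow_sum] at h2
  -- exponents match
  have hexp : (∑ j, p ^ s * LL N n j) = ∑ i, p ^ s * n i * SS N i := by
    rw [← Finset.mul_sum, sum_LL]
    rw [Finset.mul_sum]
    exact Finset.sum_congr rfl fun i _ => by ring
  rw [← hexp] at h2
  -- assemble
  rw [gq_eq N (Vnn p s v u n), gq_eq N u, gq_eq N (Unn p s u n), gq_eq N (Vv p v u)]
  have hFdVn : ((Fd N (Vnn p s v u n) : ℕ) : ℚ) ≠ 0 := by
    exact_mod_cast (Fd_pos N _).ne'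
  have hFdu : ((Fd N u : ℕ) : ℚ) ≠ 0 := by exact_mod_cast (Fd_pos N _).ne'
  have hFdUn : ((Fd N (Unn p s u n) : ℕ) : ℚ) ≠ 0 := by exact_mod_cast (Fd_pos N _).ne'
  have hFdV : ((Fd N (Vv p v u) : ℕ) : ℚ) ≠ 0 := by exact_mod_cast (Fd_pos N _).ne'
  field_simp
  -- now a polynomial identity; expand all ℕ-products into ℚ-products
  simp only [Fn, Fd, CNn, CDn, PXn, PYn, Nat.cast_prod, Nat.cast_mul, Nat.cast_pow]
  linear_combination
    ((∏ i, (((Unn p s u n i)! : ℚ)) ^ SS N i) * (∏ i, (((Vv p v u i)! : ℚ)) ^ SS N i)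
      * (∏ i, (((Pp p (Vnn p s v u n i) : ℕ) : ℚ)) ^ SS N i)) * h1
    - ((∏ j, ((LL N (Unn p s u n) j)! : ℚ)) * (∏ j, ((LL N (Vv p v u) j)! : ℚ))
      * (∏ j, (((Tj p N v j + LL N u j + p ^ s * LL N n j).choose (Tj p N v j) : ℕ) : ℚ))
      * (∏ j, ((Pp p (LL N (Vnn p s v u n) j) : ℕ) : ℚ))) * h2

lemma not_dvd_prod {ι : Type*} (S : Finset ι) (f : ι → ℕ) (h : ∀ x ∈ S, ¬ p ∣ f x) :
    ¬ p ∣ ∏ x ∈ S, f x := by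
  induction S using Finset.cons_induction with
  | empty => simpa using hp.out.not_dvd_one
  | cons a S ha ih =>
    rw [Finset.prod_cons]
    intro hd
    rcases hp.out.dvd_mul.mp hd with h1 | h2
    · exact h a (Finset.mem_cons_self a S) h1
    · exact ih (fun x hx => h x (Finset.mem_cons_of_mem hx)) h2

lemma not_dvd_PYn : ¬ p ∣ PYn p N s v u n := by
  rw [PYn]
  intro hd
  rcases hp.out.dvd_mul.mp hd with h1 | h2
  · exact not_dvd_prod p _ _ (fun j _ => not_dvd_Pp _) h1
  · exact not_dvd_prod p _ _
      (fun i _ hc => not_dvd_Pp _ (hp.out.dvd_of_dvd_pow hc)) h2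

lemma CDn_pos : 0 < CDn p N v u :=
  Finset.prod_pos fun j _ => Nat.choose_pos (Nat.le_add_right _ _)

lemma CNn_pos : 0 < CNn p N s v u n :=
  Finset.prod_pos fun j _ => Nat.choose_pos (le_trans (Nat.le_add_right _ _) (Nat.le_add_right _ _))

lemma PXn_pos : 0 < PXn p N s v u n :=
  Nat.mul_pos (Finset.prod_pos fun j _ => Pp_pos _)
    (Finset.prod_pos fun i _ => pow_pos (Pp_pos _) _)

lemma PYn_pos : 0 < PYn p N s v u n :=
  Nat.mul_pos (Finset.prod_pos fun j _ => Pp_pos _)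
    (Finset.prod_pos fun i _ => pow_pos (Pp_pos _) _)

lemma pxy_zmod :
    ((PXn p N s v u n : ℕ) : ZMod (p ^ (s+1))) = ((PYn p N s v u n : ℕ) : ZMod (p ^ (s+1))) := by
  have hM : p ∣ p ^ (s+1) := dvd_pow_self p s.succ_ne_zero
  have e1 : ∀ j : Fin k, ((Pp p (LL N (Vnn p s v u n) j) : ℕ) : ZMod (p ^ (s+1)))
      = ((Pp p (LL N (Vv p v u) j) : ℕ) : ZMod (p ^ (s+1)))
        * ((Pp p (p ^ (s+1)) : ℕ) : ZMod (p ^ (s+1))) ^ (LL N n j) := by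
    intro j
    rw [LL_Vnn p N s v u n j]
    exact zmod_Pp_mul hM _ _
  have e2 : ∀ i : Fin d, ((Pp p (Vnn p s v u n i) : ℕ) : ZMod (p ^ (s+1)))
      = ((Pp p (Vv p v u i) : ℕ) : ZMod (p ^ (s+1)))
        * ((Pp p (p ^ (s+1)) : ℕ) : ZMod (p ^ (s+1))) ^ (n i) := by
    intro i
    show ((Pp p (Vv p v u i + p ^ (s+1) * n i) : ℕ) : ZMod (p ^ (s+1))) = _
    exact zmod_Pp_mul hM _ _
  simp only [PXn, PYn, Nat.cast_mul, Nat.cast_prod, Nat.cast_pow]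
  rw [Finset.prod_congr (rfl : (Finset.univ : Finset (Fin k)) = Finset.univ) (fun j _ => e1 j),
      Finset.prod_congr (rfl : (Finset.univ : Finset (Fin d)) = Finset.univ)
        (fun i _ => congrArg (· ^ SS N i) (e2 i))]
  simp only [mul_pow, ← pow_mul, Finset.prod_mul_distrib]
  rw [Finset.prod_pow_eq_pow_sum, Finset.prod_pow_eq_pow_sum]
  have hee : ∑ i, n i * SS N i = ∑ j, LL N n j := by
    rw [sum_LL]
    exact Finset.sum_congr rfl fun i _ => by ring
  rw [hee]
  ring

lemma pxy_dvd :
    ((p : ℤ) ^ (s+1)) ∣ ((PXn p N s v u n : ℤ) - (PYn p N s v u n : ℤ)) := by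
  have h := (ZMod.natCast_eq_natCast_iff _ _ _).mp (pxy_zmod p N s v u n)
  have h2 := h.dvd
  have h3 : ((p ^ (s+1) : ℕ) : ℤ) ∣ ((PYn p N s v u n : ℤ) - (PXn p N s v u n : ℤ)) := h2
  rw [show ((PXn p N s v u n : ℤ) - (PYn p N s v u n : ℤ))
      = -((PYn p N s v u n : ℤ) - (PXn p N s v u n : ℤ)) by ring]
  push_cast at h3
  exact dvd_neg.mpr h3

lemma cn_cd_dvd :
    ((p : ℤ) ^ (s+1)) ∣ (p : ℤ) ^ (∑ j, Tj p N v j)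
      * ((CNn p N s v u n : ℤ) - (CDn p N v u : ℤ)) := by
  have h := dvd_pow_mul_prod_sub (p := p) Finset.univ (fun j => Tj p N v j)
    (fun j => (((Tj p N v j + LL N u j + p ^ s * LL N n j).choose (Tj p N v j) : ℕ) : ℤ))
    (fun j => (((Tj p N v j + LL N u j).choose (Tj p N v j) : ℕ) : ℤ)) s
    (fun j _ => dvd_pow_mul_choose_sub s (Tj p N v j) (LL N u j) (LL N n j))
  have hc1 : (CNn p N s v u n : ℤ)
      = ∏ j, (((Tj p N v j + LL N u j + p ^ s * LL N n j).choose (Tj p N v j) : ℕ) : ℤ) := by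
    rw [CNn]; push_cast; rfl
  have hc2 : (CDn p N v u : ℤ)
      = ∏ j, (((Tj p N v j + LL N u j).choose (Tj p N v j) : ℕ) : ℤ) := by
    rw [CDn]; push_cast; rfl
  rw [hc1, hc2]
  exact h

lemma val_CDn : padicValNat p (CDn p N v u)
    = ∑ j, padicValNat p ((Tj p N v j + LL N u j).choose (Tj p N v j)) := by
  rw [CDn]
  exact padicValNat_prod _ _ fun j _ => (Nat.choose_pos (Nat.le_add_right _ _)).ne'

/-- K1 : val g(V) ≥ val g(u) + ∑ t_j + val CD -/
lemma K1 (hv : ∀ i, v i < p) :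
    padicValRat p (BfamFun N u) + ((∑ j, Tj p N v j : ℕ) : ℤ)
      + ((padicValNat p (CDn p N v u) : ℕ) : ℤ)
    ≤ padicValRat p (BfamFun N (Vv p v u)) := by
  have e1 : ∀ j : Fin k, padicValNat p ((LL N (Vv p v u) j)!)
      = (Tj p N v j + LL N u j)
        + (padicValNat p ((Tj p N v j + LL N u j).choose (Tj p N v j))
          + (padicValNat p ((Tj p N v j)!) + padicValNat p ((LL N u j)!))) := by
    intro j
    rw [vf_eq (LL N (Vv p v u) j), LL_Vv_div p N v u j, vf_add_choose]
    ring
  have e2 : ∀ i : Fin d, padicValNat p ((Vv p v u i)!) = u i + padicValNat p ((u i)!) := by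
    intro i
    rw [vf_eq]
    have : Vv p v u i / p = u i := by
      show (v i + p * u i) / p = u i
      rw [Nat.add_mul_div_left _ _ hp.out.pos, Nat.div_eq_of_lt (hv i), Nat.zero_add]
    rw [this]
  have E1 : ∑ j, padicValNat p ((LL N (Vv p v u) j)!)
      = ((∑ j, (Tj p N v j + LL N u j))
        + ((∑ j, padicValNat p ((Tj p N v j + LL N u j).choose (Tj p N v j)))
          + ((∑ j, padicValNat p ((Tj p N v j)!)) + ∑ j, padicValNat p ((LL N u j)!)))) := by
    rw [← Finset.sum_add_distrib, ← Finset.sum_add_distrib, ← Finset.sum_add_distrib]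
    exact Finset.sum_congr rfl fun j _ => e1 j
  have E2 : ∑ i, SS N i * padicValNat p ((Vv p v u i)!)
      = (∑ i, SS N i * u i) + ∑ i, SS N i * padicValNat p ((u i)!) := by
    rw [← Finset.sum_add_distrib]
    exact Finset.sum_congr rfl fun i _ => by rw [e2 i]; ring
  rw [gq_val, gq_val, val_CDn, E1, E2]
  have hAS : ∑ j, LL N u j = ∑ i, SS N i * u i := sum_LL N u
  have hsplit : ∑ j, (Tj p N v j + LL N u j) = (∑ j, Tj p N v j) + ∑ j, LL N u j :=
    Finset.sum_add_distrib
  omega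

/-- K2 : val g(u + p^s n) ≥ val g(u) + val g(n) -/
lemma K2 (hu : ∀ i, u i < p ^ s) :
    padicValRat p (BfamFun N u) + padicValRat p (BfamFun N n)
      ≤ padicValRat p (BfamFun N (Unn p s u n)) := by
  have e3 : ∀ j : Fin k, padicValNat p ((LL N (Unn p s u n) j)!)
      = padicValNat p ((LL N u j + p ^ s * LL N n j).choose (LL N u j))
        + padicValNat p ((LL N u j)!)
        + ((∑ r ∈ Finset.range s, p ^ r) * LL N n j + padicValNat p ((LL N n j)!)) := by
    intro j
    rw [LL_Unn p N s u n j, vf_add_choose, vf_pow_mul]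
  have e4 : ∀ i : Fin d, padicValNat p ((Unn p s u n i)!)
      = padicValNat p ((u i)!) + ((∑ r ∈ Finset.range s, p ^ r) * n i
          + padicValNat p ((n i)!)) := by
    intro i
    show padicValNat p ((u i + p ^ s * n i)!) = _
    rw [vf_add_choose, vf_pow_mul,
      padicValNat.eq_zero_of_not_dvd (no_carry_choose_unit (hu i))]
    ring
  have E3 : ∑ j, padicValNat p ((LL N (Unn p s u n) j)!)
      = ((∑ j, padicValNat p ((LL N u j + p ^ s * LL N n j).choose (LL N u j)))
        + (∑ j, padicValNat p ((LL N u j)!)))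
        + (((∑ r ∈ Finset.range s, p ^ r) * ∑ j, LL N n j)
          + ∑ j, padicValNat p ((LL N n j)!)) := by
    rw [Finset.mul_sum, ← Finset.sum_add_distrib, ← Finset.sum_add_distrib,
      ← Finset.sum_add_distrib]
    exact Finset.sum_congr rfl fun j _ => e3 j
  have E4 : ∑ i, SS N i * padicValNat p ((Unn p s u n i)!)
      = (∑ i, SS N i * padicValNat p ((u i)!))
        + (((∑ r ∈ Finset.range s, p ^ r) * ∑ j, LL N n j)
          + ∑ i, SS N i * padicValNat p ((n i)!)) := by
    have hBS : ∑ j, LL N n j = ∑ i, SS N i * n i := sum_LL N n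
    rw [hBS, Finset.mul_sum, ← Finset.sum_add_distrib, ← Finset.sum_add_distrib]
    exact Finset.sum_congr rfl fun i _ => by rw [e4 i]; ring
  rw [gq_val, gq_val, gq_val, E3, E4]
  generalize ((∑ r ∈ Finset.range s, p ^ r) * ∑ j, LL N n j) = W
  omega

/-- integrality : val g(u) ≥ 0 -/
lemma val_nonneg (m : Fin d → ℕ) : 0 ≤ padicValRat p (BfamFun N m) := by
  rw [gq_val]
  have hperj : ∀ j : Fin k, (∑ i, N j i * padicValNat p ((m i)!))
      ≤ padicValNat p ((LL N m j)!) := by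
    intro j
    have hdvd := prod_pow_factorial_dvd (N j) m
    have hle := le_padicValNat_of_dvd (p := p) (factorial_ne_zero _) hdvd
      (Finset.prod_ne_zero_iff.mpr fun i _ => pow_ne_zero _ (factorial_ne_zero _))
    rw [padicValNat_prod _ _ (fun i _ => pow_ne_zero _ (factorial_ne_zero _))] at hle
    calc (∑ i, N j i * padicValNat p ((m i)!))
        = ∑ i, padicValNat p (((m i)!) ^ (N j i)) := by
          exact Finset.sum_congr rfl fun i _ =>
            (padicValNat.pow _ _).symm
      _ ≤ padicValNat p ((LL N m j)!) := hle
  have hswap : ∑ i, SS N i * padicValNat p ((m i)!)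
      = ∑ j, ∑ i, N j i * padicValNat p ((m i)!) := by
    rw [Finset.sum_comm]
    exact Finset.sum_congr rfl fun i _ => by rw [SS, Finset.sum_mul]
  have hs := Finset.sum_le_sum fun j (_ : j ∈ (Finset.univ : Finset (Fin k))) => hperj j
  rw [← hswap] at hs
  omega

end Main
end DworkAux

open DworkAux in
/-- Hypothesis (iii) of the multivariate Dwork congruence theorem holds for `A = g = B_N`:
`B_N(v+pu+p^{s+1}n)/B_N(v+pu) − B_N(u+pˢn)/B_N(u) ∈ p^{s+1}(B_N(n)/B_N(v+pu))ℤ_p`. -/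
theorem stmt16 (p : ℕ) [Fact p.Prime] (d k : ℕ) (hd : 0 < d) (hk : 0 < k) (s : ℕ)
    (N : Fin k → Fin d → ℕ) (v u n : Fin d → ℕ)
    (hv : ∀ i, v i < p) (hu : ∀ i, u i < p ^ s) :
    ‖(((BfamFun N (fun i => v i + p * u i + p ^ (s + 1) * n i) /
            BfamFun N (fun i => v i + p * u i) -
          BfamFun N (fun i => u i + p ^ s * n i) / BfamFun N u) *
        BfamFun N (fun i => v i + p * u i) / BfamFun N n : ℚ) : ℚ_[p])‖
      ≤ (p : ℝ) ^ (-(s + 1 : ℤ)) := by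
  have hfp : Fact p.Prime := ‹_›
  have hppos := hfp.out.pos
  have hp1 : (1 : ℚ) ≤ (p : ℚ) := by exact_mod_cast hfp.out.one_lt.le
  rw [show (fun i => v i + p * u i + p ^ (s + 1) * n i) = Vnn p s v u n from rfl,
      show (fun i => v i + p * u i) = Vv p v u from rfl,
      show (fun i => u i + p ^ s * n i) = Unn p s u n from rfl,
      Padic.eq_padicNorm]
  have hcast : ((p : ℝ)) ^ (-(s + 1 : ℤ)) = (((p : ℚ) ^ (-(s + 1 : ℤ)) : ℚ) : ℝ) := by
    rw [Rat.cast_zpow, Rat.cast_natCast]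
  rw [hcast, Rat.cast_le]
  -- nonzero facts
  have hgVn : BfamFun N (Vnn p s v u n) ≠ 0 := (gq_pos N _).ne'
  have hgV : BfamFun N (Vv p v u) ≠ 0 := (gq_pos N _).ne'
  have hgUn : BfamFun N (Unn p s u n) ≠ 0 := (gq_pos N _).ne'
  have hgU : BfamFun N u ≠ 0 := (gq_pos N _).ne'
  have hgn : BfamFun N n ≠ 0 := (gq_pos N _).ne'
  have hPYCDne : (((PYn p N s v u n * CDn p N v u : ℕ)) : ℚ) ≠ 0 := by
    have := Nat.mul_pos (PYn_pos (p := p) (N := N) (s := s) (v := v) (u := u) (n := n))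
      (CDn_pos (p := p) (N := N) (v := v) (u := u))
    exact_mod_cast this.ne'
  set Δ : ℚ := ((PXn p N s v u n * CNn p N s v u n : ℕ) : ℚ)
      - ((PYn p N s v u n * CDn p N v u : ℕ) : ℚ) with hΔ
  have hXeq : (BfamFun N (Vnn p s v u n) / BfamFun N (Vv p v u)
        - BfamFun N (Unn p s u n) / BfamFun N u) * BfamFun N (Vv p v u) / BfamFun N n
      = BfamFun N (Unn p s u n) * BfamFun N (Vv p v u) * Δ
          / ((((PYn p N s v u n * CDn p N v u : ℕ)) : ℚ) * BfamFun N u * BfamFun N n) := by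
    have hmain := main_id p N s v u n hv
    have hstep1 : (BfamFun N (Vnn p s v u n) / BfamFun N (Vv p v u)
          - BfamFun N (Unn p s u n) / BfamFun N u) * BfamFun N (Vv p v u) / BfamFun N n
        = (BfamFun N (Vnn p s v u n) * BfamFun N u
            - BfamFun N (Unn p s u n) * BfamFun N (Vv p v u))
          / (BfamFun N u * BfamFun N n) := by
      field_simp
    rw [hstep1, div_eq_div_iff (mul_ne_zero hgU hgn)
      (mul_ne_zero (mul_ne_zero hPYCDne hgU) hgn), hΔ]
    push_cast
    push_cast at hmain
    linear_combination (BfamFun N u * BfamFun N n) * hmain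
  rw [hXeq]
  rcases eq_or_ne Δ 0 with h0 | h0
  · rw [h0]
    rw [mul_zero, zero_div, padicNorm.zero]
    positivity
  · -- valuation bound
    have hnum_ne : BfamFun N (Unn p s u n) * BfamFun N (Vv p v u) * Δ ≠ 0 :=
      mul_ne_zero (mul_ne_zero hgUn hgV) h0
    have hden_ne : (((PYn p N s v u n * CDn p N v u : ℕ)) : ℚ) * BfamFun N u * BfamFun N n ≠ 0 :=
      mul_ne_zero (mul_ne_zero hPYCDne hgU) hgn
    have hXne : BfamFun N (Unn p s u n) * BfamFun N (Vv p v u) * Δ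
        / ((((PYn p N s v u n * CDn p N v u : ℕ)) : ℚ) * BfamFun N u * BfamFun N n) ≠ 0 :=
      div_ne_zero hnum_ne hden_ne
    rw [padicNorm.eq_zpow_of_nonzero hXne]
    apply zpow_le_zpow_right₀ hp1
    -- suffices : s+1 ≤ val
    have hval : (s + 1 : ℤ) ≤ padicValRat p (BfamFun N (Unn p s u n) * BfamFun N (Vv p v u) * Δ
        / ((((PYn p N s v u n * CDn p N v u : ℕ)) : ℚ) * BfamFun N u * BfamFun N n)) := by
      rw [padicValRat.div hnum_ne hden_ne, padicValRat.mul (mul_ne_zero hgUn hgV) h0,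
        padicValRat.mul hgUn hgV, padicValRat.mul (mul_ne_zero hPYCDne hgU) hgn,
        padicValRat.mul hPYCDne hgU]
      -- value of PY*CD
      have hvPYCD : padicValRat p (((PYn p N s v u n * CDn p N v u : ℕ)) : ℚ)
          = ((padicValNat p (CDn p N v u) : ℕ) : ℤ) := by
        rw [padicValRat.of_nat,
          padicValNat.mul (PYn_pos (p := p) (N := N) (s := s) (v := v) (u := u) (n := n)).ne'
            (CDn_pos (p := p) (N := N) (v := v) (u := u)).ne',
          padicValNat.eq_zero_of_not_dvd
            (not_dvd_PYn p N s v u n)]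
        push_cast
        ring
      -- value of Δ
      have hZcast : Δ = ((((PXn p N s v u n * CNn p N s v u n : ℕ) : ℤ)
          - ((PYn p N s v u n * CDn p N v u : ℕ) : ℤ) : ℤ) : ℚ) := by
        rw [hΔ]; push_cast; ring
      set ZD : ℤ := ((PXn p N s v u n * CNn p N s v u n : ℕ) : ℤ)
          - ((PYn p N s v u n * CDn p N v u : ℕ) : ℤ) with hZD
      have hZne : ZD ≠ 0 := by
        intro hc
        apply h0
        rw [hZcast, hc, Int.cast_zero]
      have hsplitZ : ZD = (PXn p N s v u n : ℤ) * ((CNn p N s v u n : ℤ) - (CDn p N v u : ℤ))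
          + ((PXn p N s v u n : ℤ) - (PYn p N s v u n : ℤ)) * (CDn p N v u : ℤ) := by
        rw [hZD]; push_cast; ring
      have hdvd : ((p : ℤ) ^ (s + 1)) ∣ (p : ℤ) ^ (∑ j, Tj p N v j) * ZD := by
        rw [hsplitZ, mul_add]
        refine dvd_add ?_ ?_
        · rw [show (p : ℤ) ^ (∑ j, Tj p N v j) * ((PXn p N s v u n : ℤ)
              * ((CNn p N s v u n : ℤ) - (CDn p N v u : ℤ)))
            = (PXn p N s v u n : ℤ) * ((p : ℤ) ^ (∑ j, Tj p N v j)
              * ((CNn p N s v u n : ℤ) - (CDn p N v u : ℤ))) by ring]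
          exact Dvd.dvd.mul_left (cn_cd_dvd p N s v u n) _
        · rw [show (p : ℤ) ^ (∑ j, Tj p N v j) * (((PXn p N s v u n : ℤ)
              - (PYn p N s v u n : ℤ)) * (CDn p N v u : ℤ))
            = ((PXn p N s v u n : ℤ) - (PYn p N s v u n : ℤ))
              * ((p : ℤ) ^ (∑ j, Tj p N v j) * (CDn p N v u : ℤ)) by ring]
          exact Dvd.dvd.mul_right (pxy_dvd p N s v u n) _
      have hvZ : (s + 1 : ℤ) - ((∑ j, Tj p N v j : ℕ) : ℤ) ≤ padicValRat p Δ := by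
        have hne2 : (p : ℤ) ^ (∑ j, Tj p N v j) * ZD ≠ 0 :=
          mul_ne_zero (pow_ne_zero _ (by exact_mod_cast hppos.ne')) hZne
        have hle := (padicValInt_dvd_iff (p := p) (s + 1) _).mp hdvd
        rcases hle with hc | hle
        · exact absurd hc hne2
        · rw [padicValInt.mul (pow_ne_zero _ (by exact_mod_cast hppos.ne' : (p:ℤ) ≠ 0)) hZne]
            at hle
          have hvp : padicValInt p ((p : ℤ) ^ (∑ j, Tj p N v j)) = ∑ j, Tj p N v j := by
            rw [show ((p : ℤ) ^ (∑ j, Tj p N v j)) = ((p ^ (∑ j, Tj p N v j) : ℕ) : ℤ)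
                by push_cast; ring, padicValInt.of_nat, padicValNat.prime_pow]
          rw [hvp] at hle
          rw [hZcast, padicValRat.of_int]
          omega
      have hK1 := K1 p N v u hv
      have hK2 := K2 p N s u n hu
      have hnn := val_nonneg p N u
      rw [hvPYCD]
      have hTcast := hvZ
      linarith [hK1, hK2, hnn, hvZ]
    linarith [hval]
end

section
/- Let p be a prime, d ≥ 1, k ≥ 1, s ≥ 0. Let N^{(1)},...,N^{(k)} ∈ Z_{≥0}^d and let n ∈ Z_{≥0}^d, u ∈ Z^d with 0 ≤ u_i < p^s. Define B_N(m) = ∏_{j=1}^k (∑_i N_i^{(j)} m_i)!/∏_i (m_i!)^{N_i^{(j)}}. Then B_N(p·u + p^{s+1}·n)/B_N(u + p^s·n) − B_N(p·u)/B_N(u) ∈ p^{s+1}·(B_N(p·u)/B_N(u))·Z_p; equivalently B_N(p·u + p^{s+1}·n)/B_N(u + p^s·n) = (B_N(p·u)/B_N(u))·(1 + O(p^{s+1})) where O(p^{s+1}) denotes an element of p^{s+1}·Z_p. -/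
open Finset


def Cfun (p a : ℕ) : ℕ := ∏ j ∈ Finset.range (p * a), if p ∣ (j + 1) then 1 else (j + 1)

lemma factorial_add_prod (n m : ℕ) :
    (n + m).factorial = n.factorial * ∏ j ∈ range m, (n + j + 1) := by
  induction m with
  | zero => simp
  | succ m ih =>
    rw [prod_range_succ, ← mul_assoc, ← ih, ← Nat.add_assoc, Nat.factorial_succ]
    ring

lemma Cfun_pos (p a : ℕ) : 0 < Cfun p a := by
  apply Finset.prod_pos
  intro j _
  split <;> omega

lemma factorial_p_mul (p : ℕ) (hp : p.Prime) (a : ℕ) :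
    (p * a).factorial = p ^ a * a.factorial * Cfun p a := by
  induction a with
  | zero => simp [Cfun]
  | succ a ih =>
    have h1 : p * (a + 1) = p * a + p := by ring
    rw [h1, factorial_add_prod, ih]
    have hsplit : (∏ j ∈ range p, (p * a + j + 1))
        = (∏ j ∈ range p, if p ∣ (p * a + j + 1) then 1 else (p * a + j + 1))
          * ∏ j ∈ range p, (if p ∣ (p * a + j + 1) then (p * a + j + 1) else 1) := by
      rw [← prod_mul_distrib]
      refine prod_congr rfl fun j hj => ?_
      by_cases h : p ∣ (p * a + j + 1) <;> simp [h]
    have hone : (∏ j ∈ range p, if p ∣ (p * a + j + 1) then (p * a + j + 1) else 1)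
        = p * (a + 1) := by
      rw [Finset.prod_eq_single_of_mem (p - 1)
        (by have := hp.pos; simp only [mem_range]; omega)]
      · rw [show p * a + (p - 1) + 1 = p * (a + 1) by have := hp.pos; omega,
          if_pos ⟨a + 1, rfl⟩]
      · intro j hj hne
        rw [if_neg]
        intro hdvd
        have h2 : p ∣ j + 1 := by
          have h3 : p * a + j + 1 = p * a + (j + 1) := by omega
          rw [h3] at hdvd
          exact (Nat.dvd_add_right ⟨a, rfl⟩).mp hdvd
        have hj' : j + 1 < p := by simp [mem_range] at hj; omega
        exact absurd (Nat.le_of_dvd (by omega) h2) (by omega)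
    have hC : Cfun p (a + 1) = Cfun p a
        * ∏ j ∈ range p, if p ∣ (p * a + j + 1) then 1 else (p * a + j + 1) := by
      unfold Cfun
      rw [show p * (a + 1) = p * a + p by ring, prod_range_add]
    rw [hsplit, hone, hC, Nat.factorial_succ, pow_succ]
    ring

lemma Cfun_coprime (p : ℕ) (hp : p.Prime) (a : ℕ) : Nat.Coprime p (Cfun p a) := by
  apply Nat.Coprime.prod_right
  intro j _
  by_cases h : p ∣ j + 1
  · simp [h]
  · rw [if_neg h]
    exact (hp.coprime_iff_not_dvd).mpr h

lemma prod_shift_periodic {α : Type*} [CommMonoid α] (g : ℕ → α) (M : ℕ)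
    (hg : ∀ j, g (j + M) = g j) (c : ℕ) :
    ∏ j ∈ range M, g (c + j) = ∏ j ∈ range M, g j := by
  induction c with
  | zero => simp
  | succ c ih =>
    rw [← ih]
    rcases Nat.eq_zero_or_pos M with hM | hM
    · simp [hM]
    obtain ⟨t, rfl⟩ : ∃ t, M = t + 1 := ⟨M - 1, by omega⟩
    rw [prod_range_succ]
    conv_rhs => rw [prod_range_succ']
    congr 1
    · exact prod_congr rfl fun j _ => by rw [show c + (j + 1) = c + 1 + j by omega]
    · rw [show c + 1 + t = c + (t + 1) by omega, hg c, Nat.add_zero]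

lemma prod_range_add_mul {α : Type*} [CommMonoid α] (g : ℕ → α) (M : ℕ)
    (hg : ∀ j, g (j + M) = g j) (c b : ℕ) :
    ∏ j ∈ range (c + M * b), g j
      = (∏ j ∈ range c, g j) * (∏ j ∈ range M, g j) ^ b := by
  induction b with
  | zero => simp
  | succ b ih =>
    rw [show c + M * (b + 1) = (c + M * b) + M by ring, prod_range_add, ih,
      prod_shift_periodic g M hg, pow_succ, mul_assoc]

/-- The "Wilson block" in `ZMod (p^(s+1))`. -/
def Ewil (p s : ℕ) : ZMod (p ^ (s + 1)) :=
  ∏ j ∈ range (p ^ (s + 1)), if p ∣ (j + 1) then 1 else ((j + 1 : ℕ) : ZMod (p ^ (s + 1)))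

lemma Cfun_cast_zmod (p s a b : ℕ) :
    ((Cfun p (a + p ^ s * b) : ZMod (p ^ (s + 1))))
      = (Cfun p a : ZMod (p ^ (s + 1))) * (Ewil p s) ^ b := by
  set M := p ^ (s + 1) with hM
  set g : ℕ → ZMod M := fun j => if p ∣ (j + 1) then 1 else ((j + 1 : ℕ) : ZMod M) with hgdef
  have hcast : ∀ x : ℕ, ((Cfun p x : ZMod M)) = ∏ j ∈ range (p * x), g j := by
    intro x
    unfold Cfun
    rw [Nat.cast_prod]
    refine prod_congr rfl fun j _ => ?_
    by_cases h : p ∣ j + 1 <;> simp [hgdef, h]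
  have hper : ∀ j, g (j + M) = g j := by
    intro j
    have hdvd : p ∣ M := hM ▸ dvd_pow_self p s.succ_ne_zero
    have h1 : j + M + 1 = M + (j + 1) := by omega
    by_cases h : p ∣ j + 1
    · rw [hgdef]
      simp only
      rw [if_pos (h1 ▸ Nat.dvd_add hdvd h), if_pos h]
    · rw [hgdef]
      simp only
      rw [if_neg (fun hc => h ((Nat.dvd_add_right hdvd).mp (h1 ▸ hc))), if_neg h]
      push_cast [ZMod.natCast_self]
      ring
  have harg : p * (a + p ^ s * b) = p * a + M * b := by
    rw [hM, pow_succ]; ring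
  rw [hcast, hcast, harg, prod_range_add_mul g M hper]
  rfl

def Xfun (p : ℕ) {d k : ℕ} (N : Fin k → Fin d → ℕ) (v : Fin d → ℕ) : ℕ :=
  ∏ j, Cfun p (∑ i, N j i * v i)

def Yfun (p : ℕ) {d k : ℕ} (N : Fin k → Fin d → ℕ) (v : Fin d → ℕ) : ℕ :=
  ∏ j, ∏ i, (Cfun p (v i)) ^ (N j i)

lemma ratio_eq (p : ℕ) (hp : p.Prime) {d : ℕ} (Nr w : Fin d → ℕ) :
    (((p * ∑ i, Nr i * w i).factorial : ℚ) / ∏ i, (((p * w i).factorial : ℚ)) ^ (Nr i))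
      = ((Cfun p (∑ i, Nr i * w i) : ℚ) / ∏ i, ((Cfun p (w i) : ℚ)) ^ (Nr i))
        * (((∑ i, Nr i * w i).factorial : ℚ) / ∏ i, (((w i).factorial : ℚ)) ^ (Nr i)) := by
  set S := ∑ i, Nr i * w i with hS
  have h1 : (((p * S).factorial : ℚ)) = (p : ℚ) ^ S * S.factorial * Cfun p S := by
    rw [factorial_p_mul p hp S]; push_cast; ring
  have h2 : (∏ i, (((p * w i).factorial : ℚ)) ^ (Nr i))
      = (p : ℚ) ^ S * (∏ i, (((w i).factorial : ℚ)) ^ (Nr i))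
        * ∏ i, ((Cfun p (w i) : ℚ)) ^ (Nr i) := by
    have : ∀ i : Fin d, (((p * w i).factorial : ℚ)) ^ (Nr i)
        = ((p : ℚ) ^ (w i * Nr i)) * (((w i).factorial : ℚ)) ^ (Nr i)
          * ((Cfun p (w i) : ℚ)) ^ (Nr i) := by
      intro i
      rw [factorial_p_mul p hp (w i)]
      push_cast
      rw [mul_pow, mul_pow, ← pow_mul]
    rw [prod_congr rfl fun i _ => this i, prod_mul_distrib, prod_mul_distrib,
      prod_pow_eq_pow_sum]
    congr 3
    rw [hS]
    exact Finset.sum_congr rfl fun i _ => Nat.mul_comm _ _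
  rw [h1, h2]
  have hp0 : (p : ℚ) ≠ 0 := by exact_mod_cast hp.pos.ne'
  have hpow : (p : ℚ) ^ S ≠ 0 := pow_ne_zero _ hp0
  have hfS : ((S.factorial : ℚ)) ≠ 0 := by
    have : (0:ℚ) < S.factorial := by exact_mod_cast S.factorial_pos
    positivity
  have hCS : ((Cfun p S : ℚ)) ≠ 0 := by
    have : (0:ℚ) < Cfun p S := by exact_mod_cast Cfun_pos p S
    positivity
  have hPf : (∏ i, (((w i).factorial : ℚ)) ^ (Nr i)) ≠ 0 := by
    apply Finset.prod_ne_zero_iff.mpr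
    intro i _
    have : (0:ℚ) < (w i).factorial := by exact_mod_cast (w i).factorial_pos
    positivity
  have hPC : (∏ i, ((Cfun p (w i) : ℚ)) ^ (Nr i)) ≠ 0 := by
    apply Finset.prod_ne_zero_iff.mpr
    intro i _
    have : (0:ℚ) < Cfun p (w i) := by exact_mod_cast Cfun_pos p (w i)
    positivity
  field_simp

lemma Bfam_pmul (p : ℕ) (hp : p.Prime) {d k : ℕ} (N : Fin k → Fin d → ℕ) (v : Fin d → ℕ) :
    BfamFun N (fun i => p * v i)
      = ((Xfun p N v : ℚ) / (Yfun p N v : ℚ)) * BfamFun N v := by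
  unfold BfamFun Xfun Yfun
  push_cast
  rw [← prod_div_distrib, ← prod_mul_distrib]
  refine prod_congr rfl fun j _ => ?_
  have hsum : (∑ i, N j i * (p * v i)) = p * ∑ i, N j i * v i := by
    rw [Finset.mul_sum]
    exact Finset.sum_congr rfl fun i _ => by ring
  rw [hsum]
  exact ratio_eq p hp (N j) v

lemma Bfam_pos {d k : ℕ} (N : Fin k → Fin d → ℕ) (v : Fin d → ℕ) : 0 < BfamFun N v := by
  unfold BfamFun
  apply Finset.prod_pos
  intro j _
  apply div_pos
  · exact_mod_cast (Nat.factorial_pos _)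
  · apply Finset.prod_pos
    intro i _
    have : (0:ℚ) < (v i).factorial := by exact_mod_cast (v i).factorial_pos
    positivity
/-- `B_N(pu + p^{s+1}n)/B_N(u + pˢn) = (B_N(pu)/B_N(u))·(1 + O(p^{s+1}))`, i.e. the
difference of the two quotients lies in `p^{s+1}·(B_N(pu)/B_N(u))·ℤ_p`. -/
theorem stmt17 (p : ℕ) [Fact p.Prime] (d k : ℕ) (hd : 0 < d) (hk : 0 < k) (s : ℕ)
    (N : Fin k → Fin d → ℕ) (n u : Fin d → ℕ) (hu : ∀ i, u i < p ^ s) :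
    ‖(((BfamFun N (fun i => p * u i + p ^ (s + 1) * n i) /
            BfamFun N (fun i => u i + p ^ s * n i) -
          BfamFun N (fun i => p * u i) / BfamFun N u) /
        (BfamFun N (fun i => p * u i) / BfamFun N u) : ℚ) : ℚ_[p])‖
      ≤ (p : ℝ) ^ (-(s + 1 : ℤ)) := by
  have hp : p.Prime := Fact.out
  set m : Fin d → ℕ := fun i => u i + p ^ s * n i with hm
  have hfun : (fun i => p * u i + p ^ (s + 1) * n i) = (fun i => p * m i) := by
    funext i
    simp only [hm, pow_succ]
    ring
  set z : ℤ := (Xfun p N m : ℤ) * (Yfun p N u : ℤ) - (Xfun p N u : ℤ) * (Yfun p N m : ℤ)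
    with hz
  set D : ℕ := Yfun p N m * Xfun p N u with hD
  -- nonvanishing facts
  have hXmp : 0 < Xfun p N m := Finset.prod_pos fun j _ => Cfun_pos p _
  have hXup : 0 < Xfun p N u := Finset.prod_pos fun j _ => Cfun_pos p _
  have hYfp : ∀ v : Fin d → ℕ, 0 < Yfun p N v := fun v =>
    Finset.prod_pos fun j _ => Finset.prod_pos fun i _ => pow_pos (Cfun_pos p _) _
  have hBm : BfamFun N m ≠ 0 := (Bfam_pos N m).ne'
  have hBu : BfamFun N u ≠ 0 := (Bfam_pos N u).ne'
  have hXu : ((Xfun p N u : ℚ)) ≠ 0 := by exact_mod_cast hXup.ne'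
  have hYm : ((Yfun p N m : ℚ)) ≠ 0 := by exact_mod_cast (hYfp m).ne'
  have hYu : ((Yfun p N u : ℚ)) ≠ 0 := by exact_mod_cast (hYfp u).ne'
  -- the rational identity
  have key : (BfamFun N (fun i => p * m i) / BfamFun N m -
        BfamFun N (fun i => p * u i) / BfamFun N u) /
        (BfamFun N (fun i => p * u i) / BfamFun N u)
      = ((z : ℚ)) / ((D : ℕ) : ℚ) := by
    rw [Bfam_pmul p hp N m, Bfam_pmul p hp N u, hz, hD]
    push_cast
    field_simp
  -- the congruence mod p^(s+1)
  have hsum : ∀ j, ∑ i, N j i * m i = (∑ i, N j i * u i) + p ^ s * ∑ i, N j i * n i := by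
    intro j
    rw [Finset.mul_sum, ← Finset.sum_add_distrib]
    refine Finset.sum_congr rfl fun i _ => ?_
    simp only [hm]
    ring
  have hXm : (Xfun p N m : ZMod (p ^ (s + 1)))
      = (Xfun p N u : ZMod (p ^ (s + 1))) * (Ewil p s) ^ (∑ j, ∑ i, N j i * n i) := by
    unfold Xfun
    rw [Nat.cast_prod, Nat.cast_prod, ← prod_pow_eq_pow_sum, ← prod_mul_distrib]
    refine Finset.prod_congr rfl fun j _ => ?_
    rw [hsum j, Cfun_cast_zmod]
  have hYmz : (Yfun p N m : ZMod (p ^ (s + 1)))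
      = (Yfun p N u : ZMod (p ^ (s + 1))) * (Ewil p s) ^ (∑ j, ∑ i, N j i * n i) := by
    unfold Yfun
    rw [Nat.cast_prod, Nat.cast_prod, ← prod_pow_eq_pow_sum, ← prod_mul_distrib]
    refine Finset.prod_congr rfl fun j _ => ?_
    rw [Nat.cast_prod, Nat.cast_prod, ← prod_pow_eq_pow_sum, ← prod_mul_distrib]
    refine Finset.prod_congr rfl fun i _ => ?_
    rw [Nat.cast_pow, Nat.cast_pow,
      show m i = u i + p ^ s * n i from rfl,
      Cfun_cast_zmod p s (u i) (n i), mul_pow, ← pow_mul, Nat.mul_comm (n i) (N j i)]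
  have hzdvd : ((p : ℤ) ^ (s + 1)) ∣ z := by
    have h0 : ((z : ZMod (p ^ (s + 1))) = 0) := by
      rw [hz]
      push_cast
      rw [hXm, hYmz]
      ring
    have := (ZMod.intCast_zmod_eq_zero_iff_dvd z (p ^ (s + 1))).mp h0
    exact_mod_cast this
  -- the denominator is a unit
  have hcop : Nat.Coprime p D := by
    rw [hD]
    apply Nat.Coprime.mul_right
    · apply Nat.Coprime.prod_right
      intro j _
      apply Nat.Coprime.prod_right
      intro i _
      exact (Cfun_coprime p hp _).pow_right _
    · apply Nat.Coprime.prod_right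
      intro j _
      exact Cfun_coprime p hp _
  have hnd : ¬ ((p : ℤ) ∣ ((D : ℕ) : ℤ)) := by
    rw [Int.natCast_dvd_natCast]
    exact hp.coprime_iff_not_dvd.mp hcop
  have hden : ‖(((D : ℕ) : ℤ) : ℚ_[p])‖ = 1 := by
    rcases lt_or_eq_of_le (Padic.norm_int_le_one (p := p) ((D : ℕ) : ℤ)) with h | h
    · exact absurd (Padic.norm_intCast_lt_one_iff.mp h) hnd
    · exact h
  rw [hfun, key]
  rw [show ((((z : ℚ)) / ((D : ℕ) : ℚ) : ℚ) : ℚ_[p])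
      = ((z : ℚ_[p])) / ((((D : ℕ) : ℤ)) : ℚ_[p]) by push_cast; ring]
  rw [norm_div, hden, div_one]
  have hfin := (Padic.norm_int_le_pow_iff_dvd (p := p) z (s + 1)).mpr hzdvd
  calc ‖(z : ℚ_[p])‖ ≤ (p : ℝ) ^ (-((s + 1 : ℕ) : ℤ)) := hfin
    _ = (p : ℝ) ^ (-(s + 1 : ℤ)) := by norm_num
end
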